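/- arXiv:2206.15019 — 6 statements merged into one kernel-verified Lean document; each statement's English description precedes it below -/
import Mathlib

section
/- Let X be a real Hilbert space and f, g ∈ Γ₀(X). Assume (i) argmin_{x∈X}(f(x)+g(x)) ≠ ∅, (ii) argmin_{u∈X}(f*(u)+g*(−u)) ≠ ∅, and (iii) min_{x∈X}(f(x)+g(x)) = −min_{u∈X}(f*(u)+g*(−u)). Define the Douglas–Rachford splitting operator T_DRS := (2 prox_f − I) ∘ (2 prox_g − I). Then prox_g(Fix(T_DRS)) = argmin_{x∈X}(f(x)+g(x)), i.e., the image under prox_g of the fixed point set of T_DRS equals the set of minimizers of f + g. -/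
noncomputable section

open Filter Topology Bornology
open scoped InnerProductSpace Pointwise Classical

/-- A function with values in the extended reals is *proper* if it is somewhere finite
and nowhere `⊥`. -/
def EProper {H : Type*} (f : H → EReal) : Prop :=
  (∃ x, f x ≠ ⊤) ∧ ∀ x, f x ≠ ⊥

/-- Convexity for extended-real-valued functions. -/
def EConvex {H : Type*} [AddCommGroup H] [Module ℝ H] (f : H → EReal) : Prop :=
  ∀ x y : H, ∀ a b : ℝ, 0 ≤ a → 0 ≤ b → a + b = 1 →
    f (a • x + b • y) ≤ (a : EReal) * f x + (b : EReal) * f y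

/-- The class `Γ₀(H)` of proper lower semicontinuous convex functions `H → (-∞, +∞]`. -/
def Gamma0 {H : Type*} [NormedAddCommGroup H] [NormedSpace ℝ H] (f : H → EReal) : Prop :=
  EProper f ∧ LowerSemicontinuous f ∧ EConvex f

/-- Effective domain `dom f = {x | f x < ∞}`. -/
def edom {H : Type*} (f : H → EReal) : Set H := {x | f x ≠ ⊤}

/-- Set of global minimizers of `f`. -/
def argminSet {H : Type*} (f : H → EReal) : Set H := {x | ∀ y, f x ≤ f y}

/-- Fenchel conjugate `f*(u) = sup_x (⟪x,u⟫ - f x)`. -/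
def econj {H : Type*} [NormedAddCommGroup H] [InnerProductSpace ℝ H]
    (f : H → EReal) (u : H) : EReal :=
  ⨆ x : H, ((⟪x, u⟫_ℝ : EReal) - f x)

/-- Subdifferential `∂f(x) = {u | ∀ y, ⟪y - x, u⟫ + f x ≤ f y}`. -/
def esubdiff {H : Type*} [NormedAddCommGroup H] [InnerProductSpace ℝ H]
    (f : H → EReal) (x : H) : Set H :=
  {u | ∀ y : H, ((⟪y - x, u⟫_ℝ : ℝ) : EReal) + f x ≤ f y}

/-- `p` is the proximal point of `f` at `x`, i.e. a minimizer of
`y ↦ f y + (1/2)‖y - x‖²` (which is unique for `f ∈ Γ₀`). -/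
def IsProxPt {H : Type*} [NormedAddCommGroup H] (f : H → EReal) (x p : H) : Prop :=
  ∀ y : H, f p + ((((1:ℝ)/2) * ‖p - x‖ ^ 2 : ℝ) : EReal)
    ≤ f y + ((((1:ℝ)/2) * ‖y - x‖ ^ 2 : ℝ) : EReal)

/-- Indicator function of a set, with values in the extended reals. -/
def eind {H : Type*} (C : Set H) : H → EReal := fun x => if x ∈ C then 0 else ⊤

/-- Strong relative interior: the points `x ∈ C` such that the cone generated by `C - x`
coincides with the closed linear span of `C - x`. -/
def sriSet {H : Type*} [NormedAddCommGroup H] [NormedSpace ℝ H] (C : Set H) : Set H :=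
  {x | x ∈ C ∧
    {y | ∃ t : ℝ, 0 < t ∧ ∃ c ∈ C, y = t • (c - x)} =
      closure ((Submodule.span ℝ ((fun c => c - x) '' C) : Submodule ℝ H) : Set H)}


private lemma toFin {a : EReal} (h1 : a ≠ ⊤) (h2 : a ≠ ⊥) : ∃ r : ℝ, a = (r : EReal) :=
  ⟨a.toReal, (EReal.coe_toReal h1 h2).symm⟩

private lemma proxpt_ne_top {H : Type*} [NormedAddCommGroup H] {f : H → EReal}
    (hfp : EProper f) {w p : H} (h : IsProxPt f w p) : f p ≠ ⊤ := by
  obtain ⟨x0, hx0⟩ := hfp.1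
  intro htop
  have h2 := h x0
  rw [htop, EReal.top_add_coe] at h2
  exact absurd (top_le_iff.mp h2) (EReal.add_lt_top hx0 (EReal.coe_ne_top _)).ne

private lemma isProxPt_of_subgrad {H : Type*} [NormedAddCommGroup H] [InnerProductSpace ℝ H]
    {f : H → EReal} {w p : H}
    (h : ∀ y : H, ((⟪y - p, w - p⟫_ℝ : ℝ) : EReal) + f p ≤ f y) :
    IsProxPt f w p := by
  intro y
  have key : (1:ℝ)/2 * ‖p - w‖ ^ 2 ≤ ⟪y - p, w - p⟫_ℝ + (1:ℝ)/2 * ‖y - w‖ ^ 2 := by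
    have h1 : y - w = (y - p) + (p - w) := by abel
    have h2 : ⟪y - p, w - p⟫_ℝ = - ⟪y - p, p - w⟫_ℝ := by
      rw [← inner_neg_right]; congr 1; abel
    rw [h1, norm_add_sq_real, h2]
    nlinarith [sq_nonneg ‖y - p‖]
  calc f p + ((((1:ℝ)/2) * ‖p - w‖ ^ 2 : ℝ) : EReal)
      ≤ f p + ((⟪y - p, w - p⟫_ℝ + (1:ℝ)/2 * ‖y - w‖ ^ 2 : ℝ) : EReal) :=
        add_le_add_right (EReal.coe_le_coe_iff.mpr key) _
    _ = ((⟪y - p, w - p⟫_ℝ : ℝ) : EReal) + f p + ((((1:ℝ)/2) * ‖y - w‖ ^ 2 : ℝ) : EReal) := by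
        rw [EReal.coe_add, ← add_assoc, add_comm (f p)]
    _ ≤ f y + ((((1:ℝ)/2) * ‖y - w‖ ^ 2 : ℝ) : EReal) := add_le_add (h y) le_rfl

private lemma pg {H : Type*} [NormedAddCommGroup H] [InnerProductSpace ℝ H] (a b : H) :
    (1:ℝ)/2 * ‖a + b‖ ^ 2 + (1:ℝ)/2 * ‖a - b‖ ^ 2 = ‖a‖ ^ 2 + ‖b‖ ^ 2 := by
  rw [norm_add_sq_real, norm_sub_sq_real]; ring

private lemma proxpt_unique {H : Type*} [NormedAddCommGroup H] [InnerProductSpace ℝ H]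
    {f : H → EReal} (hfp : EProper f) (hfc : EConvex f) {w p q : H}
    (hp : IsProxPt f w p) (hq : IsProxPt f w q) : p = q := by
  obtain ⟨fp, hfpv⟩ := toFin (proxpt_ne_top hfp hp) (hfp.2 p)
  obtain ⟨fq, hfqv⟩ := toFin (proxpt_ne_top hfp hq) (hfp.2 q)
  set m := ((1:ℝ)/2) • p + ((1:ℝ)/2) • q with hm
  have hconv := hfc p q ((1:ℝ)/2) ((1:ℝ)/2) (by norm_num) (by norm_num) (by norm_num)
  rw [hfpv, hfqv, ← hm] at hconv
  have hconv' : f m ≤ (((1:ℝ)/2 * fp + (1:ℝ)/2 * fq : ℝ) : EReal) := by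
    push_cast; exact hconv
  obtain ⟨fm, hfmv⟩ := toFin (lt_of_le_of_lt hconv' (EReal.coe_lt_top _)).ne (hfp.2 m)
  rw [hfmv] at hconv'
  have hconvr : fm ≤ (1:ℝ)/2 * fp + (1:ℝ)/2 * fq := by exact_mod_cast hconv'
  have hpm := hp m; have hqm := hq m
  rw [hfpv, hfmv] at hpm; rw [hfqv, hfmv] at hqm
  have hpmr : fp + (1:ℝ)/2 * ‖p - w‖ ^ 2 ≤ fm + (1:ℝ)/2 * ‖m - w‖ ^ 2 := by
    exact_mod_cast hpm
  have hqmr : fq + (1:ℝ)/2 * ‖q - w‖ ^ 2 ≤ fm + (1:ℝ)/2 * ‖m - w‖ ^ 2 := by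
    exact_mod_cast hqm
  have hpar : ‖m - w‖ ^ 2
      = (1:ℝ)/2 * ‖p - w‖ ^ 2 + (1:ℝ)/2 * ‖q - w‖ ^ 2 - (1:ℝ)/4 * ‖p - q‖ ^ 2 := by
    have h1 : m - w = ((1:ℝ)/2) • ((p - w) + (q - w)) := by rw [hm]; module
    have h2 : p - q = (p - w) - (q - w) := by abel
    have h3 : ‖m - w‖ ^ 2 = (1:ℝ)/4 * ‖(p - w) + (q - w)‖ ^ 2 := by
      rw [h1, norm_smul, Real.norm_eq_abs, abs_of_nonneg (by norm_num : (0:ℝ) ≤ 1/2), mul_pow]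
      ring
    have h4 := pg (p - w) (q - w)
    rw [h3, h2]; linarith
  have hzero : ‖p - q‖ ^ 2 ≤ 0 := by nlinarith
  have h5 : ‖p - q‖ ^ 2 = 0 := le_antisymm hzero (by positivity)
  have h6 := pow_eq_zero_iff (two_ne_zero) |>.mp h5
  exact sub_eq_zero.mp (norm_eq_zero.mp h6)

private lemma le_econj {H : Type*} [NormedAddCommGroup H] [InnerProductSpace ℝ H]
    (f : H → EReal) (u x : H) : ((⟪x, u⟫_ℝ : EReal) - f x) ≤ econj f u :=
  le_iSup (fun y => ((⟪y, u⟫_ℝ : EReal) - f y)) x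

private lemma par_id {H : Type*} [NormedAddCommGroup H] [InnerProductSpace ℝ H]
    (x z Y : H) :
    (1:ℝ)/2 * ‖Y - z‖ ^ 2 + (1:ℝ)/2 * ‖Y - ((2:ℝ) • x - z)‖ ^ 2
      = ‖Y - x‖ ^ 2 + ‖x - z‖ ^ 2 := by
  have h1 : Y - z = (Y - x) + (x - z) := by abel
  have h2 : Y - ((2:ℝ) • x - z) = (Y - x) - (x - z) := by module
  rw [h1, h2]; exact pg _ _

/-- Proposition 1(a): Douglas–Rachford fixed point characterization.
If `f, g ∈ Γ₀(X)` satisfy the primal/dual attainment and zero-duality-gap conditions, then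
`prox_g (Fix T_DRS) = argmin (f + g)`, where `T_DRS = (2 prox_f - I) ∘ (2 prox_g - I)`. -/
theorem statement0
    {X : Type*} [NormedAddCommGroup X] [InnerProductSpace ℝ X] [CompleteSpace X]
    (f g : X → EReal) (hf : Gamma0 f) (hg : Gamma0 g)
    (hprimal : (argminSet (fun x => f x + g x)).Nonempty)
    (hdual : (argminSet (fun u => econj f u + econj g (-u))).Nonempty)
    (hminmin : (⨅ x : X, (f x + g x)) = - ⨅ u : X, (econj f u + econj g (-u)))
    (proxf proxg : X → X)
    (hproxf : ∀ x, IsProxPt f x (proxf x)) (hproxg : ∀ x, IsProxPt g x (proxg x))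
    (T : X → X)
    (hT : ∀ z, T z = (2:ℝ) • proxf ((2:ℝ) • proxg z - z) - ((2:ℝ) • proxg z - z)) :
    proxg '' {z | T z = z} = argminSet (fun x => f x + g x) := by
  obtain ⟨hfP, hfLSC, hfC⟩ := hf
  obtain ⟨hgP, hgLSC, hgC⟩ := hg
  ext xx
  constructor
  · rintro ⟨z, hz, rfl⟩
    have h2 := hT z
    rw [hz] at h2
    set x := proxg z with hx
    set w := (2:ℝ) • x - z with hw
    have hfix : proxf w = x := by
      rw [eq_comm, sub_eq_iff_eq_add] at h2
      have h3 : (2:ℝ) • proxf w = (2:ℝ) • x := by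
        rw [h2, hw]; module
      exact smul_right_injective X two_ne_zero h3
    have hpf : IsProxPt f w x := by rw [← hfix]; exact hproxf w
    have hpg : IsProxPt g z x := hproxg z
    obtain ⟨fx, hfx⟩ := toFin (proxpt_ne_top hfP hpf) (hfP.2 x)
    obtain ⟨gx, hgx⟩ := toFin (proxpt_ne_top hgP hpg) (hgP.2 x)
    intro y
    show f x + g x ≤ f y + g y
    by_contra hlt
    push_neg at hlt
    have hfy_ne : f y ≠ ⊤ := by
      intro h; rw [h, EReal.top_add_of_ne_bot (hgP.2 y)] at hlt; exact absurd hlt not_top_lt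
    have hgy_ne : g y ≠ ⊤ := by
      intro h; rw [h, EReal.add_top_of_ne_bot (hfP.2 y)] at hlt; exact absurd hlt not_top_lt
    obtain ⟨fy, hfy⟩ := toFin hfy_ne (hfP.2 y)
    obtain ⟨gy, hgy⟩ := toFin hgy_ne (hgP.2 y)
    rw [hfx, hgx, hfy, hgy] at hlt
    have hlt' : fy + gy < fx + gx := by exact_mod_cast hlt
    set c : ℝ := ‖y - x‖ ^ 2 with hc
    have hc0 : (0:ℝ) ≤ c := by positivity
    set s : ℝ := fx + gx with hs
    set r : ℝ := fy + gy with hr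
    set t : ℝ := if c = 0 then 1 else min 1 ((s - r)/(2*c)) with ht
    have ht0 : 0 < t := by
      rw [ht]; split_ifs with hcase
      · norm_num
      · have hcpos : 0 < c := lt_of_le_of_ne hc0 (Ne.symm hcase)
        exact lt_min one_pos (div_pos (by linarith) (by linarith))
    have ht1 : t ≤ 1 := by
      rw [ht]; split_ifs with hcase
      · exact le_refl 1
      · exact min_le_left _ _
    set Yt := (1 - t) • x + t • y with hYt
    have hcf := hfC x y (1 - t) t (by linarith) ht0.le (by ring)
    have hcg := hgC x y (1 - t) t (by linarith) ht0.le (by ring)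
    rw [hfx, hfy, ← hYt] at hcf
    rw [hgx, hgy, ← hYt] at hcg
    have hcf' : f Yt ≤ (((1 - t) * fx + t * fy : ℝ) : EReal) := by push_cast; exact hcf
    have hcg' : g Yt ≤ (((1 - t) * gx + t * gy : ℝ) : EReal) := by push_cast; exact hcg
    obtain ⟨fYt, hfYt⟩ := toFin (lt_of_le_of_lt hcf' (EReal.coe_lt_top _)).ne (hfP.2 Yt)
    obtain ⟨gYt, hgYt⟩ := toFin (lt_of_le_of_lt hcg' (EReal.coe_lt_top _)).ne (hgP.2 Yt)
    rw [hfYt] at hcf'; rw [hgYt] at hcg'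
    have hcfr : fYt ≤ (1 - t) * fx + t * fy := by exact_mod_cast hcf'
    have hcgr : gYt ≤ (1 - t) * gx + t * gy := by exact_mod_cast hcg'
    have hp1 := hpg Yt; have hp2 := hpf Yt
    rw [hgx, hgYt] at hp1; rw [hfx, hfYt] at hp2
    have hp1r : gx + (1:ℝ)/2 * ‖x - z‖ ^ 2 ≤ gYt + (1:ℝ)/2 * ‖Yt - z‖ ^ 2 := by
      exact_mod_cast hp1
    have hp2r : fx + (1:ℝ)/2 * ‖x - w‖ ^ 2 ≤ fYt + (1:ℝ)/2 * ‖Yt - w‖ ^ 2 := by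
      exact_mod_cast hp2
    have hxw2 : ‖x - w‖ ^ 2 = ‖x - z‖ ^ 2 := by
      rw [hw, show x - ((2:ℝ) • x - z) = -(x - z) by module, norm_neg]
    have hpar := par_id x z Yt
    rw [← hw] at hpar
    have hYtx : ‖Yt - x‖ ^ 2 = t ^ 2 * c := by
      rw [show Yt - x = t • (y - x) by rw [hYt]; module, norm_smul, mul_pow,
        Real.norm_eq_abs, sq_abs, hc]
    have hts : t * (s - r) ≤ t ^ 2 * c := by nlinarith
    have hkey : s - r ≤ t * c := by
      have := (mul_le_mul_iff_right₀ ht0).mp (by nlinarith : t * (s - r) ≤ t * (t * c))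
      exact this
    rcases eq_or_ne c 0 with hcase | hcase
    · have htone : t = 1 := by rw [ht, if_pos hcase]
      rw [htone, hcase] at hkey
      linarith
    · have hcpos : 0 < c := lt_of_le_of_ne hc0 (Ne.symm hcase)
      have hmin : t ≤ (s - r)/(2*c) := by
        rw [ht, if_neg hcase]; exact min_le_right _ _
      have h7 : t * c ≤ (s - r)/2 := by
        have h8 := mul_le_mul_of_nonneg_right hmin hc0
        have h9 : (s - r)/(2*c) * c = (s - r)/2 := by field_simp
        linarith
      linarith
  · intro hxx
    obtain ⟨v, hv⟩ := hdual
    have hPval : (⨅ y : X, (f y + g y)) = f xx + g xx :=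
      le_antisymm (iInf_le _ xx) (le_iInf hxx)
    have hDval : (⨅ u : X, (econj f u + econj g (-u))) = econj f v + econj g (-v) :=
      le_antisymm (iInf_le _ v) (le_iInf hv)
    rw [hPval, hDval] at hminmin
    obtain ⟨x1, hx1⟩ := hfP.1
    obtain ⟨x2, hx2⟩ := hgP.1
    obtain ⟨a1, ha1⟩ := toFin hx1 (hfP.2 x1)
    obtain ⟨a2, ha2⟩ := toFin hx2 (hgP.2 x2)
    have hfv_bot : econj f v ≠ ⊥ := by
      have h := le_econj f v x1
      rw [ha1, show ((⟪x1, v⟫_ℝ : EReal) - (a1 : EReal)) = ((⟪x1, v⟫_ℝ - a1 : ℝ) : EReal) by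
        norm_cast] at h
      intro hb
      rw [hb, le_bot_iff] at h
      exact EReal.coe_ne_bot _ h
    have hgv_bot : econj g (-v) ≠ ⊥ := by
      have h := le_econj g (-v) x2
      rw [ha2, show ((⟪x2, -v⟫_ℝ : EReal) - (a2 : EReal)) = ((⟪x2, -v⟫_ℝ - a2 : ℝ) : EReal) by
        norm_cast] at h
      intro hb
      rw [hb, le_bot_iff] at h
      exact EReal.coe_ne_bot _ h
    have hsum_bot : econj f v + econj g (-v) ≠ ⊥ := by
      rw [Ne, EReal.add_eq_bot_iff]
      push_neg
      exact ⟨hfv_bot, hgv_bot⟩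
    have hP_ne_top : f xx + g xx ≠ ⊤ := by
      rw [hminmin, Ne, EReal.neg_eq_top_iff]
      exact hsum_bot
    have hfx_ne : f xx ≠ ⊤ := by
      intro h; exact hP_ne_top (by rw [h, EReal.top_add_of_ne_bot (hgP.2 xx)])
    have hgx_ne : g xx ≠ ⊤ := by
      intro h; exact hP_ne_top (by rw [h, EReal.add_top_of_ne_bot (hfP.2 xx)])
    obtain ⟨fx, hfx⟩ := toFin hfx_ne (hfP.2 xx)
    obtain ⟨gx, hgx⟩ := toFin hgx_ne (hgP.2 xx)
    have hsum_eq : econj f v + econj g (-v) = ((-(fx + gx) : ℝ) : EReal) := by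
      rw [← neg_neg (econj f v + econj g (-v)), ← hminmin, hfx, hgx]
      norm_cast
    have hfv_top : econj f v ≠ ⊤ := by
      intro h
      rw [h, EReal.top_add_of_ne_bot hgv_bot] at hsum_eq
      exact EReal.coe_ne_top _ hsum_eq.symm
    have hgv_top : econj g (-v) ≠ ⊤ := by
      intro h
      rw [h, EReal.add_top_of_ne_bot hfv_bot] at hsum_eq
      exact EReal.coe_ne_top _ hsum_eq.symm
    obtain ⟨F, hF⟩ := toFin hfv_top hfv_bot
    obtain ⟨G, hG⟩ := toFin hgv_top hgv_bot
    rw [hF, hG] at hsum_eq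
    have hsum_r : F + G = -(fx + gx) := by exact_mod_cast hsum_eq
    have hFy1 : ⟪xx, v⟫_ℝ - fx ≤ F := by
      have h := le_econj f v xx
      rw [hfx, hF] at h
      exact_mod_cast h
    have hFy2 : ⟪xx, -v⟫_ℝ - gx ≤ G := by
      have h := le_econj g (-v) xx
      rw [hgx, hG] at h
      exact_mod_cast h
    have hinn : ⟪xx, -v⟫_ℝ = -⟪xx, v⟫_ℝ := inner_neg_right _ _
    have hFeq : F = ⟪xx, v⟫_ℝ - fx := by rw [hinn] at hFy2; linarith
    have hGeq : G = -⟪xx, v⟫_ℝ - gx := by rw [hinn] at hFy2; linarith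
    have hsubf : ∀ y : X, ((⟪y - xx, v⟫_ℝ : ℝ) : EReal) + f xx ≤ f y := by
      intro y
      by_cases hy : f y = ⊤
      · rw [hy]; exact le_top
      · obtain ⟨fy, hfy⟩ := toFin hy (hfP.2 y)
        have h := le_econj f v y
        rw [hfy, hF] at h
        have hr : ⟪y, v⟫_ℝ - fy ≤ F := by exact_mod_cast h
        rw [hfx, hfy]
        have hinn2 : ⟪y - xx, v⟫_ℝ = ⟪y, v⟫_ℝ - ⟪xx, v⟫_ℝ := inner_sub_left _ _ _
        exact_mod_cast (by rw [hinn2]; linarith : ⟪y - xx, v⟫_ℝ + fx ≤ fy)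
    have hsubg : ∀ y : X, ((⟪y - xx, -v⟫_ℝ : ℝ) : EReal) + g xx ≤ g y := by
      intro y
      by_cases hy : g y = ⊤
      · rw [hy]; exact le_top
      · obtain ⟨gy, hgy⟩ := toFin hy (hgP.2 y)
        have h := le_econj g (-v) y
        rw [hgy, hG] at h
        have hr : ⟪y, -v⟫_ℝ - gy ≤ G := by exact_mod_cast h
        rw [hgx, hgy]
        have hinn2 : ⟪y - xx, -v⟫_ℝ = ⟪y, -v⟫_ℝ - ⟪xx, -v⟫_ℝ := inner_sub_left _ _ _
        have hinn3 : ⟪y, -v⟫_ℝ = -⟪y, v⟫_ℝ := inner_neg_right _ _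
        exact_mod_cast (by rw [hinn2, hinn3, hinn]; linarith : ⟪y - xx, -v⟫_ℝ + gx ≤ gy)
    set z := xx - v with hzdef
    have hz1 : z - xx = -v := by rw [hzdef]; abel
    have hpgx : IsProxPt g z xx := isProxPt_of_subgrad (by intro y; rw [hz1]; exact hsubg y)
    have hpzx : proxg z = xx := proxpt_unique hgP hgC (hproxg z) hpgx
    set w := xx + v with hwdef
    have hw1 : w - xx = v := by rw [hwdef]; abel
    have hpfx : IsProxPt f w xx := isProxPt_of_subgrad (by intro y; rw [hw1]; exact hsubf y)
    have hpwx : proxf w = xx := proxpt_unique hfP hfC (hproxf w) hpfx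
    refine ⟨z, ?_, hpzx⟩
    show T z = z
    rw [hT z, hpzx, show (2:ℝ) • xx - z = w by rw [hzdef, hwdef]; module, hpwx,
      show (2:ℝ) • xx - w = z by rw [hzdef, hwdef]; module]
end
end

section
/- Let X and K be real Hilbert spaces, f ∈ Γ₀(X), and A : X → K a bounded linear operator. Set S_pLAL := argmin_{x∈X}(f(x) + ι_{{0}}(Ax)) (the minimizers of f over the null space of A) and S_dLAL := argmin_{ν∈K} f*(A*ν). Assume S_pLAL ≠ ∅, S_dLAL ≠ ∅, and min_{x∈X}(f(x) + ι_{{0}}(Ax)) = −min_{ν∈K} f*(A*ν). Define the LAL operator T_LAL : X × K → X × K : (x, ν) ↦ (x_T, ν_T) by x_T := prox_f(x − A*Ax + A*ν) and ν_T := ν − A x_T. Then Fix(T_LAL) = S_pLAL × S_dLAL. -/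
noncomputable section

open Filter Topology Bornology
open scoped InnerProductSpace Pointwise Classical

lemma myExistsReal {a : EReal} (h1 : a ≠ ⊤) (h2 : a ≠ ⊥) : ∃ r : ℝ, a = r := by
  lift a to ℝ using ⟨h1, h2⟩; exact ⟨a, rfl⟩

lemma myAuxReal {a b e : ℝ} (he : 0 ≤ e) (h : ∀ t : ℝ, 0 < t → t ≤ 1 → a ≤ b + t * e) : a ≤ b := by
  rcases eq_or_lt_of_le he with he0 | he0
  · have := h 1 one_pos le_rfl; nlinarith
  · by_contra hab
    push_neg at hab
    have ht : 0 < min 1 ((a - b) / (2 * e)) :=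
      lt_min one_pos (div_pos (by linarith) (by linarith))
    have h1 := h _ ht (min_le_left _ _)
    have h2 : min 1 ((a - b) / (2 * e)) * e ≤ (a - b) / 2 := by
      calc min 1 ((a - b) / (2 * e)) * e ≤ (a - b) / (2 * e) * e := by
            gcongr; exact min_le_right _ _
        _ = (a - b) / 2 := by field_simp
    linarith

section ProxLemmas

variable {H : Type*} [NormedAddCommGroup H] [InnerProductSpace ℝ H] (f : H → EReal)

lemma mySubdiffToProx (hb : ∀ x, f x ≠ ⊥) {z x : H} (h : z - x ∈ esubdiff f x) :
    IsProxPt f z x := by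
  intro y
  rcases eq_or_ne (f y) ⊤ with hy | hy
  · rw [hy, EReal.top_add_of_ne_bot (EReal.coe_ne_bot _)]; exact le_top
  obtain ⟨s, hs⟩ := myExistsReal hy (hb y)
  have hx_netop : f x ≠ ⊤ := by
    intro htop
    have h1 := h y
    rw [htop, hs] at h1
    simp at h1
  obtain ⟨r, hr⟩ := myExistsReal hx_netop (hb x)
  have hsub := h y
  rw [hr, hs] at hsub
  rw [hr, hs]
  norm_cast at hsub ⊢
  have key : ‖y - z‖ ^ 2 = ‖x - z‖ ^ 2 + 2 * ⟪x - z, y - x⟫_ℝ + ‖y - x‖ ^ 2 := by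
    have hyz : y - z = (x - z) + (y - x) := by abel
    rw [hyz, norm_add_sq_real]
  have hinner : ⟪y - x, z - x⟫_ℝ = -⟪x - z, y - x⟫_ℝ := by
    have hzx : z - x = -(x - z) := by abel
    rw [hzx, inner_neg_right, real_inner_comm]
  nlinarith [sq_nonneg ‖y - x‖, hsub, key, hinner]

lemma myProxNeTop (hfx : ∃ x₀, f x₀ ≠ ⊤) (hb : ∀ x, f x ≠ ⊥) {z x : H}
    (h : IsProxPt f z x) : f x ≠ ⊤ := by
  obtain ⟨x₀, h0⟩ := hfx
  obtain ⟨r0, hr0⟩ := myExistsReal h0 (hb x₀)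
  intro htop
  have h1 := h x₀
  rw [htop, hr0, EReal.top_add_of_ne_bot (EReal.coe_ne_bot _), top_le_iff,
    ← EReal.coe_add] at h1
  exact EReal.coe_ne_top _ h1

lemma myProxToSubdiff (hconv : EConvex f) (hfx : ∃ x₀, f x₀ ≠ ⊤) (hb : ∀ x, f x ≠ ⊥)
    {z x : H} (h : IsProxPt f z x) : z - x ∈ esubdiff f x := by
  obtain ⟨r, hr⟩ := myExistsReal (myProxNeTop f hfx hb h) (hb x)
  intro y
  rcases eq_or_ne (f y) ⊤ with hy | hy
  · rw [hy]; exact le_top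
  obtain ⟨s, hs⟩ := myExistsReal hy (hb y)
  rw [hr, hs]
  norm_cast
  have hinner : ⟪y - x, z - x⟫_ℝ = -⟪x - z, y - x⟫_ℝ := by
    have hzx : z - x = -(x - z) := by abel
    rw [hzx, inner_neg_right, real_inner_comm]
  rw [hinner]
  apply myAuxReal (e := (1:ℝ)/2 * ‖y - x‖ ^ 2) (by positivity)
  intro t ht0 ht1
  have hcv := hconv x y (1 - t) t (by linarith) (le_of_lt ht0) (by ring)
  rw [hr, hs] at hcv
  norm_cast at hcv
  have hp := h ((1 - t) • x + t • y)
  rw [hr] at hp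
  have hp2 : (r : EReal) + (((1:ℝ)/2 * ‖x - z‖ ^ 2 : ℝ) : EReal)
      ≤ (((1 - t) * r + t * s : ℝ) : EReal)
        + (((1:ℝ)/2 * ‖(1 - t) • x + t • y - z‖ ^ 2 : ℝ) : EReal) :=
    le_trans hp (add_le_add_left hcv _)
  norm_cast at hp2
  have hyt : (1 - t) • x + t • y - z = (x - z) + t • (y - x) := by
    rw [sub_smul, one_smul, smul_sub]; abel
  have hnorm : ‖(1 - t) • x + t • y - z‖ ^ 2
      = ‖x - z‖ ^ 2 + 2 * (t * ⟪x - z, y - x⟫_ℝ) + t ^ 2 * ‖y - x‖ ^ 2 := by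
    rw [hyt, norm_add_sq_real, real_inner_smul_right, norm_smul, Real.norm_eq_abs,
      mul_pow, sq_abs]
  rw [hnorm] at hp2
  by_contra hc
  push_neg at hc
  have hpos : 0 < r - s - ⟪x - z, y - x⟫_ℝ - t * ((1:ℝ)/2 * ‖y - x‖ ^ 2) := by linarith
  nlinarith [mul_pos ht0 hpos]

lemma myProxUnique (hconv : EConvex f) (hfx : ∃ x₀, f x₀ ≠ ⊤) (hb : ∀ x, f x ≠ ⊥)
    {z p q : H} (hp : IsProxPt f z p) (hq : IsProxPt f z q) : p = q := by
  obtain ⟨r, hr⟩ := myExistsReal (myProxNeTop f hfx hb hp) (hb p)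
  obtain ⟨s, hs⟩ := myExistsReal (myProxNeTop f hfx hb hq) (hb q)
  have h1 := hp q
  have h2 := hq p
  rw [hr, hs] at h1 h2
  norm_cast at h1 h2
  have hcv := hconv p q (1/2) (1/2) (by norm_num) (by norm_num) (by norm_num)
  rw [hr, hs] at hcv
  norm_cast at hcv
  have h3 := hp (((1:ℝ)/2) • p + ((1:ℝ)/2) • q)
  rw [hr] at h3
  have h4 : (r : EReal) + (((1:ℝ)/2 * ‖p - z‖ ^ 2 : ℝ) : EReal)
      ≤ (((1:ℝ)/2 * r + 1/2 * s : ℝ) : EReal)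
        + (((1:ℝ)/2 * ‖((1:ℝ)/2) • p + ((1:ℝ)/2) • q - z‖ ^ 2 : ℝ) : EReal) :=
    le_trans h3 (add_le_add_left hcv _)
  norm_cast at h4
  have hm : ((1:ℝ)/2) • p + ((1:ℝ)/2) • q - z = ((1:ℝ)/2) • (p - z) + ((1:ℝ)/2) • (q - z) := by
    module
  have hnorm : ‖((1:ℝ)/2) • p + ((1:ℝ)/2) • q - z‖ ^ 2
      = 1/4 * ‖p - z‖ ^ 2 + 1/2 * ⟪p - z, q - z⟫_ℝ + 1/4 * ‖q - z‖ ^ 2 := by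
    rw [hm, norm_add_sq_real, real_inner_smul_left, real_inner_smul_right,
      norm_smul, norm_smul, Real.norm_eq_abs]
    rw [show |(1:ℝ)/2| = 1/2 by norm_num]
    ring
  rw [hnorm] at h4
  have hpq : ‖p - q‖ ^ 2 = ‖p - z‖ ^ 2 - 2 * ⟪p - z, q - z⟫_ℝ + ‖q - z‖ ^ 2 := by
    have hd : p - q = (p - z) - (q - z) := by abel
    rw [hd, norm_sub_sq_real]
  have hle : ‖p - q‖ ^ 2 ≤ 0 := by nlinarith
  have h0 : ‖p - q‖ = 0 := by nlinarith [norm_nonneg (p - q)]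
  have := norm_eq_zero.mp h0
  exact sub_eq_zero.mp this

lemma myLeConj {H : Type*} [NormedAddCommGroup H] [InnerProductSpace ℝ H]
    (f : H → EReal) (u y : H) : ((⟪y, u⟫_ℝ : EReal) - f y) ≤ econj f u :=
  le_iSup (fun y' : H => ((⟪y', u⟫_ℝ : EReal) - f y')) y

lemma myConjLe {H : Type*} [NormedAddCommGroup H] [InnerProductSpace ℝ H]
    {f : H → EReal} {u : H} {b : EReal}
    (h : ∀ y : H, ((⟪y, u⟫_ℝ : EReal) - f y) ≤ b) : econj f u ≤ b :=
  iSup_le h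

end ProxLemmas

set_option maxHeartbeats 1600000 in
/-- Proposition 2(a): fixed point set of the LAL operator.
Under primal/dual attainment and zero duality gap for the problem
`minimize f(x) subject to Ax = 0`, the fixed point set of the LAL operator
`T_LAL(x,ν) = (prox_f(x - A*Ax + A*ν), ν - A x_T)` is `S_pLAL × S_dLAL`. -/
theorem statement1
    {X K : Type*} [NormedAddCommGroup X] [InnerProductSpace ℝ X] [CompleteSpace X]
    [NormedAddCommGroup K] [InnerProductSpace ℝ K] [CompleteSpace K]
    (f : X → EReal) (hf : Gamma0 f) (A : X →L[ℝ] K)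
    (SpLAL : Set X) (hSpdef : SpLAL = argminSet (fun x => f x + eind ({0} : Set K) (A x)))
    (SdLAL : Set K) (hSddef : SdLAL = argminSet (fun ν => econj f (A.adjoint ν)))
    (hSp : SpLAL.Nonempty) (hSd : SdLAL.Nonempty)
    (hminmin : (⨅ x : X, (f x + eind ({0} : Set K) (A x)))
      = - ⨅ ν : K, econj f (A.adjoint ν))
    (proxf : X → X) (hproxf : ∀ x, IsProxPt f x (proxf x))
    (T : X × K → X × K)
    (hT : ∀ w : X × K, T w =
      (proxf (w.1 - A.adjoint (A w.1) + A.adjoint w.2),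
       w.2 - A (proxf (w.1 - A.adjoint (A w.1) + A.adjoint w.2)))) :
    {w : X × K | T w = w} = SpLAL ×ˢ SdLAL := by
  obtain ⟨⟨x₀, hx₀⟩, hb⟩ := hf.1
  have hconv := hf.2.2
  obtain ⟨r0, hr0⟩ := myExistsReal hx₀ (hb x₀)
  have hdual_ne_bot : ∀ ν : K, econj f (A.adjoint ν) ≠ ⊥ := by
    intro ν hbot
    have h := myLeConj f (A.adjoint ν) x₀
    rw [hr0, hbot] at h
    have h2 : ((⟪x₀, A.adjoint ν⟫_ℝ - r0 : ℝ) : EReal) ≤ ⊥ := by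
      rw [EReal.coe_sub]; exact h
    exact (EReal.bot_lt_coe _).not_ge h2
  obtain ⟨xb, hxb0⟩ := hSp
  obtain ⟨νb, hνb0⟩ := hSd
  rw [hSpdef] at hxb0
  rw [hSddef] at hνb0
  simp only [argminSet, Set.mem_setOf_eq] at hxb0 hνb0
  have hμp_eq : f xb + eind ({0} : Set K) (A xb)
      = ⨅ x : X, (f x + eind ({0} : Set K) (A x)) :=
    le_antisymm (le_iInf hxb0) (iInf_le _ xb)
  have hμd_eq : econj f (A.adjoint νb) = ⨅ ν : K, econj f (A.adjoint ν) :=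
    le_antisymm (le_iInf hνb0) (iInf_le _ νb)
  have hμd_ne_bot : (⨅ ν : K, econj f (A.adjoint ν)) ≠ ⊥ := by
    rw [← hμd_eq]; exact hdual_ne_bot νb
  have hμp_ne_top : (⨅ x : X, (f x + eind ({0} : Set K) (A x))) ≠ ⊤ := by
    rw [hminmin]; simp [hμd_ne_bot]
  have hμp_ne_bot : (⨅ x : X, (f x + eind ({0} : Set K) (A x))) ≠ ⊥ := by
    rw [← hμp_eq]
    intro hc
    rcases EReal.add_eq_bot_iff.mp hc with h | h
    · exact hb xb h
    · revert h; unfold eind; split_ifs <;> simp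
  obtain ⟨m, hm⟩ := myExistsReal hμp_ne_top hμp_ne_bot
  have hμd_val : (⨅ ν : K, econj f (A.adjoint ν)) = ((-m : ℝ) : EReal) := by
    have h := hminmin
    rw [hm] at h
    rw [EReal.coe_neg, h]
    exact (neg_neg _).symm
  ext ⟨x, ν⟩
  simp only [Set.mem_setOf_eq, hT (x, ν), Set.mem_prod, Prod.mk.injEq]
  rw [hSpdef, hSddef]
  simp only [argminSet, Set.mem_setOf_eq]
  constructor
  · rintro ⟨h1, h2⟩
    rw [h1] at h2
    have hAx : A x = 0 := sub_eq_self.mp h2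
    have hz : x - A.adjoint (A x) + A.adjoint ν = x + A.adjoint ν := by
      rw [hAx, map_zero, sub_zero]
    have hprox : IsProxPt f (x + A.adjoint ν) x := by
      have h3 := hproxf (x - A.adjoint (A x) + A.adjoint ν)
      rw [h1, hz] at h3
      exact h3
    have hsub : A.adjoint ν ∈ esubdiff f x := by
      have h3 := myProxToSubdiff f hconv ⟨x₀, hx₀⟩ hb hprox
      rwa [add_sub_cancel_left] at h3
    have hfx_ne_top : f x ≠ ⊤ := by
      intro htop
      have h3 := hsub x₀
      rw [htop, hr0, EReal.add_top_of_ne_bot (EReal.coe_ne_bot _), top_le_iff] at h3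
      exact EReal.coe_ne_top _ h3
    obtain ⟨r, hrx⟩ := myExistsReal hfx_ne_top (hb x)
    have hxAν : ⟪x, A.adjoint ν⟫_ℝ = 0 := by
      rw [ContinuousLinearMap.adjoint_inner_right, hAx, inner_zero_left]
    have hconj_le : econj f (A.adjoint ν) ≤ ((-r : ℝ) : EReal) := by
      apply myConjLe
      intro y
      rcases eq_or_ne (f y) ⊤ with hy | hy
      · rw [hy]; simp
      obtain ⟨s, hsy⟩ := myExistsReal hy (hb y)
      have h4 := hsub y
      rw [hrx, hsy] at h4
      rw [hsy]
      norm_cast at h4 ⊢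
      have h5 : ⟪y, A.adjoint ν⟫_ℝ - ⟪x, A.adjoint ν⟫_ℝ + r ≤ s := by
        rw [← inner_sub_left]; exact h4
      rw [hxAν] at h5
      linarith
    have hconj_ge : ((-r : ℝ) : EReal) ≤ econj f (A.adjoint ν) := by
      have h4 := myLeConj f (A.adjoint ν) x
      rw [hrx, hxAν] at h4
      calc ((-r : ℝ) : EReal) = ((0 : ℝ) : EReal) - (r : ℝ) := by norm_cast; ring
        _ ≤ _ := h4
    have hconj_eq : econj f (A.adjoint ν) = ((-r : ℝ) : EReal) :=
      le_antisymm hconj_le hconj_ge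
    have hμd_le : (⨅ ν' : K, econj f (A.adjoint ν')) ≤ ((-r : ℝ) : EReal) := by
      rw [← hconj_eq]
      exact iInf_le (fun ν' : K => econj f (A.adjoint ν')) ν
    have hrm : r ≤ m := by
      rw [hμd_val] at hμd_le
      norm_cast at hμd_le
      linarith
    have hPx : f x + eind ({0} : Set K) (A x) = ((r : ℝ) : EReal) := by
      rw [hrx, hAx]
      simp [eind]
    have hxmem : ∀ y, f x + eind ({0} : Set K) (A x) ≤ f y + eind ({0} : Set K) (A y) := by
      intro y
      calc f x + eind ({0} : Set K) (A x) = ((r : ℝ) : EReal) := hPx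
        _ ≤ ((m : ℝ) : EReal) := by norm_cast
        _ = ⨅ x' : X, (f x' + eind ({0} : Set K) (A x')) := hm.symm
        _ ≤ _ := iInf_le _ y
    have hmr : m ≤ r := by
      have h4 := iInf_le (fun x' : X => f x' + eind ({0} : Set K) (A x')) x
      rw [hm] at h4
      have h5 : ((m : ℝ) : EReal) ≤ ((r : ℝ) : EReal) := by
        refine le_trans h4 ?_
        rw [← hPx]
      norm_cast at h5
    have hνmem : ∀ ν', econj f (A.adjoint ν) ≤ econj f (A.adjoint ν') := by
      intro ν'
      calc econj f (A.adjoint ν) = ((-r : ℝ) : EReal) := hconj_eq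
        _ = ((-m : ℝ) : EReal) := by norm_cast; linarith
        _ = ⨅ ν'' : K, econj f (A.adjoint ν'') := hμd_val.symm
        _ ≤ _ := iInf_le _ ν'
    exact ⟨hxmem, hνmem⟩
  · rintro ⟨hx, hν⟩
    have hPx_le : f x + eind ({0} : Set K) (A x) ≤ ((m : ℝ) : EReal) := by
      rw [← hm]; exact le_iInf hx
    have hAx : A x = 0 := by
      by_contra hAx
      have he : eind ({0} : Set K) (A x) = ⊤ := by simp [eind, hAx]
      rw [he, EReal.add_top_of_ne_bot (hb x), top_le_iff] at hPx_le
      exact EReal.coe_ne_top _ hPx_le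
    have heind0 : eind ({0} : Set K) (A x) = 0 := by simp [eind, hAx]
    have hfx_le : f x ≤ ((m : ℝ) : EReal) := by rwa [heind0, add_zero] at hPx_le
    have hfx_ge : ((m : ℝ) : EReal) ≤ f x := by
      have h4 := iInf_le (fun x' : X => f x' + eind ({0} : Set K) (A x')) x
      rw [hm] at h4
      simpa [heind0] using h4
    have hfx : f x = ((m : ℝ) : EReal) := le_antisymm hfx_le hfx_ge
    have hDν : econj f (A.adjoint ν) = ((-m : ℝ) : EReal) := by
      refine le_antisymm ?_ ?_
      · rw [← hμd_val]; exact le_iInf hν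
      · rw [← hμd_val]; exact iInf_le (fun ν' : K => econj f (A.adjoint ν')) ν
    have hxAν : ⟪x, A.adjoint ν⟫_ℝ = 0 := by
      rw [ContinuousLinearMap.adjoint_inner_right, hAx, inner_zero_left]
    have hsub : A.adjoint ν ∈ esubdiff f x := by
      intro y
      rcases eq_or_ne (f y) ⊤ with hy | hy
      · rw [hy]; exact le_top
      obtain ⟨s, hsy⟩ := myExistsReal hy (hb y)
      have h4 := myLeConj f (A.adjoint ν) y
      rw [hDν, hsy] at h4
      rw [hsy, hfx]
      norm_cast at h4 ⊢
      have h5 : ⟪y - x, A.adjoint ν⟫_ℝ = ⟪y, A.adjoint ν⟫_ℝ := by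
        rw [inner_sub_left, hxAν, sub_zero]
      rw [h5]
      linarith
    have hproxx : IsProxPt f (x - A.adjoint (A x) + A.adjoint ν) x := by
      apply mySubdiffToProx f hb
      have h5 : x - A.adjoint (A x) + A.adjoint ν - x = A.adjoint ν := by
        rw [hAx, map_zero, sub_zero]
        abel
      rw [h5]
      exact hsub
    have hpeq : proxf (x - A.adjoint (A x) + A.adjoint ν) = x :=
      myProxUnique f hconv ⟨x₀, hx₀⟩ hb (hproxf _) hproxx
    refine ⟨hpeq, ?_⟩
    rw [hpeq, hAx, sub_zero]
end
end

section
/- Let X and K be real Hilbert spaces, f ∈ Γ₀(X), and A : X → K a bounded linear operator with operator norm ‖A‖_op ≤ 1. Then the LAL operator T_LAL : X × K → X × K : (x, ν) ↦ (x_T, ν_T), defined by x_T := prox_f(x − A*Ax + A*ν) and ν_T := ν − A x_T, is nonexpansive on the product Hilbert space X × K (equipped with the norm ‖(x,ν)‖² = ‖x‖² + ‖ν‖²), i.e., ‖T_LAL(x₁,ν₁) − T_LAL(x₂,ν₂)‖ ≤ ‖(x₁,ν₁) − (x₂,ν₂)‖ for all (x₁,ν₁), (x₂,ν₂) ∈ X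 × K. -/
noncomputable section

open Filter Topology Bornology
open scoped InnerProductSpace Pointwise Classical

section auxLAL
variable {H : Type*} [NormedAddCommGroup H] [InnerProductSpace ℝ H]

lemma lal_prox_ne_top (f : H → EReal) (hprop : EProper f) {x p : H}
    (h : IsProxPt f x p) : f p ≠ ⊤ := by
  obtain ⟨⟨z, hz⟩, hbot⟩ := hprop
  intro htop
  have h1 := h z
  rw [htop] at h1
  have h2 : f z + ((((1:ℝ)/2) * ‖z - x‖ ^ 2 : ℝ) : EReal) < ⊤ :=
    EReal.add_lt_top hz (EReal.coe_ne_top _)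
  have h3 : (⊤ : EReal) + ((((1:ℝ)/2) * ‖p - x‖ ^ 2 : ℝ) : EReal) = ⊤ :=
    EReal.top_add_of_ne_bot (EReal.coe_ne_bot _)
  rw [h3] at h1
  exact absurd (lt_of_le_of_lt h1 h2) (lt_irrefl _)

lemma lal_prox_step (f : H → EReal) (hconv : EConvex f) (u p q : H) (h : IsProxPt f u p)
    {rp rq : ℝ} (hp : f p = (rp : EReal)) (hq : f q = (rq : EReal)) {t : ℝ} (ht0 : 0 < t)
    (ht1 : t ≤ 1) :
    rp ≤ rq + ⟪p - u, q - p⟫_ℝ + t / 2 * ‖q - p‖ ^ 2 := by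
  set y : H := (1 - t) • p + t • q with hy
  have hyu : y - u = (p - u) + t • (q - p) := by
    rw [hy, sub_smul, one_smul, smul_sub]; abel
  have hconv' : f y ≤ (((1 - t) * rp + t * rq : ℝ) : EReal) := by
    have := hconv p q (1 - t) t (by linarith) ht0.le (by ring)
    rw [hp, hq, ← EReal.coe_mul, ← EReal.coe_mul, ← EReal.coe_add] at this
    exact this
  have hprox := h y
  rw [hp] at hprox
  have chain : (rp : EReal) + ((((1:ℝ)/2) * ‖p - u‖ ^ 2 : ℝ) : EReal)
      ≤ (((1 - t) * rp + t * rq : ℝ) : EReal) + ((((1:ℝ)/2) * ‖y - u‖ ^ 2 : ℝ) : EReal) :=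
    hprox.trans (add_le_add_left hconv' _)
  rw [← EReal.coe_add, ← EReal.coe_add, EReal.coe_le_coe_iff] at chain
  have hnorm : ‖y - u‖ ^ 2
      = ‖p - u‖ ^ 2 + 2 * (t * ⟪p - u, q - p⟫_ℝ) + t ^ 2 * ‖q - p‖ ^ 2 := by
    rw [hyu, norm_add_sq_real, real_inner_smul_right, norm_smul, mul_pow, Real.norm_eq_abs,
      sq_abs]
  rw [hnorm] at chain
  nlinarith [chain, ht0, sq_nonneg (‖q - p‖)]

lemma lal_prox_firm (f : H → EReal) (hf : Gamma0 f) {u₁ u₂ p₁ p₂ : H}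
    (h₁ : IsProxPt f u₁ p₁) (h₂ : IsProxPt f u₂ p₂) :
    ‖p₁ - p₂‖ ^ 2 ≤ ⟪p₁ - p₂, u₁ - u₂⟫_ℝ := by
  obtain ⟨hprop, _, hconv⟩ := hf
  have htop1 := lal_prox_ne_top f hprop h₁
  have htop2 := lal_prox_ne_top f hprop h₂
  obtain ⟨r₁, hr₁⟩ : ∃ r : ℝ, f p₁ = (r : EReal) :=
    ⟨(f p₁).toReal, (EReal.coe_toReal htop1 (hprop.2 p₁)).symm⟩
  obtain ⟨r₂, hr₂⟩ : ∃ r : ℝ, f p₂ = (r : EReal) :=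
    ⟨(f p₂).toReal, (EReal.coe_toReal htop2 (hprop.2 p₂)).symm⟩
  refine le_of_forall_pos_le_add fun ε hε => ?_
  have hbpos : (0:ℝ) < ‖p₂ - p₁‖ ^ 2 + 1 := by positivity
  set t : ℝ := min 1 (ε / (‖p₂ - p₁‖ ^ 2 + 1)) with htdef
  have ht0 : 0 < t := lt_min one_pos (div_pos hε hbpos)
  have ht1 : t ≤ 1 := min_le_left _ _
  have key1 := lal_prox_step f hconv u₁ p₁ p₂ h₁ hr₁ hr₂ ht0 ht1
  have key2 := lal_prox_step f hconv u₂ p₂ p₁ h₂ hr₂ hr₁ ht0 ht1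
  have htb : t * ‖p₂ - p₁‖ ^ 2 ≤ ε := by
    have h1 : t ≤ ε / (‖p₂ - p₁‖ ^ 2 + 1) := min_le_right _ _
    have h2 : t * (‖p₂ - p₁‖ ^ 2 + 1) ≤ ε := by
      rw [← le_div_iff₀ hbpos]; exact h1
    nlinarith [ht0]
  have hns : ‖p₁ - p₂‖ = ‖p₂ - p₁‖ := norm_sub_rev _ _
  have e1 : ‖p₁ - p₂‖ ^ 2 = ‖p₁‖ ^ 2 - 2 * ⟪p₁, p₂⟫_ℝ + ‖p₂‖ ^ 2 := norm_sub_sq_real p₁ p₂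
  simp only [inner_sub_left, inner_sub_right] at key1 key2 ⊢
  have c1 : ⟪p₂, p₁⟫_ℝ = ⟪p₁, p₂⟫_ℝ := real_inner_comm _ _
  have c2 : ⟪p₁, u₁⟫_ℝ = ⟪u₁, p₁⟫_ℝ := real_inner_comm _ _
  have c3 : ⟪p₁, u₂⟫_ℝ = ⟪u₂, p₁⟫_ℝ := real_inner_comm _ _
  have c4 : ⟪p₂, u₁⟫_ℝ = ⟪u₁, p₂⟫_ℝ := real_inner_comm _ _
  have c5 : ⟪p₂, u₂⟫_ℝ = ⟪u₂, p₂⟫_ℝ := real_inner_comm _ _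
  have c6 : ⟪p₁, p₁⟫_ℝ = ‖p₁‖ ^ 2 := real_inner_self_eq_norm_sq _
  have c7 : ⟪p₂, p₂⟫_ℝ = ‖p₂‖ ^ 2 := real_inner_self_eq_norm_sq _
  rw [hns] at e1
  have e0 : ‖p₁ - p₂‖ ^ 2 = ‖p₂ - p₁‖ ^ 2 := by rw [hns]
  have hsum : t / 2 * ‖p₂ - p₁‖ ^ 2 + t / 2 * ‖p₁ - p₂‖ ^ 2 = t * ‖p₂ - p₁‖ ^ 2 := by
    rw [e0]; ring
  linarith [key1, key2]

end auxLAL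

set_option maxHeartbeats 1000000 in
/-- Proposition 2(b): nonexpansiveness of the LAL operator.
If `‖A‖_op ≤ 1` then `T_LAL` is nonexpansive on the product Hilbert space `X × K`
equipped with the norm `‖(x,ν)‖² = ‖x‖² + ‖ν‖²`. -/
theorem statement2
    {X K : Type*} [NormedAddCommGroup X] [InnerProductSpace ℝ X] [CompleteSpace X]
    [NormedAddCommGroup K] [InnerProductSpace ℝ K] [CompleteSpace K]
    (f : X → EReal) (hf : Gamma0 f) (A : X →L[ℝ] K) (hA : ‖A‖ ≤ 1)
    (proxf : X → X) (hproxf : ∀ x, IsProxPt f x (proxf x))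
    (T : X × K → X × K)
    (hT : ∀ w : X × K, T w =
      (proxf (w.1 - A.adjoint (A w.1) + A.adjoint w.2),
       w.2 - A (proxf (w.1 - A.adjoint (A w.1) + A.adjoint w.2)))) :
    ∀ w₁ w₂ : X × K,
      Real.sqrt (‖(T w₁).1 - (T w₂).1‖ ^ 2 + ‖(T w₁).2 - (T w₂).2‖ ^ 2)
        ≤ Real.sqrt (‖w₁.1 - w₂.1‖ ^ 2 + ‖w₁.2 - w₂.2‖ ^ 2) := by
  intro w₁ w₂
  obtain ⟨x₁, ν₁⟩ := w₁
  obtain ⟨x₂, ν₂⟩ := w₂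
  simp only [hT]
  apply Real.sqrt_le_sqrt
  set u₁ : X := x₁ - A.adjoint (A x₁) + A.adjoint ν₁ with hu₁
  set u₂ : X := x₂ - A.adjoint (A x₂) + A.adjoint ν₂ with hu₂
  set p₁ : X := proxf u₁ with hp₁
  set p₂ : X := proxf u₂ with hp₂
  have hfirm := lal_prox_firm f hf (hproxf u₁) (hproxf u₂)
  have hud : u₁ - u₂ = (x₁ - x₂) - A.adjoint (A (x₁ - x₂)) + A.adjoint (ν₁ - ν₂) := by
    rw [hu₁, hu₂, map_sub A, map_sub A.adjoint, map_sub A.adjoint]; abel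
  rw [hud] at hfirm
  set x : X := x₁ - x₂
  set ν : K := ν₁ - ν₂ with hν
  set p : X := p₁ - p₂ with hpd
  have hfirm' : ‖p‖ ^ 2 ≤ ⟪p, x⟫_ℝ - ⟪A p, A x⟫_ℝ + ⟪A p, ν⟫_ℝ := by
    have e : ⟪p, x - A.adjoint (A x) + A.adjoint ν⟫_ℝ
        = ⟪p, x⟫_ℝ - ⟪A p, A x⟫_ℝ + ⟪A p, ν⟫_ℝ := by
      rw [inner_add_right, inner_sub_right, ContinuousLinearMap.adjoint_inner_right,
        ContinuousLinearMap.adjoint_inner_right]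
    rw [← e]; exact hfirm
  have hnd : (ν₁ - A p₁) - (ν₂ - A p₂) = ν - A p := by
    rw [hpd, hν, map_sub A]; abel
  rw [hnd]
  have hAle : ‖A (x - p)‖ ≤ ‖x - p‖ := by
    calc ‖A (x - p)‖ ≤ ‖A‖ * ‖x - p‖ := A.le_opNorm _
      _ ≤ 1 * ‖x - p‖ := mul_le_mul_of_nonneg_right hA (norm_nonneg _)
      _ = ‖x - p‖ := one_mul _
  have hAsq : ‖A (x - p)‖ ^ 2 ≤ ‖x - p‖ ^ 2 := by
    exact pow_le_pow_left₀ (norm_nonneg _) hAle 2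
  have e1 : ‖ν - A p‖ ^ 2 = ‖ν‖ ^ 2 - 2 * ⟪ν, A p⟫_ℝ + ‖A p‖ ^ 2 := norm_sub_sq_real ν (A p)
  have e2 : ‖x - p‖ ^ 2 = ‖x‖ ^ 2 - 2 * ⟪x, p⟫_ℝ + ‖p‖ ^ 2 := norm_sub_sq_real x p
  have e3 : ‖A (x - p)‖ ^ 2 = ‖A x‖ ^ 2 - 2 * ⟪A x, A p⟫_ℝ + ‖A p‖ ^ 2 := by
    rw [map_sub A]; exact norm_sub_sq_real (A x) (A p)
  have c1 : ⟪A p, ν⟫_ℝ = ⟪ν, A p⟫_ℝ := real_inner_comm _ _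
  have c2 : ⟪A p, A x⟫_ℝ = ⟪A x, A p⟫_ℝ := real_inner_comm _ _
  have c3 : ⟪p, x⟫_ℝ = ⟪x, p⟫_ℝ := real_inner_comm _ _
  have hax : (0:ℝ) ≤ ‖A x‖ ^ 2 := sq_nonneg _
  linarith [hfirm', hAsq]
end
end

section
/- Let X and K be real Hilbert spaces, f ∈ Γ₀(X), and A : X → K a bounded linear operator with ‖A‖_op < 1. Set S_pLAL := argmin_{x∈X}(f(x) + ι_{{0}}(Ax)) and S_dLAL := argmin_{ν∈K} f*(A*ν), and assume S_pLAL ≠ ∅, S_dLAL ≠ ∅, and min_{x∈X}(f(x) + ι_{{0}}(Ax)) = −min_{ν∈K} f*(A*ν). Define T_LAL(x, ν) := (x_T, ν_T) by x_T := prox_f(x − A*Ax + A*ν) and ν_T := ν − A x_T. Then, for any initial point (x₀, ν₀) ∈ X × K, the sequence generated by (x_{n+1}, ν_{n+1}) = T_LAL(x_n, ν_n) converges weakly to a point in S_pLAL × S_dLAL. -/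
noncomputable section

open Filter Topology Bornology
open scoped InnerProductSpace Pointwise Classical

section Helpers

variable {X : Type*} [NormedAddCommGroup X] [InnerProductSpace ℝ X] [CompleteSpace X]

/-- Ultrafilter limit of a bounded real sequence exists. -/
lemma ulim_exists (U : Ultrafilter ℕ) (g : ℕ → ℝ) (C : ℝ) (hg : ∀ n, |g n| ≤ C) :
    ∃ a, Tendsto g (↑U) (𝓝 a) := by
  have hcpt : IsCompact (Set.Icc (-C) C) := isCompact_Icc
  have hle : ↑(U.map g) ≤ 𝓟 (Set.Icc (-C) C) := by
    rw [le_principal_iff]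
    have : ∀ n, g n ∈ Set.Icc (-C) C := fun n => abs_le.1 (hg n)
    exact Filter.mem_map.2 (Filter.univ_mem' this)
  obtain ⟨a, _, hle2⟩ := hcpt.ultrafilter_le_nhds (U.map g) hle
  exact ⟨a, hle2⟩

/-- Weak cluster point along an ultrafilter, for a norm-bounded sequence. -/
lemma weak_cluster (U : Ultrafilter ℕ) (y : ℕ → X) (C : ℝ) (hy : ∀ n, ‖y n‖ ≤ C) :
    ∃ yh : X, ∀ v : X, Tendsto (fun n => ⟪y n, v⟫_ℝ) ↑U (𝓝 ⟪yh, v⟫_ℝ) := by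
  have hbound : ∀ v : X, ∀ n, |⟪y n, v⟫_ℝ| ≤ C * ‖v‖ := by
    intro v n
    calc |⟪y n, v⟫_ℝ| ≤ ‖y n‖ * ‖v‖ := abs_real_inner_le_norm _ _
      _ ≤ C * ‖v‖ := mul_le_mul_of_nonneg_right (hy n) (norm_nonneg _)
  have h : ∀ v : X, ∃ a, Tendsto (fun n => ⟪y n, v⟫_ℝ) ↑U (𝓝 a) := by
    intro v; exact ulim_exists U _ (C * ‖v‖) (hbound v)
  choose L hL using h
  have hadd : ∀ v w, L (v + w) = L v + L w := by
    intro v w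
    refine tendsto_nhds_unique ?_ ((hL v).add (hL w))
    simpa [inner_add_right] using hL (v + w)
  have hsmul : ∀ (c : ℝ) v, L (c • v) = c * L v := by
    intro c v
    refine tendsto_nhds_unique ?_ ((hL v).const_mul c)
    simpa [inner_smul_right] using hL (c • v)
  have hLb : ∀ v, ‖L v‖ ≤ C * ‖v‖ := by
    intro v
    rw [Real.norm_eq_abs]
    exact le_of_tendsto ((hL v).abs) (Filter.Eventually.of_forall fun n => hbound v n)
  let ψ : X →L[ℝ] ℝ := LinearMap.mkContinuous
    { toFun := L, map_add' := hadd, map_smul' := hsmul } C hLb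
  refine ⟨(InnerProductSpace.toDual ℝ X).symm ψ, fun v => ?_⟩
  have : ⟪(InnerProductSpace.toDual ℝ X).symm ψ, v⟫_ℝ = ψ v :=
    InnerProductSpace.toDual_symm_apply
  rw [this]
  exact hL v

end Helpers

section Part2
variable {X : Type*} [NormedAddCommGroup X] [InnerProductSpace ℝ X] [CompleteSpace X]

/-- A lsc convex function is sequentially lsc along weakly convergent (sub)sequences. -/
lemma weak_lsc (f : X → EReal) (hlsc : LowerSemicontinuous f) (hconv : EConvex f)
    (l : Filter ℕ) [hl : l.NeBot] (y : ℕ → X) (yh : X)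
    (hw : ∀ v, Tendsto (fun n => ⟪y n, v⟫_ℝ) l (𝓝 ⟪yh, v⟫_ℝ))
    (c : ℝ) (hc : ∀ᶠ n in l, f (y n) ≤ (c : EReal)) : f yh ≤ (c : EReal) := by
  by_contra hcon
  push_neg at hcon
  set E : Set (X × ℝ) := {p | f p.1 ≤ (p.2 : EReal)} with hE
  have hconvE : Convex ℝ E := by
    rintro p hp q hq a b ha hb hab
    have h1 : f (a • p.1 + b • q.1) ≤ (a : EReal) * f p.1 + (b : EReal) * f q.1 :=
      hconv p.1 q.1 a b ha hb hab
    have h2 : (a : EReal) * f p.1 ≤ (a : EReal) * ((p.2 : ℝ) : EReal) :=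
      mul_le_mul_of_nonneg_left hp (by exact_mod_cast ha)
    have h3 : (b : EReal) * f q.1 ≤ (b : EReal) * ((q.2 : ℝ) : EReal) :=
      mul_le_mul_of_nonneg_left hq (by exact_mod_cast hb)
    have : f (a • p.1 + b • q.1) ≤ ((a * p.2 + b * q.2 : ℝ) : EReal) := by
      refine h1.trans ((add_le_add h2 h3).trans_eq ?_)
      rw [← EReal.coe_mul, ← EReal.coe_mul, ← EReal.coe_add]
    exact this
  have hclosedE : IsClosed E := by
    rw [← isOpen_compl_iff]
    rw [isOpen_iff_mem_nhds]
    rintro ⟨px, pt⟩ hp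
    simp only [Set.mem_compl_iff, hE, Set.mem_setOf_eq, not_le] at hp
    obtain ⟨m', hm1, hm2⟩ := exists_between hp
    have hm'top : m' ≠ ⊤ := by
      rintro rfl
      exact (lt_irrefl _ (hm2.trans_le le_top)).elim
    have hm'bot : m' ≠ ⊥ := by
      rintro rfl
      exact (lt_irrefl _ ((bot_lt_iff_ne_bot.2 (by simp)).trans hm1)).elim
    set m : ℝ := m'.toReal with hm
    have hmm : (m : EReal) = m' := EReal.coe_toReal hm'top hm'bot
    have h1 : ∀ᶠ x' in 𝓝 px, m' < f x' := hlsc px m' hm2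
    have h2 : Set.Iio m ∈ 𝓝 pt := Iio_mem_nhds (by exact_mod_cast hmm ▸ hm1)
    rw [nhds_prod_eq]
    refine Filter.mem_of_superset (Filter.prod_mem_prod h1 h2) ?_
    rintro ⟨qx, qt⟩ ⟨hq1, hq2⟩
    simp only [Set.mem_compl_iff, hE, Set.mem_setOf_eq, not_le]
    exact lt_trans (by exact_mod_cast (EReal.coe_lt_coe_iff.2 hq2).trans_eq hmm) hq1
  have hpt : ((yh, c) : X × ℝ) ∉ E := by
    simp only [hE, Set.mem_setOf_eq, not_le]
    exact hcon
  obtain ⟨φ, u, hElt, hptgt⟩ := geometric_hahn_banach_closed_point hconvE hclosedE hpt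
  have hdecomp : ∀ (x : X) (t : ℝ), φ (x, t) = φ (x, 0) + t * φ (0, 1) := by
    intro x t
    have : ((x, t) : X × ℝ) = (x, 0) + t • ((0 : X), (1 : ℝ)) := by
      simp [Prod.ext_iff]
    rw [this, map_add, map_smul, smul_eq_mul]
  set ψ : X →L[ℝ] ℝ := φ.comp (ContinuousLinearMap.inl ℝ X ℝ) with hψ
  have hψa : ∀ x : X, ψ x = φ (x, 0) := fun x => rfl
  set vψ : X := (InnerProductSpace.toDual ℝ X).symm ψ with hvψ
  have hvψa : ∀ x : X, ⟪vψ, x⟫_ℝ = ψ x := fun x => InnerProductSpace.toDual_symm_apply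
  have hlim : Tendsto (fun n => φ (y n, 0) + c * φ (0, 1)) l
      (𝓝 (φ (yh, 0) + c * φ (0, 1))) := by
    have h1 : Tendsto (fun n => φ (y n, 0)) l (𝓝 (φ (yh, 0))) := by
      have h := hw vψ
      have e : ∀ x : X, ⟪x, vψ⟫_ℝ = φ (x, 0) := fun x => by
        rw [real_inner_comm, hvψa x, hψa]
      simpa only [e] using h
    exact h1.add_const _
  have hub : ∀ᶠ n in l, φ (y n, 0) + c * φ (0, 1) < u := by
    filter_upwards [hc] with n hn
    have : ((y n, c) : X × ℝ) ∈ E := hn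
    have := hElt _ this
    rwa [hdecomp] at this
  have hle : φ (yh, 0) + c * φ (0, 1) ≤ u :=
    le_of_tendsto hlim (hub.mono fun n h => h.le)
  rw [hdecomp] at hptgt
  linarith
end Part2
section Part3
variable {X K : Type*} [NormedAddCommGroup X] [InnerProductSpace ℝ X] [CompleteSpace X]
  [NormedAddCommGroup K] [InnerProductSpace ℝ K] [CompleteSpace K]

/-- Real-valued subgradient statement. -/
def HasSubg (f : X → EReal) (p g : X) : Prop :=
  f p ≠ ⊤ ∧ ∀ y : X, ((⟪y - p, g⟫_ℝ + (f p).toReal : ℝ) : EReal) ≤ f y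

lemma hasSubg_mono {f : X → EReal} (hbot : ∀ x, f x ≠ ⊥) {p g q h : X}
    (hp : HasSubg f p g) (hq : HasSubg f q h) : 0 ≤ ⟪p - q, g - h⟫_ℝ := by
  have h1 := hp.2 q
  have h2 := hq.2 p
  rw [← EReal.coe_toReal hq.1 (hbot q), EReal.coe_le_coe_iff] at h1
  rw [← EReal.coe_toReal hp.1 (hbot p), EReal.coe_le_coe_iff] at h2
  have e1 : ⟪q - p, g⟫_ℝ = -⟪p - q, g⟫_ℝ := by
    rw [← inner_neg_left, neg_sub]
  rw [inner_sub_right]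
  rw [e1] at h1
  linarith

lemma prox_ne_top {f : X → EReal} (hbot : ∀ x, f x ≠ ⊥) {x₀ : X} (hx₀ : f x₀ ≠ ⊤)
    {u p : X} (hprox : IsProxPt f u p) : f p ≠ ⊤ := by
  intro htop
  have h := hprox x₀
  rw [htop, EReal.top_add_of_ne_bot (EReal.coe_ne_bot _)] at h
  have hlt : f x₀ + ((((1:ℝ)/2) * ‖x₀ - u‖ ^ 2 : ℝ) : EReal) < ⊤ := by
    rw [← EReal.coe_toReal hx₀ (hbot x₀), ← EReal.coe_add]
    exact EReal.coe_lt_top _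
  exact absurd h (not_le.2 hlt)

lemma prox_hasSubg {f : X → EReal} (hconv : EConvex f) (hbot : ∀ x, f x ≠ ⊥)
    {u p : X} (hprox : IsProxPt f u p) (hfin : f p ≠ ⊤) : HasSubg f p (u - p) := by
  refine ⟨hfin, fun y => ?_⟩
  by_cases hy : f y = ⊤
  · rw [hy]; exact le_top
  set fp : ℝ := (f p).toReal with hfpdef
  set fy : ℝ := (f y).toReal with hfydef
  have hfp : (fp : EReal) = f p := EReal.coe_toReal hfin (hbot p)
  have hfy : (fy : EReal) = f y := EReal.coe_toReal hy (hbot y)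
  have key : ∀ t : ℝ, 0 < t → t ≤ 1 → fp ≤ fy + ⟪p - u, y - p⟫_ℝ + t / 2 * ‖y - p‖ ^ 2 := by
    intro t ht ht1
    have hc := hconv p y (1 - t) t (by linarith) ht.le (by ring)
    have hq := hprox ((1 - t) • p + t • y)
    have hcr : ((1 - t : ℝ) : EReal) * f p + (t : EReal) * f y
        = (((1 - t) * fp + t * fy : ℝ) : EReal) := by
      rw [← hfp, ← hfy, ← EReal.coe_mul, ← EReal.coe_mul, ← EReal.coe_add]
    have hchain : f p + ((((1:ℝ)/2) * ‖p - u‖ ^ 2 : ℝ) : EReal)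
        ≤ (((1 - t) * fp + t * fy + (1:ℝ)/2 * ‖(1 - t) • p + t • y - u‖ ^ 2 : ℝ) : EReal) := by
      refine hq.trans ?_
      rw [EReal.coe_add]
      exact add_le_add (hc.trans_eq hcr) le_rfl
    rw [← hfp, ← EReal.coe_add, EReal.coe_le_coe_iff] at hchain
    have hvec : (1 - t) • p + t • y - u = (p - u) + t • (y - p) := by
      module
    rw [hvec] at hchain
    have hnorm : ‖(p - u) + t • (y - p)‖ ^ 2
        = ‖p - u‖ ^ 2 + 2 * (t * ⟪p - u, y - p⟫_ℝ) + t ^ 2 * ‖y - p‖ ^ 2 := by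
      rw [norm_add_sq_real, real_inner_smul_right, norm_smul, Real.norm_eq_abs, mul_pow, sq_abs]
    rw [hnorm] at hchain
    have ht' : t * fp ≤ t * (fy + ⟪p - u, y - p⟫_ℝ + t / 2 * ‖y - p‖ ^ 2) := by nlinarith
    exact le_of_mul_le_mul_left ht' ht
  have main : fp ≤ fy + ⟪p - u, y - p⟫_ℝ := by
    refine le_of_forall_pos_le_add ?_
    intro ε hε
    set t : ℝ := min 1 (ε / (‖y - p‖ ^ 2 / 2 + 1)) with htdef
    have hden : (0:ℝ) < ‖y - p‖ ^ 2 / 2 + 1 := by positivity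
    have ht0 : 0 < t := lt_min one_pos (div_pos hε hden)
    have ht1 : t ≤ 1 := min_le_left _ _
    have h2 : t / 2 * ‖y - p‖ ^ 2 ≤ ε := by
      have h3 : t ≤ ε / (‖y - p‖ ^ 2 / 2 + 1) := min_le_right _ _
      have h4 : t * (‖y - p‖ ^ 2 / 2 + 1) ≤ ε := by
        rw [← le_div_iff₀ hden]; exact h3
      nlinarith [ht0]
    have := key t ht0 ht1
    linarith
  rw [← hfy, EReal.coe_le_coe_iff]
  have e1 : ⟪y - p, u - p⟫_ℝ = -⟪p - u, y - p⟫_ℝ := by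
    rw [← inner_neg_left, neg_sub, real_inner_comm (y - p) (u - p)]
  rw [e1]
  linarith

end Part3
section Part4
variable {X K : Type*} [NormedAddCommGroup X] [InnerProductSpace ℝ X] [CompleteSpace X]
  [NormedAddCommGroup K] [InnerProductSpace ℝ K] [CompleteSpace K]

lemma fejer_step {A : X →L[ℝ] K} {f : X → EReal} (hbot : ∀ x, f x ≠ ⊥)
    {xb : X} {νb : K} (hgood : HasSubg f xb (A.adjoint νb)) (hAxb : A xb = 0)
    {x x' : X} {ν ν' : K} {g : X}
    (hsub : HasSubg f x' g)
    (hg : g = x - A.adjoint (A x) + A.adjoint ν - x')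
    (hν' : ν' = ν - A x') :
    ‖x' - xb‖ ^ 2 - ‖A (x' - xb)‖ ^ 2 + ‖ν' - νb‖ ^ 2
      + (1 - ‖A‖ ^ 2) * ‖x' - x‖ ^ 2 + ‖A x'‖ ^ 2
    ≤ ‖x - xb‖ ^ 2 - ‖A (x - xb)‖ ^ 2 + ‖ν - νb‖ ^ 2 := by
  have hM := hasSubg_mono hbot hsub hgood
  -- abbreviations
  set e : X := x - xb with he
  set e' : X := x' - xb with he'
  set d : K := ν - νb with hd
  have hAe : A e = A x := by rw [he, map_sub, hAxb, sub_zero]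
  have hAe' : A e' = A x' := by rw [he', map_sub, hAxb, sub_zero]
  -- rewrite the monotonicity inner product
  have hgdiff : g - A.adjoint νb = (e - e') - A.adjoint (A e) + A.adjoint d := by
    rw [hg, he, he', hd, hAe, map_sub]
    abel
  have hM' : 0 ≤ ⟪e', e - e'⟫_ℝ - ⟪A e', A e⟫_ℝ + ⟪A e', d⟫_ℝ := by
    rw [hgdiff] at hM
    rw [inner_add_right, inner_sub_right, ContinuousLinearMap.adjoint_inner_right,
      ContinuousLinearMap.adjoint_inner_right] at hM
    linarith
  -- operator norm bound
  have hAop : ‖A (x' - x)‖ ^ 2 ≤ ‖A‖ ^ 2 * ‖x' - x‖ ^ 2 := by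
    have h1 := A.le_opNorm (x' - x)
    nlinarith [norm_nonneg (A (x' - x)), norm_nonneg (x' - x), A.opNorm_nonneg]
  -- vector identities
  have hv1 : ν' - νb = d - A e' := by rw [hν', hd, hAe']; abel
  have hv2 : x' - x = e' - e := by rw [he, he']; abel
  have hv3 : A (x' - x) = A e' - A e := by rw [hv2, map_sub]
  -- norm expansions
  have n1 : ‖d - A e'‖ ^ 2 = ‖d‖ ^ 2 - 2 * ⟪d, A e'⟫_ℝ + ‖A e'‖ ^ 2 := norm_sub_sq_real d (A e')
  have n2 : ‖e' - e‖ ^ 2 = ‖e'‖ ^ 2 - 2 * ⟪e', e⟫_ℝ + ‖e‖ ^ 2 := norm_sub_sq_real e' e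
  have n3 : ‖A e' - A e‖ ^ 2 = ‖A e'‖ ^ 2 - 2 * ⟪A e', A e⟫_ℝ + ‖A e‖ ^ 2 :=
    norm_sub_sq_real (A e') (A e)
  have hcomm : ⟪A e', d⟫_ℝ = ⟪d, A e'⟫_ℝ := real_inner_comm _ _
  rw [hv1, hv2, n1, ← hAe']
  rw [hv3, hv2] at hAop
  rw [hcomm, inner_sub_right, real_inner_self_eq_norm_sq] at hM'
  nlinarith [hAop, hM', n2, n3]
end Part4

set_option maxHeartbeats 2000000 in
/-- Proposition 2(d): weak convergence of the LAL iteration for `‖A‖_op < 1`.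
Under primal/dual attainment and zero duality gap, the Picard iteration of `T_LAL`
converges weakly (in the product Hilbert space) to a point of `S_pLAL × S_dLAL`. -/
theorem statement3
    {X K : Type*} [NormedAddCommGroup X] [InnerProductSpace ℝ X] [CompleteSpace X]
    [NormedAddCommGroup K] [InnerProductSpace ℝ K] [CompleteSpace K]
    (f : X → EReal) (hf : Gamma0 f) (A : X →L[ℝ] K) (hA : ‖A‖ < 1)
    (SpLAL : Set X) (hSpdef : SpLAL = argminSet (fun x => f x + eind ({0} : Set K) (A x)))
    (SdLAL : Set K) (hSddef : SdLAL = argminSet (fun ν => econj f (A.adjoint ν)))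
    (hSp : SpLAL.Nonempty) (hSd : SdLAL.Nonempty)
    (hminmin : (⨅ x : X, (f x + eind ({0} : Set K) (A x)))
      = - ⨅ ν : K, econj f (A.adjoint ν))
    (proxf : X → X) (hproxf : ∀ x, IsProxPt f x (proxf x))
    (T : X × K → X × K)
    (hT : ∀ w : X × K, T w =
      (proxf (w.1 - A.adjoint (A w.1) + A.adjoint w.2),
       w.2 - A (proxf (w.1 - A.adjoint (A w.1) + A.adjoint w.2))))
    (z : ℕ → X × K) (hz : ∀ n, z (n + 1) = T (z n)) :
    ∃ w : X × K, w.1 ∈ SpLAL ∧ w.2 ∈ SdLAL ∧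
      ∀ v : X × K,
        Tendsto (fun n => ⟪(z n).1 - w.1, v.1⟫_ℝ + ⟪(z n).2 - w.2, v.2⟫_ℝ)
          atTop (𝓝 0) := by
  classical
  obtain ⟨⟨x₀, hx₀⟩, hbot⟩ := hf.1
  have hlsc := hf.2.1
  have hconv := hf.2.2
  set B := ContinuousLinearMap.adjoint A with hBdef
  set xs : ℕ → X := fun n => (z n).1 with hxsdef
  set νs : ℕ → K := fun n => (z n).2 with hνsdef
  have hxrec : ∀ n, xs (n+1) = proxf (xs n - B (A (xs n)) + B (νs n)) := by
    intro n
    show (z (n+1)).1 = _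
    rw [hz n, hT (z n)]
  have hνrec : ∀ n, νs (n+1) = νs n - A (xs (n+1)) := by
    intro n
    show (z (n+1)).2 = (z n).2 - A ((z (n+1)).1)
    rw [hz n, hT (z n)]
  obtain ⟨xst, hxstmem⟩ := hSp
  obtain ⟨νst, hνstmem⟩ := hSd
  rw [hSpdef] at hxstmem
  rw [hSddef] at hνstmem
  have hconj_ne_bot : ∀ u : X, econj f u ≠ ⊥ := by
    intro u hbad
    have h1 : ((⟪x₀, u⟫_ℝ : ℝ) : EReal) - f x₀ ≤ econj f u := by
      unfold econj; exact le_iSup (fun x : X => ((⟪x, u⟫_ℝ : ℝ) : EReal) - f x) x₀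
    rw [hbad, le_bot_iff, ← EReal.coe_toReal hx₀ (hbot x₀), ← EReal.coe_sub] at h1
    exact (EReal.coe_ne_bot _) h1
  have hPmin : f xst + eind ({0} : Set K) (A xst)
      = ⨅ x : X, (f x + eind ({0} : Set K) (A x)) :=
    le_antisymm (le_iInf fun y => hxstmem y) (iInf_le _ xst)
  have hDmin : econj f (B νst) = ⨅ ν : K, econj f (B ν) :=
    le_antisymm (le_iInf fun μ => hνstmem μ) (iInf_le _ νst)
  have hPd : f xst + eind ({0} : Set K) (A xst) = - econj f (B νst) := by
    rw [hPmin, hminmin, hDmin]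
  have hPne_top : f xst + eind ({0} : Set K) (A xst) ≠ ⊤ := by
    rw [hPd]
    intro hbad
    rw [EReal.neg_eq_top_iff] at hbad
    exact hconj_ne_bot _ hbad
  have hAxst : A xst = 0 := by
    by_contra hne
    have h2 : eind ({0} : Set K) (A xst) = ⊤ := by
      simp only [eind, Set.mem_singleton_iff]
      exact if_neg hne
    rw [h2] at hPne_top
    exact hPne_top (EReal.add_top_of_ne_bot (hbot xst))
  have heind0 : eind ({0} : Set K) (A xst) = 0 := by
    simp only [eind, Set.mem_singleton_iff]
    exact if_pos hAxst
  rw [heind0, add_zero] at hPd hPne_top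
  set pstar : ℝ := (f xst).toReal with hpstardef
  have hfxst : (pstar : EReal) = f xst := EReal.coe_toReal hPne_top (hbot xst)
  have hdval : econj f (B νst) = ((-pstar : ℝ) : EReal) := by
    have h1 : - f xst = econj f (B νst) := by rw [hPd, neg_neg]
    rw [← h1, ← hfxst, ← EReal.coe_neg]
  have hinner_xst : ∀ μ : K, ⟪xst, B μ⟫_ℝ = 0 := by
    intro μ
    rw [hBdef, ContinuousLinearMap.adjoint_inner_right, hAxst, inner_zero_left]
  have hstar : HasSubg f xst (B νst) := by
    refine ⟨hPne_top, fun y => ?_⟩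
    by_cases hy : f y = ⊤
    · rw [hy]; exact le_top
    have hterm : ((⟪y, B νst⟫_ℝ : ℝ) : EReal) - f y ≤ ((-pstar : ℝ) : EReal) := by
      rw [← hdval]
      unfold econj
      exact le_iSup (fun x : X => ((⟪x, B νst⟫_ℝ : ℝ) : EReal) - f x) y
    rw [← EReal.coe_toReal hy (hbot y), ← EReal.coe_sub, EReal.coe_le_coe_iff] at hterm
    rw [← EReal.coe_toReal hy (hbot y), EReal.coe_le_coe_iff]
    rw [inner_sub_left, hinner_xst νst]
    rw [← hpstardef]
    linarith
  have hfinprox : ∀ u, f (proxf u) ≠ ⊤ := fun u => prox_ne_top hbot hPne_top (hproxf u)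
  set g : ℕ → X := fun n => xs n - B (A (xs n)) + B (νs n) - xs (n+1) with hgdef
  have hsubn : ∀ n, HasSubg f (xs (n+1)) (g n) := by
    intro n
    have h1 := prox_hasSubg hconv hbot (hproxf (xs n - B (A (xs n)) + B (νs n))) (hfinprox _)
    rw [← hxrec n] at h1
    exact h1
  set op : ℝ := ‖A‖ ^ 2 with hopdef
  have hopA : 0 ≤ ‖A‖ := A.opNorm_nonneg
  have hop1 : op < 1 := by nlinarith
  have hop0 : 0 ≤ op := sq_nonneg _
  set V : X × K → ℕ → ℝ := fun w n =>
    ‖xs n - w.1‖ ^ 2 - ‖A (xs n - w.1)‖ ^ 2 + ‖νs n - w.2‖ ^ 2 with hVdef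
  have hfejer : ∀ w : X × K, HasSubg f w.1 (B w.2) → A w.1 = 0 → ∀ n,
      V w (n+1) + (1 - op) * ‖xs (n+1) - xs n‖ ^ 2 + ‖A (xs (n+1))‖ ^ 2 ≤ V w n := by
    intro w hw hAw n
    have h := fejer_step (A := A) hbot hw hAw (hsubn n) rfl (hνrec n)
    simpa only [hVdef, hopdef] using h
  have hAbnd : ∀ y : X, ‖A y‖ ^ 2 ≤ op * ‖y‖ ^ 2 := by
    intro y
    have h1 := A.le_opNorm y
    nlinarith [norm_nonneg (A y), norm_nonneg y]
  have hVlow : ∀ w : X × K, ∀ n,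
      (1 - op) * ‖xs n - w.1‖ ^ 2 + ‖νs n - w.2‖ ^ 2 ≤ V w n := by
    intro w n
    have h := hAbnd (xs n - w.1)
    show (1 - op) * ‖xs n - w.1‖ ^ 2 + ‖νs n - w.2‖ ^ 2
      ≤ ‖xs n - w.1‖ ^ 2 - ‖A (xs n - w.1)‖ ^ 2 + ‖νs n - w.2‖ ^ 2
    nlinarith
  have hV0 : ∀ (w : X × K) (n : ℕ), 0 ≤ V w n := by
    intro w n
    refine le_trans ?_ (hVlow w n)
    have h1 : 0 ≤ (1 - op) * ‖xs n - w.1‖ ^ 2 := by nlinarith [sq_nonneg ‖xs n - w.1‖]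
    nlinarith [sq_nonneg ‖νs n - w.2‖]
  have hVanti : ∀ w : X × K, HasSubg f w.1 (B w.2) → A w.1 = 0 → Antitone (V w) := by
    intro w hw hAw
    refine antitone_nat_of_succ_le fun n => ?_
    have h := hfejer w hw hAw n
    nlinarith [sq_nonneg ‖xs (n+1) - xs n‖, sq_nonneg ‖A (xs (n+1))‖]
  have hVtend : ∀ w : X × K, HasSubg f w.1 (B w.2) → A w.1 = 0 →
      Tendsto (V w) atTop (𝓝 (⨅ n, V w n)) := by
    intro w hw hAw
    refine tendsto_atTop_ciInf (hVanti w hw hAw) ⟨0, ?_⟩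
    rintro v ⟨n, rfl⟩
    exact hV0 w n
  have hVst := hVtend (xst, νst) hstar hAxst
  have hdiff0 : Tendsto (fun n => V (xst, νst) n - V (xst, νst) (n+1)) atTop (𝓝 0) := by
    have h2 : Tendsto (fun n => V (xst, νst) (n+1)) atTop (𝓝 (⨅ n, V (xst, νst) n)) :=
      hVst.comp (tendsto_add_atTop_nat 1)
    simpa using hVst.sub h2
  have hsq1 : Tendsto (fun n => ‖xs (n+1) - xs n‖ ^ 2) atTop (𝓝 0) := by
    have hup : ∀ n, ‖xs (n+1) - xs n‖ ^ 2
        ≤ (V (xst, νst) n - V (xst, νst) (n+1)) / (1 - op) := by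
      intro n
      have h := hfejer (xst, νst) hstar hAxst n
      rw [le_div_iff₀ (by linarith : (0:ℝ) < 1 - op)]
      nlinarith [sq_nonneg ‖A (xs (n+1))‖]
    have hlim : Tendsto (fun n => (V (xst, νst) n - V (xst, νst) (n+1)) / (1 - op))
        atTop (𝓝 0) := by
      simpa using hdiff0.div_const (1 - op)
    exact squeeze_zero (fun n => sq_nonneg _) hup hlim
  have hsqA1 : Tendsto (fun n => ‖A (xs (n+1))‖ ^ 2) atTop (𝓝 0) := by
    have hup : ∀ n, ‖A (xs (n+1))‖ ^ 2 ≤ V (xst, νst) n - V (xst, νst) (n+1) := by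
      intro n
      have h := hfejer (xst, νst) hstar hAxst n
      nlinarith [sq_nonneg ‖xs (n+1) - xs n‖]
    exact squeeze_zero (fun n => sq_nonneg _) hup hdiff0
  have sqrt_tendsto : ∀ u : ℕ → ℝ, Tendsto (fun n => (u n) ^ 2) atTop (𝓝 0) →
      (∀ n, 0 ≤ u n) → Tendsto u atTop (𝓝 0) := by
    intro u hu hpos
    have h1 : Tendsto (fun n => Real.sqrt ((u n) ^ 2)) atTop (𝓝 (Real.sqrt 0)) :=
      (Real.continuous_sqrt.tendsto 0).comp hu
    simpa [Real.sqrt_sq (hpos _), Real.sqrt_zero] using h1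
  have hdx : Tendsto (fun n => ‖xs (n+1) - xs n‖) atTop (𝓝 0) :=
    sqrt_tendsto _ hsq1 fun n => norm_nonneg _
  have hAx1 : Tendsto (fun n => ‖A (xs (n+1))‖) atTop (𝓝 0) :=
    sqrt_tendsto _ hsqA1 fun n => norm_nonneg _
  have hAx : Tendsto (fun n => ‖A (xs n)‖) atTop (𝓝 0) :=
    (tendsto_add_atTop_iff_nat 1).1 hAx1
  -- uniform bounds
  have hVbd : ∀ n, V (xst, νst) n ≤ V (xst, νst) 0 :=
    fun n => hVanti (xst, νst) hstar hAxst (Nat.zero_le n)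
  obtain ⟨Cx, hCx⟩ : ∃ Cx : ℝ, ∀ n, ‖xs n‖ ≤ Cx := by
    refine ⟨Real.sqrt (V (xst, νst) 0 / (1 - op)) + ‖xst‖, fun n => ?_⟩
    have h1 : ‖xs n‖ ≤ ‖xs n - xst‖ + ‖xst‖ := by
      simpa using norm_add_le (xs n - xst) xst
    have h2 : ‖xs n - xst‖ ≤ Real.sqrt (V (xst, νst) 0 / (1 - op)) := by
      refine Real.le_sqrt_of_sq_le ?_
      rw [le_div_iff₀ (by linarith : (0:ℝ) < 1 - op)]
      have h3 := hVlow (xst, νst) n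
      have h4 := hVbd n
      simp only [Prod.fst, Prod.snd] at h3
      nlinarith [sq_nonneg ‖νs n - νst‖]
    linarith
  obtain ⟨Cν, hCν⟩ : ∃ Cν : ℝ, ∀ n, ‖νs n‖ ≤ Cν := by
    refine ⟨Real.sqrt (V (xst, νst) 0) + ‖νst‖, fun n => ?_⟩
    have h1 : ‖νs n‖ ≤ ‖νs n - νst‖ + ‖νst‖ := by
      simpa using norm_add_le (νs n - νst) νst
    have h2 : ‖νs n - νst‖ ≤ Real.sqrt (V (xst, νst) 0) := by
      refine Real.le_sqrt_of_sq_le ?_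
      have h3 := hVlow (xst, νst) n
      have h4 := hVbd n
      simp only [Prod.fst, Prod.snd] at h3
      nlinarith [sq_nonneg ‖xs n - xst‖, hop1, sq_nonneg ‖xs n - xst‖]
    linarith
  have hCx0 : 0 ≤ Cx := le_trans (norm_nonneg _) (hCx 0)
  obtain ⟨Cg, hCg⟩ : ∃ Cg : ℝ, ∀ n, ‖g n‖ ≤ Cg := by
    refine ⟨Cx + ‖B‖ * (‖A‖ * Cx) + ‖B‖ * Cν + Cx, fun n => ?_⟩
    have h1 : ‖g n‖ ≤ ‖xs n - B (A (xs n)) + B (νs n)‖ + ‖xs (n+1)‖ :=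
      norm_sub_le _ _
    have h2 : ‖xs n - B (A (xs n)) + B (νs n)‖ ≤ ‖xs n - B (A (xs n))‖ + ‖B (νs n)‖ :=
      norm_add_le _ _
    have h3 : ‖xs n - B (A (xs n))‖ ≤ ‖xs n‖ + ‖B (A (xs n))‖ := norm_sub_le _ _
    have h4 : ‖B (A (xs n))‖ ≤ ‖B‖ * (‖A‖ * Cx) := by
      refine (B.le_opNorm _).trans ?_
      have := (A.le_opNorm (xs n)).trans (mul_le_mul_of_nonneg_left (hCx n) hopA)
      exact mul_le_mul_of_nonneg_left this B.opNorm_nonneg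
    have h5 : ‖B (νs n)‖ ≤ ‖B‖ * Cν := by
      refine (B.le_opNorm _).trans ?_
      exact mul_le_mul_of_nonneg_left (hCν n) B.opNorm_nonneg
    have h6 := hCx n
    have h7 := hCx (n+1)
    linarith
  have hdx' : Tendsto (fun n => ‖xs n - xs (n+1)‖) atTop (𝓝 0) := by
    simpa [norm_sub_rev] using hdx
  have cluster : ∀ U : Ultrafilter ℕ, (↑U : Filter ℕ) ≤ atTop →
      ∃ xh : X, ∃ νh : K,
        (∀ v : X, Tendsto (fun n => ⟪xs n, v⟫_ℝ) ↑U (𝓝 ⟪xh, v⟫_ℝ)) ∧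
        (∀ v : K, Tendsto (fun n => ⟪νs n, v⟫_ℝ) ↑U (𝓝 ⟪νh, v⟫_ℝ)) ∧
        HasSubg f xh (B νh) ∧ A xh = 0 ∧ xh ∈ SpLAL ∧ νh ∈ SdLAL := by
    intro U hU
    obtain ⟨xh, hxh⟩ := weak_cluster U xs Cx hCx
    obtain ⟨νh, hνh⟩ := weak_cluster U νs Cν hCν
    have hAxh : A xh = 0 := by
      have h1 : ∀ k : K, ⟪A xh, k⟫_ℝ = 0 := by
        intro k
        have h2 : Tendsto (fun n => ⟪xs n, B k⟫_ℝ) ↑U (𝓝 ⟪xh, B k⟫_ℝ) := hxh (B k)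
        have h4 : Tendsto (fun n => ⟪xs n, B k⟫_ℝ) atTop (𝓝 0) := by
          refine squeeze_zero_norm (fun n => ?_) (by simpa using hAx.mul_const ‖k‖)
          rw [Real.norm_eq_abs, hBdef, ContinuousLinearMap.adjoint_inner_right]
          exact abs_real_inner_le_norm _ _
        have h5 := tendsto_nhds_unique h2 (h4.mono_left hU)
        rw [hBdef, ContinuousLinearMap.adjoint_inner_right] at h5
        exact h5
      have := h1 (A xh)
      exact inner_self_eq_zero.1 this
    set r : ℕ → ℝ := fun n => (f (xs (n+1))).toReal with hrdef
    have hrc : ∀ n, (r n : EReal) = f (xs (n+1)) := by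
      intro n
      refine EReal.coe_toReal ?_ (hbot _)
      rw [hxrec n]; exact hfinprox _
    have hrsub : ∀ n (y : X), ((⟪y - xs (n+1), g n⟫_ℝ + r n : ℝ) : EReal) ≤ f y :=
      fun n y => (hsubn n).2 y
    have hCg0 : 0 ≤ Cg := le_trans (norm_nonneg _) (hCg 0)
    obtain ⟨Cr, hCr⟩ : ∃ Cr, ∀ n, |r n| ≤ Cr := by
      refine ⟨|pstar| + (Cx + ‖xst‖) * (Cg + ‖B νst‖), fun n => ?_⟩
      have h1 := hrsub n xst
      rw [← hfxst, EReal.coe_le_coe_iff] at h1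
      have h2 := hstar.2 (xs (n+1))
      rw [← hrc n, EReal.coe_le_coe_iff] at h2
      have h3 : |⟪xst - xs (n+1), g n⟫_ℝ| ≤ (Cx + ‖xst‖) * Cg := by
        have ha := abs_real_inner_le_norm (xst - xs (n+1)) (g n)
        have hb : ‖xst - xs (n+1)‖ ≤ Cx + ‖xst‖ := by
          have := norm_sub_le xst (xs (n+1))
          have := hCx (n+1)
          linarith
        nlinarith [norm_nonneg (xst - xs (n+1)), norm_nonneg (g n), hCg n,
          abs_nonneg (⟪xst - xs (n+1), g n⟫_ℝ)]
      have h4 : |⟪xs (n+1) - xst, B νst⟫_ℝ| ≤ (Cx + ‖xst‖) * ‖B νst‖ := by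
        have ha := abs_real_inner_le_norm (xs (n+1) - xst) (B νst)
        have hb : ‖xs (n+1) - xst‖ ≤ Cx + ‖xst‖ := by
          have := norm_sub_le (xs (n+1)) xst
          have := hCx (n+1)
          linarith
        nlinarith [norm_nonneg (xs (n+1) - xst), norm_nonneg (B νst)]
      rw [abs_le]
      obtain ⟨h3a, h3b⟩ := abs_le.1 h3
      obtain ⟨h4a, h4b⟩ := abs_le.1 h4
      have hp1 : -|pstar| ≤ pstar := neg_abs_le _
      have hp2 : pstar ≤ |pstar| := le_abs_self _
      have hBν : 0 ≤ ‖B νst‖ := norm_nonneg _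
      constructor
      · nlinarith
      · nlinarith
    obtain ⟨rh, hrh⟩ := ulim_exists U r Cr hCr
    have hkey : ∀ w : X, Tendsto (fun n => ⟪w - xs (n+1), g n⟫_ℝ) ↑U (𝓝 ⟪A w, νh⟫_ℝ) := by
      intro w
      have hexp : ∀ n, ⟪w - xs (n+1), g n⟫_ℝ
          = (⟪w, xs n - xs (n+1)⟫_ℝ - ⟪xs (n+1), xs n - xs (n+1)⟫_ℝ)
            - (⟪A w, A (xs n)⟫_ℝ - ⟪A (xs (n+1)), A (xs n)⟫_ℝ)
            + (⟪A w, νs n⟫_ℝ - ⟪A (xs (n+1)), νs n⟫_ℝ) := by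
        intro n
        have hgn : g n = (xs n - xs (n+1)) - B (A (xs n)) + B (νs n) := by
          show xs n - B (A (xs n)) + B (νs n) - xs (n+1) = _
          abel
        simp only [hgn, inner_add_right, inner_sub_right, inner_sub_left, hBdef,
          ContinuousLinearMap.adjoint_inner_right, map_sub]
        ring
      have t1 : Tendsto (fun n => ⟪w, xs n - xs (n+1)⟫_ℝ) atTop (𝓝 0) := by
        refine squeeze_zero_norm (fun n => ?_) (by simpa using hdx'.const_mul ‖w‖)
        rw [Real.norm_eq_abs]
        exact abs_real_inner_le_norm _ _
      have t2 : Tendsto (fun n => ⟪xs (n+1), xs n - xs (n+1)⟫_ℝ) atTop (𝓝 0) := by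
        refine squeeze_zero_norm (fun n => ?_) (by simpa using hdx'.const_mul Cx)
        rw [Real.norm_eq_abs]
        refine (abs_real_inner_le_norm _ _).trans ?_
        exact mul_le_mul_of_nonneg_right (hCx (n+1)) (norm_nonneg _)
      have t3 : Tendsto (fun n => ⟪A w, A (xs n)⟫_ℝ) atTop (𝓝 0) := by
        refine squeeze_zero_norm (fun n => ?_) (by simpa using hAx.const_mul ‖A w‖)
        rw [Real.norm_eq_abs]
        exact abs_real_inner_le_norm _ _
      have t4 : Tendsto (fun n => ⟪A (xs (n+1)), A (xs n)⟫_ℝ) atTop (𝓝 0) := by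
        refine squeeze_zero_norm (fun n => ?_) (by simpa using hAx1.mul_const (‖A‖ * Cx))
        rw [Real.norm_eq_abs]
        refine (abs_real_inner_le_norm _ _).trans ?_
        refine mul_le_mul_of_nonneg_left ?_ (norm_nonneg _)
        exact (A.le_opNorm _).trans (mul_le_mul_of_nonneg_left (hCx n) hopA)
      have t6 : Tendsto (fun n => ⟪A (xs (n+1)), νs n⟫_ℝ) atTop (𝓝 0) := by
        refine squeeze_zero_norm (fun n => ?_) (by simpa using hAx1.mul_const Cν)
        rw [Real.norm_eq_abs]
        refine (abs_real_inner_le_norm _ _).trans ?_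
        exact mul_le_mul_of_nonneg_left (hCν n) (norm_nonneg _)
      have t5 : Tendsto (fun n => ⟪A w, νs n⟫_ℝ) ↑U (𝓝 ⟪A w, νh⟫_ℝ) := by
        have := hνh (A w)
        simp only [real_inner_comm _ (A w)] at this ⊢
        exact this
      have hcomb := ((((t1.sub t2).mono_left hU).sub ((t3.sub t4).mono_left hU)).add
        (t5.sub (t6.mono_left hU)))
      rw [show (fun n => ⟪w - xs (n+1), g n⟫_ℝ)
          = fun n => (⟪w, xs n - xs (n+1)⟫_ℝ - ⟪xs (n+1), xs n - xs (n+1)⟫_ℝ)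
            - (⟪A w, A (xs n)⟫_ℝ - ⟪A (xs (n+1)), A (xs n)⟫_ℝ)
            + (⟪A w, νs n⟫_ℝ - ⟪A (xs (n+1)), νs n⟫_ℝ) from funext hexp]
      simpa using hcomb
    have hzero : Tendsto (fun n => ⟪xh - xs (n+1), g n⟫_ℝ) ↑U (𝓝 0) := by
      have := hkey xh
      rwa [hAxh, inner_zero_left] at this
    have hge : ((rh : ℝ) : EReal) ≤ f xh := by
      have hconv2 : Tendsto (fun n => ((⟪xh - xs (n+1), g n⟫_ℝ + r n : ℝ) : EReal))
          (↑U : Filter ℕ) (𝓝 ((rh : ℝ) : EReal)) := by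
        rw [EReal.tendsto_coe]
        simpa using hzero.add hrh
      exact le_of_tendsto hconv2 (Filter.Eventually.of_forall fun n => hrsub n xh)
    have hle : f xh ≤ ((rh : ℝ) : EReal) := by
      have hw' : ∀ v : X, Tendsto (fun n => ⟪xs (n+1), v⟫_ℝ) ↑U (𝓝 ⟪xh, v⟫_ℝ) := by
        intro v
        have h1 : Tendsto (fun n => ⟪xs (n+1) - xs n, v⟫_ℝ) atTop (𝓝 0) := by
          refine squeeze_zero_norm (fun n => ?_) (by simpa using hdx.mul_const ‖v‖)
          rw [Real.norm_eq_abs]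
          exact abs_real_inner_le_norm _ _
        have h2 := (h1.mono_left hU).add (hxh v)
        simpa [inner_sub_left] using h2
      have hstep : ∀ ε : ℝ, 0 < ε → f xh ≤ ((rh + ε : ℝ) : EReal) := by
        intro ε hε
        have hev : ∀ᶠ n in (↑U : Filter ℕ), f (xs (n+1)) ≤ ((rh + ε : ℝ) : EReal) := by
          have h1 : ∀ᶠ n in (↑U : Filter ℕ), r n < rh + ε :=
            hrh.eventually_lt_const (by linarith)
          filter_upwards [h1] with n hn
          rw [← hrc n]
          exact_mod_cast hn.le
        exact weak_lsc f hlsc hconv ↑U (fun n => xs (n+1)) xh hw' (rh + ε) hev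
      have h1 : f xh ≠ ⊤ := by
        intro hbad
        have := hstep 1 one_pos
        rw [hbad, top_le_iff] at this
        exact EReal.coe_ne_top _ this
      rw [← EReal.coe_toReal h1 (hbot xh), EReal.coe_le_coe_iff]
      refine le_of_forall_pos_le_add fun ε hε => ?_
      have := hstep ε hε
      rwa [← EReal.coe_toReal h1 (hbot xh), EReal.coe_le_coe_iff] at this
    have hfxh : f xh = ((rh : ℝ) : EReal) := le_antisymm hle hge
    have hxh_ne_top : f xh ≠ ⊤ := by rw [hfxh]; exact EReal.coe_ne_top _
    have hrhval : (f xh).toReal = rh := by rw [hfxh]; exact EReal.toReal_coe _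
    have hixh : ∀ μ : K, ⟪xh, B μ⟫_ℝ = 0 := by
      intro μ
      rw [hBdef, ContinuousLinearMap.adjoint_inner_right, hAxh, inner_zero_left]
    have hsubxh : HasSubg f xh (B νh) := by
      refine ⟨hxh_ne_top, fun y => ?_⟩
      by_cases hy : f y = ⊤
      · rw [hy]; exact le_top
      have hper : ∀ n, ⟪y - xs (n+1), g n⟫_ℝ + r n ≤ (f y).toReal := by
        intro n
        have h1 := hrsub n y
        rwa [← EReal.coe_toReal hy (hbot y), EReal.coe_le_coe_iff] at h1
      have hlim2 : Tendsto (fun n => ⟪y - xs (n+1), g n⟫_ℝ + r n) ↑U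
          (𝓝 (⟪A y, νh⟫_ℝ + rh)) := (hkey y).add hrh
      have h5 : ⟪A y, νh⟫_ℝ + rh ≤ (f y).toReal :=
        le_of_tendsto hlim2 (Filter.Eventually.of_forall hper)
      rw [← EReal.coe_toReal hy (hbot y), EReal.coe_le_coe_iff, hrhval]
      have h6 : ⟪y - xh, B νh⟫_ℝ = ⟪A y, νh⟫_ℝ := by
        rw [inner_sub_left, hixh νh, sub_zero, hBdef,
          ContinuousLinearMap.adjoint_inner_right]
      rw [h6]
      linarith
    have hxhSp : xh ∈ SpLAL := by
      rw [hSpdef]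
      simp only [argminSet, Set.mem_setOf_eq]
      intro y
      rw [show eind ({0} : Set K) (A xh) = 0 from by simp [eind, hAxh], add_zero]
      by_cases hAy : A y = 0
      · rw [show eind ({0} : Set K) (A y) = 0 from by simp [eind, hAy], add_zero]
        by_cases hy : f y = ⊤
        · rw [hy]; exact le_top
        have h7 := hsubxh.2 y
        have h6 : ⟪y - xh, B νh⟫_ℝ = 0 := by
          rw [inner_sub_left, hixh νh, sub_zero, hBdef,
            ContinuousLinearMap.adjoint_inner_right, hAy, inner_zero_left]
        rw [h6, zero_add, hrhval, ← hfxh] at h7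
        exact h7
      · rw [show eind ({0} : Set K) (A y) = ⊤ from by simp [eind, hAy],
          EReal.add_top_of_ne_bot (hbot y)]
        exact le_top
    have hνhSd : νh ∈ SdLAL := by
      rw [hSddef]
      simp only [argminSet, Set.mem_setOf_eq]
      intro μ
      have hup : econj f (B νh) ≤ ((-rh : ℝ) : EReal) := by
        unfold econj
        refine iSup_le fun y => ?_
        by_cases hy : f y = ⊤
        · rw [hy, EReal.sub_top]
          exact bot_le
        · have h7 := hsubxh.2 y
          rw [← EReal.coe_toReal hy (hbot y), EReal.coe_le_coe_iff, hrhval] at h7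
          rw [← EReal.coe_toReal hy (hbot y), ← EReal.coe_sub, EReal.coe_le_coe_iff]
          have h6 : ⟪y - xh, B νh⟫_ℝ = ⟪y, B νh⟫_ℝ := by
            rw [inner_sub_left, hixh νh, sub_zero]
          rw [h6] at h7
          linarith
      have hlo : ((-rh : ℝ) : EReal) ≤ econj f (B μ) := by
        have h8 : ((⟪xh, B μ⟫_ℝ : ℝ) : EReal) - f xh ≤ econj f (B μ) := by
          unfold econj
          exact le_iSup (fun x : X => ((⟪x, B μ⟫_ℝ : ℝ) : EReal) - f x) xh
        rw [hixh μ, hfxh, ← EReal.coe_sub, zero_sub] at h8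
        exact h8
      exact hup.trans hlo
    exact ⟨xh, νh, hxh, hνh, hsubxh, hAxh, hxhSp, hνhSd⟩
  set U0 := Ultrafilter.of (atTop : Filter ℕ) with hU0def
  obtain ⟨xh, νh, hwx, hwv, hsubh, hAxh, hmem1, hmem2⟩ :=
    cluster U0 (Ultrafilter.of_le _)
  refine ⟨(xh, νh), hmem1, hmem2, ?_⟩
  intro v
  show Tendsto (fun n => ⟪xs n - xh, v.1⟫_ℝ + ⟪νs n - νh, v.2⟫_ℝ) atTop (𝓝 0)
  set t : ℕ → ℝ := fun n => ⟪xs n - xh, v.1⟫_ℝ + ⟪νs n - νh, v.2⟫_ℝ with htdef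
  by_contra hcon
  rw [Metric.tendsto_atTop] at hcon
  push_neg at hcon
  obtain ⟨ε, hε, hfreq⟩ := hcon
  have hfreq' : ∃ᶠ n in atTop, ε ≤ |t n| := by
    rw [Filter.frequently_atTop]
    intro N
    obtain ⟨n, hn1, hn2⟩ := hfreq N
    refine ⟨n, hn1, ?_⟩
    rwa [Real.dist_eq, sub_zero] at hn2
  have hne : (atTop ⊓ 𝓟 {n | ε ≤ |t n|}).NeBot := Filter.frequently_iff_neBot.1 hfreq'
  set U' := Ultrafilter.of (atTop ⊓ 𝓟 {n | ε ≤ |t n|}) with hU'def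
  have hU'le : (↑U' : Filter ℕ) ≤ atTop ⊓ 𝓟 {n | ε ≤ |t n|} := Ultrafilter.of_le _
  have hU'top : (↑U' : Filter ℕ) ≤ atTop := hU'le.trans inf_le_left
  obtain ⟨xh', νh', hwx', hwv', hsubh', hAxh', _, _⟩ := cluster U' hU'top
  have hV1 := hVtend (xh, νh) hsubh hAxh
  have hV2 := hVtend (xh', νh') hsubh' hAxh'
  set s : ℕ → ℝ := fun n => ⟪xs n, xh - xh'⟫_ℝ + ⟪νs n, νh - νh'⟫_ℝ with hsdef
  set Cc : ℝ := ‖xh‖^2 + ‖νh‖^2 - ‖xh'‖^2 - ‖νh'‖^2 with hCcdef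
  have hident : ∀ n, V (xh, νh) n - V (xh', νh') n = -2 * s n + Cc := by
    intro n
    show ‖xs n - xh‖^2 - ‖A (xs n - xh)‖^2 + ‖νs n - νh‖^2
      - (‖xs n - xh'‖^2 - ‖A (xs n - xh')‖^2 + ‖νs n - νh'‖^2) = -2 * s n + Cc
    have e1 : A (xs n - xh) = A (xs n) := by rw [map_sub, hAxh, sub_zero]
    have e2 : A (xs n - xh') = A (xs n) := by rw [map_sub, hAxh', sub_zero]
    rw [e1, e2, norm_sub_sq_real, norm_sub_sq_real, norm_sub_sq_real, norm_sub_sq_real]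
    simp only [hsdef, hCcdef, inner_sub_right]
    ring
  have hsn : ∀ n, s n = (Cc - (V (xh, νh) n - V (xh', νh') n)) / 2 := by
    intro n
    rw [eq_div_iff (two_ne_zero)]
    have := hident n
    linarith
  have hslim : Tendsto s atTop
      (𝓝 ((Cc - ((⨅ n, V (xh, νh) n) - ⨅ n, V (xh', νh') n)) / 2)) := by
    have h1 := ((tendsto_const_nhds : Tendsto (fun _ : ℕ => Cc) atTop (𝓝 Cc)).sub
      (hV1.sub hV2)).div_const 2
    have heqf : s = fun n => (Cc - (V (xh, νh) n - V (xh', νh') n)) / 2 := funext hsn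
    rw [heqf]
    exact h1
  have hs1 : Tendsto s (↑U0 : Filter ℕ)
      (𝓝 (⟪xh, xh - xh'⟫_ℝ + ⟪νh, νh - νh'⟫_ℝ)) := by
    rw [hsdef]
    exact (hwx (xh - xh')).add (hwv (νh - νh'))
  have hs2 : Tendsto s ↑U' (𝓝 (⟪xh', xh - xh'⟫_ℝ + ⟪νh', νh - νh'⟫_ℝ)) := by
    rw [hsdef]
    exact (hwx' (xh - xh')).add (hwv' (νh - νh'))
  have heq1 := tendsto_nhds_unique hs1 (hslim.mono_left (Ultrafilter.of_le _))
  have heq2 := tendsto_nhds_unique hs2 (hslim.mono_left hU'top)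
  have hzero2 : ⟪xh - xh', xh - xh'⟫_ℝ + ⟪νh - νh', νh - νh'⟫_ℝ = 0 := by
    rw [inner_sub_left, inner_sub_left]
    linarith
  have hxeq : xh' = xh := by
    have h2 : ⟪xh - xh', xh - xh'⟫_ℝ = 0 := by
      have n1 := real_inner_self_nonneg (x := xh - xh')
      have n2 := real_inner_self_nonneg (x := νh - νh')
      linarith
    have := inner_self_eq_zero.1 h2
    rw [sub_eq_zero] at this
    exact this.symm
  have hνeq : νh' = νh := by
    have h2 : ⟪νh - νh', νh - νh'⟫_ℝ = 0 := by
      have n1 := real_inner_self_nonneg (x := xh - xh')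
      have n2 := real_inner_self_nonneg (x := νh - νh')
      linarith
    have := inner_self_eq_zero.1 h2
    rw [sub_eq_zero] at this
    exact this.symm
  have htlim : Tendsto t ↑U' (𝓝 0) := by
    have h1 := ((hwx' v.1).sub_const ⟪xh, v.1⟫_ℝ).add ((hwv' v.2).sub_const ⟪νh, v.2⟫_ℝ)
    rw [hxeq, hνeq] at h1
    simpa [htdef, inner_sub_left] using h1
  have hSev : ∀ᶠ n in (↑U' : Filter ℕ), ε ≤ |t n| :=
    Filter.eventually_iff.2 (le_principal_iff.1 (hU'le.trans inf_le_right))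
  have hev2 : ∀ᶠ n in (↑U' : Filter ℕ), |t n| < ε := by
    have h2 : Tendsto (fun n => |t n|) ↑U' (𝓝 0) := by
      simpa using htlim.abs
    exact h2.eventually_lt_const hε
  obtain ⟨n, hn1, hn2⟩ := (hSev.and hev2).exists
  linarith
end
end

section
/- Let X be a real Hilbert space and K = ℝ^m. Let f ∈ Γ₀(X), g = ⊕_{i=1}^m g_i with g_i ∈ Γ₀(ℝ), and A : X → ℝ^m : x ↦ (A₁x, …, A_mx) with nonzero bounded linear functionals A_i : X → ℝ. Assume S_p := argmin_{x∈X}(f(x) + ∑_{i=1}^m g_i(A_i x)) ≠ ∅ and the qualification condition 0 ∈ sri(dom(g) − A(dom(f))) holds. Define H : X^{m+1} → (−∞,∞] : (x^{(1)},…,x^{(m+1)}) ↦ ∑_{i=1}^m g_i(A_i x^{(i)}) + f(x^{(m+1)}) and the diagonal subspace D := {(x^{(1)},…,x^{(m+1)}) ∈ X^{m+1} : x^{(i)} = x^{(j)} for all i,j}. Then: (i) argmin(H + ι_D) over X^{m+1} is nonempty; (ii) argmin of U ↦ H*(U) + (ι_D)*(−U) over X^{m+1} is nonempty; and (iii) min(H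 + ι_D) = −min of U ↦ H*(U) + (ι_D)*(−U). -/
noncomputable section

open Filter Topology Bornology
open scoped InnerProductSpace Pointwise Classical

/-- Fenchel conjugate on the product Hilbert space `X^n`
(with inner product `⟪Z, U⟫ = ∑ i ⟪Z i, U i⟫`). -/
def econjPi {X : Type*} [NormedAddCommGroup X] [InnerProductSpace ℝ X] {n : ℕ}
    (F : (Fin n → X) → EReal) (U : Fin n → X) : EReal :=
  ⨆ Z : Fin n → X, (((∑ i, ⟪Z i, U i⟫_ℝ : ℝ) : EReal) - F Z)


def erealHom : ℝ →+ EReal := ⟨⟨Real.toEReal, EReal.coe_zero⟩, EReal.coe_add⟩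

lemma coe_fsum {ι : Type*} (s : Finset ι) (a : ι → ℝ) :
    ((∑ i ∈ s, a i : ℝ) : EReal) = ∑ i ∈ s, (a i : EReal) := map_sum erealHom a s

lemma fsum_ne_bot {ι : Type*} (s : Finset ι) (a : ι → EReal) (h : ∀ i ∈ s, a i ≠ ⊥) :
    ∑ i ∈ s, a i ≠ ⊥ := by
  classical
  induction s using Finset.induction with
  | empty => simp
  | @insert j s hj ih =>
    rw [Finset.sum_insert hj, ne_eq, EReal.add_eq_bot_iff]
    push_neg
    exact ⟨h j (Finset.mem_insert_self j s), ih fun i hi => h i (Finset.mem_insert_of_mem hi)⟩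

lemma fsum_ne_top {ι : Type*} (s : Finset ι) (a : ι → EReal) (hb : ∀ i ∈ s, a i ≠ ⊥)
    (ht : ∑ i ∈ s, a i ≠ ⊤) : ∀ i ∈ s, a i ≠ ⊤ := by
  classical
  intro j hj hja
  apply ht
  rw [← Finset.add_sum_erase s a hj, hja]
  exact EReal.top_add_of_ne_bot (fsum_ne_bot _ _ fun i hi => hb i (Finset.mem_of_mem_erase hi))

set_option maxHeartbeats 1000000 in
lemma fenchel_core {m : ℕ} {X : Type*} [AddCommGroup X] [Module ℝ X]
    (f : X → EReal) (hfb : ∀ x, f x ≠ ⊥)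
    (g : (Fin m → ℝ) → EReal) (hgb : ∀ r, g r ≠ ⊥)
    (T : X →ₗ[ℝ] (Fin m → ℝ))
    (hfc : ∀ (x₁ x₂ : X) (a b : ℝ), 0 ≤ a → 0 ≤ b → a + b = 1 → f x₁ ≠ ⊤ → f x₂ ≠ ⊤ →
      f (a • x₁ + b • x₂) ≤ ((a * (f x₁).toReal + b * (f x₂).toReal : ℝ) : EReal))
    (hgc : ∀ (r₁ r₂ : Fin m → ℝ) (a b : ℝ), 0 ≤ a → 0 ≤ b → a + b = 1 → g r₁ ≠ ⊤ → g r₂ ≠ ⊤ →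
      g (a • r₁ + b • r₂) ≤ ((a * (g r₁).toReal + b * (g r₂).toReal : ℝ) : EReal))
    (μ : ℝ) (hμ : ∀ x, (μ : EReal) ≤ f x + g (T x))
    (C : Set (Fin m → ℝ))
    (hCdef : ∀ y, y ∈ C ↔ ∃ d, g d ≠ ⊤ ∧ ∃ x, f x ≠ ⊤ ∧ y = d - T x)
    (h0 : (0 : Fin m → ℝ) ∈ C)
    (habs : ∀ y ∈ Submodule.span ℝ C, ∃ ε : ℝ, 0 < ε ∧ ε • y ∈ C) :
    ∃ s : (Fin m → ℝ) →ₗ[ℝ] ℝ, ∀ x r, (μ : EReal) + ((s (r - T x) : ℝ) : EReal) ≤ f x + g r := by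
  classical
  set L : Submodule ℝ (Fin m → ℝ) := Submodule.span ℝ C with hL
  set E : Set (↥L × ℝ) :=
    {p | ∃ x r, f x + g r < (p.2 : EReal) ∧ (p.1 : Fin m → ℝ) = r - T x} with hE
  have hCL : C ⊆ (L : Set (Fin m → ℝ)) := Submodule.subset_span
  -- finiteness extraction
  have hfin : ∀ {x : X} {r : Fin m → ℝ} {t : ℝ}, f x + g r < ((t:ℝ) : EReal) →
      f x ≠ ⊤ ∧ g r ≠ ⊤ ∧ (f x).toReal + (g r).toReal < t := by
    intro x r t h
    have hxt : f x ≠ ⊤ := by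
      intro hx; rw [hx, EReal.top_add_of_ne_bot (hgb r)] at h; exact not_top_lt h
    have hrt : g r ≠ ⊤ := by
      intro hr; rw [hr, EReal.add_top_of_ne_bot (hfb x)] at h; exact not_top_lt h
    refine ⟨hxt, hrt, ?_⟩
    have h' : (((f x).toReal + (g r).toReal : ℝ) : EReal) < (t : EReal) := by
      rwa [EReal.coe_add, EReal.coe_toReal hxt (hfb x), EReal.coe_toReal hrt (hgb r)]
    exact_mod_cast h'
  have hval : ∀ {x : X} {r : Fin m → ℝ}, f x ≠ ⊤ → g r ≠ ⊤ →
      f x + g r = (((f x).toReal + (g r).toReal : ℝ) : EReal) := by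
    intro x r hx hr
    rw [EReal.coe_add, EReal.coe_toReal hx (hfb x), EReal.coe_toReal hr (hgb r)]
  -- convexity of E
  have hEconv : Convex ℝ E := by
    rintro p ⟨x₁, r₁, h₁, hp1⟩ q ⟨x₂, r₂, h₂, hq1⟩ a b ha hb hab
    obtain ⟨hf1, hg1, hs1⟩ := hfin h₁
    obtain ⟨hf2, hg2, hs2⟩ := hfin h₂
    refine ⟨a • x₁ + b • x₂, a • r₁ + b • r₂, ?_, ?_⟩
    · have h2nd : (a • p + b • q).2 = a * p.2 + b * q.2 := rfl
      rw [h2nd]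
      have key : a * ((f x₁).toReal + (g r₁).toReal) + b * ((f x₂).toReal + (g r₂).toReal)
          < a * p.2 + b * q.2 := by
        rcases eq_or_lt_of_le ha with h|h
        · have hb1 : b = 1 := by linarith
          rw [← h, hb1]; simpa using hs2
        · nlinarith [mul_le_mul_of_nonneg_left hs2.le hb]
      calc f (a • x₁ + b • x₂) + g (a • r₁ + b • r₂)
          ≤ (((a * (f x₁).toReal + b * (f x₂).toReal) +
              (a * (g r₁).toReal + b * (g r₂).toReal) : ℝ) : EReal) := by
            rw [EReal.coe_add]
            exact add_le_add (hfc _ _ a b ha hb hab hf1 hf2) (hgc _ _ a b ha hb hab hg1 hg2)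
        _ < ((a * p.2 + b * q.2 : ℝ) : EReal) := by
            rw [EReal.coe_lt_coe_iff]; linarith
    · have h1st : ((a • p + b • q).1 : Fin m → ℝ) = a • (p.1 : Fin m → ℝ) + b • (q.1 : Fin m → ℝ) := rfl
      rw [h1st, hp1, hq1, map_add, map_smul, map_smul]
      simp [smul_sub]; abel
  -- upward closed
  have hEup : ∀ {y : ↥L} {t t' : ℝ}, (y, t) ∈ E → t ≤ t' → (y, t') ∈ E := by
    rintro y t t' ⟨x, r, h, h1⟩ htt
    exact ⟨x, r, lt_of_lt_of_le h (by exact_mod_cast htt), h1⟩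
  -- points of C give points of E
  have hCE : ∀ y (hy : y ∈ C), ∃ t : ℝ, ((⟨y, hCL hy⟩ : ↥L), t) ∈ E := by
    intro y hy
    obtain ⟨d, hd, x, hx, rfl⟩ := (hCdef _).mp hy
    exact ⟨(f x).toReal + (g d).toReal + 1, x, d, by rw [hval hx hd]; exact_mod_cast lt_add_one _, rfl⟩

  -- build a finite family of points of C whose span is L
  let w : Fin (Module.finrank ℝ ↥L) × Bool → ↥L :=
    fun js => cond js.2 (Module.finBasis ℝ ↥L js.1) (-(Module.finBasis ℝ ↥L js.1))
  have hwex : ∀ js, ∃ ε : ℝ, 0 < ε ∧ ε • ((w js : ↥L) : Fin m → ℝ) ∈ C :=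
    fun js => habs _ (w js).2
  let ε : Fin (Module.finrank ℝ ↥L) × Bool → ℝ := fun js => (hwex js).choose
  have hε : ∀ js, 0 < ε js := fun js => (hwex js).choose_spec.1
  have hεC : ∀ js, ((ε js • w js : ↥L) : Fin m → ℝ) ∈ C := fun js => (hwex js).choose_spec.2
  let u : Option (Fin (Module.finrank ℝ ↥L) × Bool) → ↥L :=
    fun o => Option.rec 0 (fun js => ε js • w js) o
  have huC : ∀ o, (((u o).1 : Fin m → ℝ)) ∈ C := by
    rintro (_|js)
    · exact h0
    · exact hεC js
  -- the affine span of the range of u is everything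
  have hspan : Submodule.span ℝ (Set.range u) = ⊤ := by
    rw [eq_top_iff]
    intro v _
    have hb : ∀ j, Module.finBasis ℝ ↥L j ∈ Submodule.span ℝ (Set.range u) := by
      intro j
      have h1 : u (some (j, true)) ∈ Submodule.span ℝ (Set.range u) :=
        Submodule.subset_span ⟨some (j, true), rfl⟩
      have h2 : Module.finBasis ℝ ↥L j = (ε (j, true))⁻¹ • u (some (j, true)) := by
        show _ = (ε (j, true))⁻¹ • (ε (j, true) • w (j, true))
        rw [smul_smul, inv_mul_cancel₀ (hε (j, true)).ne', one_smul]
        rfl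
      rw [h2]
      exact Submodule.smul_mem _ _ h1
    have := Module.Basis.mem_span (Module.finBasis ℝ ↥L) v
    exact Submodule.span_le.mpr (Set.range_subset_iff.mpr hb) this
  have haff : affineSpan ℝ (Set.range u) = ⊤ := by
    rw [AffineSubspace.affineSpan_eq_top_iff_vectorSpan_eq_top_of_nonempty ℝ ↥L ↥L (Set.range_nonempty u)]
    rw [vectorSpan_eq_span_vsub_set_right ℝ (show (0:↥L) ∈ Set.range u from ⟨none, rfl⟩)]
    simpa [vsub_eq_sub] using hspan
  -- interior of the convex hull is nonempty
  obtain ⟨z, hz⟩ : (interior (convexHull ℝ (Set.range u))).Nonempty := by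
    rw [(convex_convexHull ℝ _).interior_nonempty_iff_affineSpan_eq_top, affineSpan_convexHull]
    exact haff
  -- upper bound for the t-values of the points u
  have hut : ∀ o, ∃ t : ℝ, (u o, t) ∈ E := by
    intro o
    obtain ⟨t, ht⟩ := hCE _ (huC o)
    exact ⟨t, by rwa [Subtype.coe_eta] at ht⟩
  let tt : Option (Fin (Module.finrank ℝ ↥L) × Bool) → ℝ := fun o => (hut o).choose
  let T₀ : ℝ := Finset.univ.sup' ⟨none, Finset.mem_univ _⟩ tt
  have huE : ∀ o (t : ℝ), T₀ < t → (u o, t) ∈ E := by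
    intro o t ht
    exact hEup (hut o).choose_spec (le_of_lt (lt_of_le_of_lt (Finset.le_sup' tt (Finset.mem_univ o)) ht))
  -- points of the convex hull, with large t, are in E
  have hhull : ∀ y ∈ convexHull ℝ (Set.range u), ∀ t : ℝ, T₀ < t → (y, t) ∈ E := by
    intro y hy t ht
    let Amap : ↥L →ᵃ[ℝ] (↥L × ℝ) :=
      ⟨fun q => (q, t), LinearMap.inl ℝ ↥L ℝ, fun p v => by ext <;> simp⟩
    have h1 : (y, t) ∈ Amap '' convexHull ℝ (Set.range u) := ⟨y, hy, rfl⟩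
    rw [AffineMap.image_convexHull] at h1
    refine convexHull_min ?_ hEconv h1
    rintro _ ⟨_, ⟨o, rfl⟩, rfl⟩
    exact huE o t ht
  have hzE : ∀ t : ℝ, T₀ < t → (z, t) ∈ interior E := by
    intro t ht
    have hO : (interior (convexHull ℝ (Set.range u)) ×ˢ Set.Ioi T₀ : Set (↥L × ℝ)) ⊆ E := by
      rintro ⟨y, t'⟩ ⟨hy, ht'⟩
      exact hhull y (interior_subset hy) t' ht'
    have := interior_maximal hO (isOpen_interior.prod isOpen_Ioi)
    exact this ⟨hz, ht⟩
  -- the point (0, μ) is not in E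
  have h0μ : ((0 : ↥L), μ) ∉ E := by
    rintro ⟨x, r, hlt, h1⟩
    have : r = T x := by
      have : (0 : Fin m → ℝ) = r - T x := h1
      exact (sub_eq_zero.mp this.symm)
    rw [this] at hlt
    exact absurd (lt_of_le_of_lt (hμ x) hlt) (lt_irrefl _)
  have h0μ' : ((0 : ↥L), μ) ∉ interior E := fun h => h0μ (interior_subset h)
  -- separation
  obtain ⟨F, hF⟩ := geometric_hahn_banach_open_point hEconv.interior isOpen_interior h0μ'

  -- F ≤ F(0,μ) on all of E
  set z' : ↥L × ℝ := (z, T₀ + 1) with hz'def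
  have hz'int : z' ∈ interior E := hzE _ (lt_add_one T₀)
  have hEle : ∀ p ∈ E, F p ≤ F ((0 : ↥L), μ) := by
    intro p hp
    have key : ∀ a : ℝ, 0 < a → a ≤ 1 → a * F z' + (1 - a) * F p < F ((0 : ↥L), μ) := by
      intro a ha ha1
      have hmem : a • z' + (1 - a) • p ∈ interior E :=
        hEconv.combo_interior_self_mem_interior hz'int hp ha (by linarith) (by ring)
      have := hF _ hmem
      rwa [map_add, map_smul, map_smul, smul_eq_mul, smul_eq_mul] at this
    have htend : Tendsto (fun n : ℕ => (1 / (n + 1) : ℝ) * F z' + (1 - 1 / (n + 1)) * F p)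
        atTop (𝓝 ((0 : ℝ) * F z' + (1 - 0) * F p)) :=
      (tendsto_one_div_add_atTop_nhds_zero_nat.mul_const _).add
        ((tendsto_const_nhds.sub tendsto_one_div_add_atTop_nhds_zero_nat).mul_const _)
    have h2 : (0 : ℝ) * F z' + (1 - 0) * F p = F p := by ring
    rw [h2] at htend
    refine le_of_tendsto htend (Filter.Eventually.of_forall fun n => ?_)
    refine (key (1 / (n + 1)) (by positivity) ?_).le
    rw [div_le_one (by positivity)]
    linarith [Nat.cast_nonneg (α := ℝ) n]
  -- decompose F
  set c : ℝ := F ((0 : ↥L), 1) with hcdef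
  have hdec : ∀ (y : ↥L) (t : ℝ), F (y, t) = F (y, 0) + t * c := by
    intro y t
    have h1 : ((y, t) : ↥L × ℝ) = (y, (0:ℝ)) + t • (((0:↥L), (1:ℝ)) : ↥L × ℝ) := by
      ext <;> simp
    rw [h1, map_add, map_smul, smul_eq_mul]
  have hzero : F ((0 : ↥L), (0 : ℝ)) = 0 := by
    have : (((0:↥L), (0:ℝ)) : ↥L × ℝ) = 0 := rfl
    rw [this, map_zero]
  have hκ : F ((0 : ↥L), μ) = μ * c := by rw [hdec, hzero, zero_add]
  -- c ≤ 0
  have hcle : c ≤ 0 := by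
    by_contra hcpos
    push_neg at hcpos
    set t : ℝ := max (T₀ + 1) ((μ * c - F ((z : ↥L), (0:ℝ))) / c + 1) with htdef
    have h1 : (z, t) ∈ interior E := hzE t (lt_of_lt_of_le (lt_add_one T₀) (le_max_left _ _))
    have h2 := hF _ h1
    rw [hdec, hκ] at h2
    have h3 : (μ * c - F (z, (0:ℝ))) / c + 1 ≤ t := le_max_right _ _
    have h4 : (μ * c - F (z, (0:ℝ))) / c < t := by linarith
    rw [div_lt_iff₀ hcpos] at h4
    linarith
  -- c ≠ 0
  have hcne : c ≠ 0 := by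
    intro hc0
    have hle0 : ∀ v : ↥L, F (v, (0:ℝ)) ≤ 0 := by
      intro v
      obtain ⟨e, he, heC⟩ := habs (v : Fin m → ℝ) v.2
      obtain ⟨t, ht⟩ := hCE _ heC
      have h1 := hEle _ ht
      rw [hdec, hκ, hc0] at h1
      simp only [mul_zero, add_zero] at h1
      have h2 : ((⟨e • (v : Fin m → ℝ), hCL heC⟩ : ↥L), (0:ℝ)) = e • ((v, (0:ℝ)) : ↥L × ℝ) := by
        ext <;> simp
      rw [h2, map_smul, smul_eq_mul] at h1
      nlinarith
    have hφ : ∀ v : ↥L, F (v, (0:ℝ)) = 0 := by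
      intro v
      have h1 := hle0 v
      have h2 := hle0 (-v)
      have h3 : ((-v, (0:ℝ)) : ↥L × ℝ) = -((v, (0:ℝ)) : ↥L × ℝ) := by ext <;> simp
      rw [h3, map_neg] at h2
      linarith
    have h4 := hF _ hz'int
    rw [hz'def, hdec, hκ, hc0, hφ] at h4
    simp at h4
  have hclt : c < 0 := lt_of_le_of_ne hcle hcne
  -- projection and the functional s
  obtain ⟨L', hcompl⟩ := Submodule.exists_isCompl L
  set π : (Fin m → ℝ) →ₗ[ℝ] ↥L := L.linearProjOfIsCompl L' hcompl with hπdef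
  refine ⟨(-c)⁻¹ • ((F.toLinearMap.comp (LinearMap.inl ℝ ↥L ℝ)).comp π), ?_⟩
  intro x r
  by_cases htop : f x + g r = ⊤
  · rw [htop]; exact le_top
  have hfx : f x ≠ ⊤ := fun h => htop (by rw [h]; exact EReal.top_add_of_ne_bot (hgb r))
  have hgr : g r ≠ ⊤ := fun h => htop (by rw [h]; exact EReal.add_top_of_ne_bot (hfb x))
  have hyC : r - T x ∈ C := (hCdef _).mpr ⟨r, hgr, x, hfx, rfl⟩
  set yL : ↥L := ⟨r - T x, hCL hyC⟩ with hyLdef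
  have hπy : π (r - T x) = yL := Submodule.linearProjOfIsCompl_apply_left hcompl yL
  set ρ : ℝ := (f x).toReal + (g r).toReal with hρdef
  have hsum : f x + g r = (ρ : EReal) := hval hfx hgr
  have hkey : ∀ t : ℝ, ρ < t → μ + (-c)⁻¹ * F (yL, (0:ℝ)) ≤ t := by
    intro t ht
    have hmem : ((yL, t) : ↥L × ℝ) ∈ E := ⟨x, r, by rw [hsum]; exact_mod_cast ht, rfl⟩
    have h1 := hEle _ hmem
    rw [hdec, hκ] at h1
    have hic : 0 < (-c)⁻¹ := inv_pos.mpr (by linarith)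
    have hh := mul_le_mul_of_nonneg_left h1 hic.le
    have hne' : -c ≠ 0 := neg_ne_zero.mpr hcne
    have e1 : (-c)⁻¹ * (F (yL, (0:ℝ)) + t * c) = (-c)⁻¹ * F (yL, (0:ℝ)) - t := by
      field_simp
      ring
    have e2 : (-c)⁻¹ * (μ * c) = -μ := by
      field_simp
    rw [e1, e2] at hh
    linarith
  have hfinal : μ + (-c)⁻¹ * F (yL, (0:ℝ)) ≤ ρ := by
    by_contra hco
    push_neg at hco
    have := hkey ((ρ + (μ + (-c)⁻¹ * F (yL, (0:ℝ)))) / 2) (by linarith)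
    linarith
  have hs : ((-c)⁻¹ • ((F.toLinearMap.comp (LinearMap.inl ℝ ↥L ℝ)).comp π)) (r - T x)
      = (-c)⁻¹ * F (yL, (0:ℝ)) := by
    simp [hπy]
  rw [hsum, hs, ← EReal.coe_add]
  exact EReal.coe_le_coe_iff.mpr hfinal

/-- Claim 2: primal/dual attainment and zero duality gap for the
product-space reformulation `minimize H + ι_D` used by the DRS operator of Type-II. -/
theorem statement7
    {X : Type*} [NormedAddCommGroup X] [InnerProductSpace ℝ X] [CompleteSpace X]
    {m : ℕ}
    (f : X → EReal) (hf : Gamma0 f)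
    (gs : Fin m → ℝ → EReal) (hgs : ∀ i, Gamma0 (gs i))
    (A : Fin m → (X →L[ℝ] ℝ)) (hA : ∀ i, A i ≠ 0)
    (hSp : (argminSet (fun x => f x + ∑ i, gs i (A i x))).Nonempty)
    (hqc : (0 : Fin m → ℝ) ∈ sriSet
      (edom (fun y : Fin m → ℝ => ∑ i, gs i (y i)) - (fun x => fun i => A i x) '' edom f))
    (Hf : (Fin (m + 1) → X) → EReal)
    (hHf : ∀ Z, Hf Z = (∑ i : Fin m, gs i (A i (Z i.castSucc))) + f (Z (Fin.last m)))
    (D : Set (Fin (m + 1) → X)) (hD : D = {Z | ∀ i j, Z i = Z j}) :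
    (argminSet (fun Z => Hf Z + eind D Z)).Nonempty ∧
    (argminSet (fun U => econjPi Hf U + econjPi (eind D) (-U))).Nonempty ∧
    ((⨅ Z : Fin (m + 1) → X, (Hf Z + eind D Z))
      = - ⨅ U : Fin (m + 1) → X, (econjPi Hf U + econjPi (eind D) (-U))) := by
  classical
  obtain ⟨xs, hxs⟩ := hSp
  have hfb : ∀ x, f x ≠ ⊥ := hf.1.2
  have hfcv : EConvex f := hf.2.2
  have hgb : ∀ i r, gs i r ≠ ⊥ := fun i => (hgs i).1.2
  set G : (Fin m → ℝ) → EReal := fun r => ∑ i, gs i (r i) with hGdef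
  have hGb : ∀ r, G r ≠ ⊥ := fun r => fsum_ne_bot _ _ (fun i _ => hgb i (r i))
  set T : X →ₗ[ℝ] (Fin m → ℝ) := LinearMap.pi (fun i => (A i : X →ₗ[ℝ] ℝ)) with hTdef
  have hT : ∀ (x : X) i, T x i = A i x := fun x i => rfl
  -- the set C
  set C : Set (Fin m → ℝ) :=
    edom (fun y : Fin m → ℝ => ∑ i, gs i (y i)) - (fun x => fun i => A i x) '' edom f with hCdef0
  have hCmem : ∀ y, y ∈ C ↔ ∃ d, G d ≠ ⊤ ∧ ∃ x, f x ≠ ⊤ ∧ y = d - T x := by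
    intro y
    rw [hCdef0, Set.mem_sub]
    constructor
    · rintro ⟨d, hd, w, ⟨x, hx, rfl⟩, hyw⟩
      exact ⟨d, hd, x, hx, by rw [← hyw]; rfl⟩
    · rintro ⟨d, hd, x, hx, rfl⟩
      exact ⟨d, hd, T x, ⟨x, hx, rfl⟩, rfl⟩
  have h0C : (0 : Fin m → ℝ) ∈ C := hqc.1
  -- absorbency from the qualification condition
  have habs : ∀ y ∈ Submodule.span ℝ C, ∃ ε : ℝ, 0 < ε ∧ ε • y ∈ C := by
    intro y hy
    have hqc2 := hqc.2
    have himg : (fun c => c - (0 : Fin m → ℝ)) '' C = C := by simp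
    have hclosed :
        closure ((Submodule.span ℝ C : Submodule ℝ (Fin m → ℝ)) : Set (Fin m → ℝ)) =
          ((Submodule.span ℝ C : Submodule ℝ (Fin m → ℝ)) : Set (Fin m → ℝ)) :=
      (Submodule.closed_of_finiteDimensional _).closure_eq
    rw [himg, hclosed] at hqc2
    have hy' : y ∈ {y | ∃ t : ℝ, 0 < t ∧ ∃ c ∈ C, y = t • (c - 0)} := by rw [hqc2]; exact hy
    obtain ⟨t, ht, c, hc, rfl⟩ := hy'
    refine ⟨t⁻¹, inv_pos.mpr ht, ?_⟩
    rw [smul_smul, inv_mul_cancel₀ ht.ne', one_smul, sub_zero]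
    exact hc
  -- μ
  set v₀ : EReal := f xs + ∑ i, gs i (A i xs) with hv₀def
  have hv₀top : v₀ ≠ ⊤ := by
    obtain ⟨d, hd, x₀, hx₀, h00⟩ := (hCmem 0).mp h0C
    have hdT : d = T x₀ := by
      have h := h00.symm
      rwa [sub_eq_zero] at h
    have hne : f x₀ + ∑ i, gs i (A i x₀) ≠ ⊤ := by
      have hd' : G (T x₀) ≠ ⊤ := hdT ▸ hd
      show f x₀ + G (T x₀) ≠ ⊤
      rw [← EReal.coe_toReal hx₀ (hfb x₀), ← EReal.coe_toReal hd' (hGb _), ← EReal.coe_add]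
      exact EReal.coe_ne_top _
    exact fun h => hne (top_le_iff.mp (h ▸ hxs x₀))
  have hv₀bot : v₀ ≠ ⊥ := by
    rw [hv₀def, ne_eq, EReal.add_eq_bot_iff]
    push_neg
    exact ⟨hfb xs, fsum_ne_bot _ _ fun i _ => hgb i _⟩
  set μ : ℝ := v₀.toReal with hμdef
  have hμeq : (μ : EReal) = v₀ := EReal.coe_toReal hv₀top hv₀bot
  have hμ : ∀ x, (μ : EReal) ≤ f x + G (T x) := by
    intro x
    rw [hμeq, hv₀def]
    exact hxs x
  -- convexity hypotheses for the core lemma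
  have hfc' : ∀ (x₁ x₂ : X) (a b : ℝ), 0 ≤ a → 0 ≤ b → a + b = 1 → f x₁ ≠ ⊤ → f x₂ ≠ ⊤ →
      f (a • x₁ + b • x₂) ≤ ((a * (f x₁).toReal + b * (f x₂).toReal : ℝ) : EReal) := by
    intro x₁ x₂ a b ha hb hab h1 h2
    have h := hfcv x₁ x₂ a b ha hb hab
    rw [← EReal.coe_toReal h1 (hfb x₁), ← EReal.coe_toReal h2 (hfb x₂),
      ← EReal.coe_mul, ← EReal.coe_mul, ← EReal.coe_add] at h
    exact h
  have hgsc' : ∀ (i : Fin m) (r₁ r₂ : ℝ) (a b : ℝ), 0 ≤ a → 0 ≤ b → a + b = 1 →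
      gs i r₁ ≠ ⊤ → gs i r₂ ≠ ⊤ →
      gs i (a * r₁ + b * r₂) ≤ ((a * (gs i r₁).toReal + b * (gs i r₂).toReal : ℝ) : EReal) := by
    intro i r₁ r₂ a b ha hb hab h1 h2
    have h := (hgs i).2.2 r₁ r₂ a b ha hb hab
    rw [← EReal.coe_toReal h1 (hgb i r₁), ← EReal.coe_toReal h2 (hgb i r₂),
      ← EReal.coe_mul, ← EReal.coe_mul, ← EReal.coe_add] at h
    simpa using h
  have htoRealsum : ∀ r : Fin m → ℝ, G r ≠ ⊤ → (G r).toReal = ∑ i, (gs i (r i)).toReal := by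
    intro r hr
    have h1 : ∀ i : Fin m, gs i (r i) ≠ ⊤ :=
      fun i => fsum_ne_top Finset.univ _ (fun j _ => hgb j _) hr i (Finset.mem_univ i)
    have h2 : ((∑ i, (gs i (r i)).toReal : ℝ) : EReal) = G r := by
      rw [coe_fsum]
      exact Finset.sum_congr rfl fun i _ => EReal.coe_toReal (h1 i) (hgb i _)
    rw [← h2, EReal.toReal_coe]
  have hgc' : ∀ (r₁ r₂ : Fin m → ℝ) (a b : ℝ), 0 ≤ a → 0 ≤ b → a + b = 1 → G r₁ ≠ ⊤ → G r₂ ≠ ⊤ →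
      G (a • r₁ + b • r₂) ≤ ((a * (G r₁).toReal + b * (G r₂).toReal : ℝ) : EReal) := by
    intro r₁ r₂ a b ha hb hab h1 h2
    have e1 : ∀ i : Fin m, gs i (r₁ i) ≠ ⊤ :=
      fun i => fsum_ne_top Finset.univ _ (fun j _ => hgb j _) h1 i (Finset.mem_univ i)
    have e2 : ∀ i : Fin m, gs i (r₂ i) ≠ ⊤ :=
      fun i => fsum_ne_top Finset.univ _ (fun j _ => hgb j _) h2 i (Finset.mem_univ i)
    calc G (a • r₁ + b • r₂) = ∑ i, gs i (a * r₁ i + b * r₂ i) := rfl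
      _ ≤ ∑ i, ((a * (gs i (r₁ i)).toReal + b * (gs i (r₂ i)).toReal : ℝ) : EReal) :=
          Finset.sum_le_sum fun i _ => hgsc' i _ _ a b ha hb hab (e1 i) (e2 i)
      _ = ((∑ i, (a * (gs i (r₁ i)).toReal + b * (gs i (r₂ i)).toReal) : ℝ) : EReal) :=
          (coe_fsum _ _).symm
      _ = ((a * (G r₁).toReal + b * (G r₂).toReal : ℝ) : EReal) := by
          rw [htoRealsum r₁ h1, htoRealsum r₂ h2, Finset.sum_add_distrib,
            ← Finset.mul_sum, ← Finset.mul_sum]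
  -- apply the core lemma
  obtain ⟨s, hs⟩ := fenchel_core f hfb G hGb T hfc' hgc' μ hμ C hCmem h0C habs

  -- Riesz representatives and the dual point
  set aa : Fin m → X := fun i => (InnerProductSpace.toDual ℝ X).symm (A i) with haadef
  have hip : ∀ (i : Fin m) (x : X), ⟪x, aa i⟫_ℝ = A i x := by
    intro i x
    rw [real_inner_comm]
    exact InnerProductSpace.toDual_symm_apply
  set σ : Fin m → ℝ := fun i => s (fun j => if i = j then 1 else 0) with hσdef
  set uvec : Fin m → X := fun i => σ i • aa i with huvecdef
  set Ustar : Fin (m + 1) → X := Fin.snoc uvec (-(∑ i, uvec i)) with hUdef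
  have hUsum : ∑ j, Ustar j = 0 := by
    rw [Fin.sum_univ_castSucc]
    have h1 : ∀ i : Fin m, Ustar i.castSucc = uvec i := fun i => Fin.snoc_castSucc _ _ _
    have h2 : Ustar (Fin.last m) = -(∑ i, uvec i) := Fin.snoc_last _ _
    rw [h2, Finset.sum_congr rfl fun i _ => h1 i]
    exact add_neg_cancel _
  have hslin : ∀ y : Fin m → ℝ, s y = ∑ i, y i * σ i := by
    intro y
    conv_lhs => rw [pi_eq_sum_univ y]
    rw [map_sum]
    exact Finset.sum_congr rfl fun i _ => by rw [map_smul, smul_eq_mul]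
  -- the inner product sum against Ustar
  have hip2 : ∀ Z : Fin (m + 1) → X,
      ∑ j, ⟪Z j, Ustar j⟫_ℝ =
        s ((fun i => A i (Z i.castSucc)) - T (Z (Fin.last m))) := by
    intro Z
    rw [map_sub, Fin.sum_univ_castSucc]
    have h1 : ∀ i : Fin m, ⟪Z i.castSucc, Ustar i.castSucc⟫_ℝ = σ i * A i (Z i.castSucc) := by
      intro i
      rw [show Ustar i.castSucc = uvec i from Fin.snoc_castSucc _ _ _]
      rw [huvecdef]
      rw [real_inner_smul_right, hip]
    have h2 : ⟪Z (Fin.last m), Ustar (Fin.last m)⟫_ℝ = -(∑ i, σ i * A i (Z (Fin.last m))) := by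
      rw [show Ustar (Fin.last m) = -(∑ i, uvec i) from Fin.snoc_last _ _]
      rw [inner_neg_right, inner_sum]
      congr 1
      exact Finset.sum_congr rfl fun i _ => by rw [huvecdef]; rw [real_inner_smul_right, hip]
    rw [Finset.sum_congr rfl fun i _ => h1 i, h2,
      hslin (fun i => A i (Z i.castSucc)), hslin (T (Z (Fin.last m)))]
    simp only [hT]
    rw [sub_eq_add_neg]
    congr 1
    · exact Finset.sum_congr rfl fun i _ => mul_comm _ _
    · congr 1
      exact Finset.sum_congr rfl fun i _ => mul_comm _ _
  -- basic facts about Hf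
  have hHfbot : ∀ Z, Hf Z ≠ ⊥ := by
    intro Z
    rw [hHf, ne_eq, EReal.add_eq_bot_iff]
    push_neg
    exact ⟨fsum_ne_bot _ _ fun i _ => hgb i _, hfb _⟩
  -- the minimizer of the primal
  set Zs : Fin (m + 1) → X := fun _ => xs with hZsdef
  have hZsD : Zs ∈ D := by rw [hD]; intro i j; rfl
  have hHfZs : Hf Zs = (μ : EReal) := by
    rw [hHf, hμeq, hv₀def]
    exact add_comm _ _
  have hZsval : Hf Zs + eind D Zs = (μ : EReal) := by
    rw [eind, if_pos hZsD, add_zero, hHfZs]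
  have hlow : ∀ Z, (μ : EReal) ≤ Hf Z + eind D Z := by
    intro Z
    by_cases hZ : Z ∈ D
    · rw [eind, if_pos hZ, add_zero, hHf]
      have hconst : ∀ j, Z j = Z (Fin.last m) := by
        rw [hD] at hZ; exact fun j => hZ j (Fin.last m)
      have h1 : ∀ i : Fin m, Z i.castSucc = Z (Fin.last m) := fun i => hconst _
      rw [Finset.sum_congr rfl fun i _ => by rw [h1 i]]
      rw [add_comm]
      exact hμ (Z (Fin.last m))
    · rw [eind, if_neg hZ, EReal.add_top_of_ne_bot (hHfbot Z)]
      exact le_top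
  -- primal attainment
  have hargmin1 : (argminSet (fun Z => Hf Z + eind D Z)).Nonempty := by
    refine ⟨Zs, fun Y => ?_⟩
    show Hf Zs + eind D Zs ≤ Hf Y + eind D Y
    rw [hZsval]
    exact hlow Y
  -- conjugate of the indicator at -Ustar
  have hD0 : (fun _ : Fin (m + 1) => (0 : X)) ∈ D := by rw [hD]; intro i j; rfl
  have hconj_ind : econjPi (eind D) (-Ustar) = 0 := by
    apply le_antisymm
    · apply iSup_le
      intro Z
      by_cases hZ : Z ∈ D
      · have hconst : ∀ j, Z j = Z 0 := by rw [hD] at hZ; exact fun j => hZ j 0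
        have h1 : ∑ j, ⟪Z j, (-Ustar) j⟫_ℝ = 0 := by
          calc ∑ j, ⟪Z j, (-Ustar) j⟫_ℝ = ∑ j, ⟪Z 0, (-Ustar) j⟫_ℝ :=
                Finset.sum_congr rfl fun j _ => by rw [hconst j]
            _ = ⟪Z 0, ∑ j, (-Ustar) j⟫_ℝ := (inner_sum _ _ _).symm
            _ = 0 := by
                have h4 : ∑ j, (-Ustar) j = 0 := by
                  simp only [Pi.neg_apply]
                  rw [Finset.sum_neg_distrib, hUsum, neg_zero]
                rw [h4, inner_zero_right]
        rw [h1, eind, if_pos hZ]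
        simp
      · rw [eind, if_neg hZ]
        have : ((∑ j, ⟪Z j, (-Ustar) j⟫_ℝ : ℝ) : EReal) - ⊤ = ⊥ := by
          rw [sub_eq_add_neg]
          simp
        rw [this]
        exact bot_le
    · refine le_iSup_of_le (fun _ => (0 : X)) ?_
      have h1 : ∑ j, ⟪(0 : X), (-Ustar) j⟫_ℝ = 0 := by simp
      rw [h1, eind, if_pos hD0]
      simp
  -- conjugate of Hf at Ustar
  have hconj_Hf : econjPi Hf Ustar ≤ ((-μ : ℝ) : EReal) := by
    apply iSup_le
    intro Z
    by_cases hZt : Hf Z = ⊤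
    · rw [hZt, sub_eq_add_neg]
      simp
    · have hZb := hHfbot Z
      set h : ℝ := (Hf Z).toReal with hhdef
      have hZeq : Hf Z = (h : EReal) := (EReal.coe_toReal hZt hZb).symm
      have hkey := hs (Z (Fin.last m)) (fun i => A i (Z i.castSucc))
      have hGr : f (Z (Fin.last m)) + G (fun i => A i (Z i.castSucc)) = Hf Z := by
        rw [hHf]
        exact add_comm _ _
      rw [hGr, hZeq, ← EReal.coe_add, EReal.coe_le_coe_iff] at hkey
      rw [hZeq, hip2 Z, ← EReal.coe_sub, EReal.coe_le_coe_iff]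
      linarith
  -- weak duality
  have hweak : ∀ U : Fin (m + 1) → X,
      ((-μ : ℝ) : EReal) ≤ econjPi Hf U + econjPi (eind D) (-U) := by
    intro U
    set p : ℝ := ∑ j, ⟪Zs j, U j⟫_ℝ with hpdef
    have h1 : ((p - μ : ℝ) : EReal) ≤ econjPi Hf U := by
      refine le_iSup_of_le Zs ?_
      rw [hHfZs, ← hpdef, EReal.coe_sub]
    have h2 : ((-p : ℝ) : EReal) ≤ econjPi (eind D) (-U) := by
      refine le_iSup_of_le Zs ?_
      have h3 : ∑ j, ⟪Zs j, (-U) j⟫_ℝ = -p := by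
        rw [hpdef, ← Finset.sum_neg_distrib]
        exact Finset.sum_congr rfl fun j _ => by rw [Pi.neg_apply, inner_neg_right]
      rw [h3, eind, if_pos hZsD, sub_eq_add_neg, neg_zero, add_zero]
    calc ((-μ : ℝ) : EReal) = (((p - μ) + (-p) : ℝ) : EReal) := by ring_nf
      _ = ((p - μ : ℝ) : EReal) + ((-p : ℝ) : EReal) := EReal.coe_add _ _
      _ ≤ _ := add_le_add h1 h2
  have hUstarval : econjPi Hf Ustar + econjPi (eind D) (-Ustar) ≤ ((-μ : ℝ) : EReal) := by
    rw [hconj_ind, add_zero]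
    exact hconj_Hf
  have hargmin2 : (argminSet (fun U => econjPi Hf U + econjPi (eind D) (-U))).Nonempty :=
    ⟨Ustar, fun U => le_trans hUstarval (hweak U)⟩
  have hprimal : (⨅ Z : Fin (m + 1) → X, (Hf Z + eind D Z)) = (μ : EReal) :=
    le_antisymm (iInf_le_of_le Zs (le_of_eq hZsval)) (le_iInf hlow)
  have hdual : (⨅ U : Fin (m + 1) → X, (econjPi Hf U + econjPi (eind D) (-U)))
      = ((-μ : ℝ) : EReal) :=
    le_antisymm (iInf_le_of_le Ustar hUstarval) (le_iInf hweak)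
  refine ⟨hargmin1, hargmin2, ?_⟩
  rw [hprimal, hdual, ← EReal.coe_neg, neg_neg]
end
end

section
/- Let X be a real Hilbert space and K = ℝ^m. Let f ∈ Γ₀(X), g = ⊕_{i=1}^m g_i with g_i ∈ Γ₀(ℝ), and A : X → ℝ^m : x ↦ (A₁x, …, A_mx) with nonzero bounded linear functionals A_i : X → ℝ. Assume S_p := argmin_{x∈X}(f(x) + ∑_{i=1}^m g_i(A_i x)) ≠ ∅ and the qualification condition 0 ∈ sri(dom(g) − A(dom(f))) holds. Define H(x^{(1)},…,x^{(m+1)}) := ∑_{i=1}^m g_i(A_i x^{(i)}) + f(x^{(m+1)}), D := {(x^{(1)},…,x^{(m+1)}) ∈ X^{m+1} : x^{(i)} = x^{(j)} for all i,j} with orthogonal projection P_D, and T_DRSII := (2 prox_H − I) ∘ (2 P_D − I) on X^{m+1}. Then S_p = {(1/(m+1)) ∑_{i=1}^{m+1} x^{(i)} : (x^{(1)},…,x^{(m+1)}) ∈ Fix(T_DRSII)}, i.e., S_p equals the image of Fix(T_DRSII) under the map taking the first component of P_D. -/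
noncomputable section

open Filter Topology Bornology
open scoped InnerProductSpace Pointwise Classical

section Helpers

lemma ecoe_sum {ι : Type*} (s : Finset ι) (f : ι → ℝ) :
    ((∑ i ∈ s, f i : ℝ) : EReal) = ∑ i ∈ s, (f i : EReal) := by
  induction s using Finset.cons_induction with
  | empty => simp
  | cons a s ha ih => rw [Finset.sum_cons, Finset.sum_cons, EReal.coe_add, ih]

lemma esum_ne_bot {ι : Type*} (s : Finset ι) (f : ι → EReal) (h : ∀ i ∈ s, f i ≠ ⊥) :
    ∑ i ∈ s, f i ≠ ⊥ := by
  induction s using Finset.cons_induction with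
  | empty => simp
  | cons a s ha ih =>
    rw [Finset.sum_cons, Ne, EReal.add_eq_bot_iff]; push_neg
    exact ⟨h a (Finset.mem_cons_self a s), ih fun i hi => h i (Finset.mem_cons_of_mem hi)⟩

lemma esum_ne_top_each {ι : Type*} (s : Finset ι) (f : ι → EReal) (hb : ∀ i ∈ s, f i ≠ ⊥)
    (h : ∑ i ∈ s, f i ≠ ⊤) : ∀ i ∈ s, f i ≠ ⊤ := by
  intro i hi hti
  apply h
  rw [← Finset.add_sum_erase s f hi, hti]
  exact EReal.top_add_of_ne_bot
    (esum_ne_bot _ _ fun j hj => hb j (Finset.mem_of_mem_erase hj))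

lemma eadd_ne_top_left {a b : EReal} (h : a + b ≠ ⊤) (hb : b ≠ ⊥) : a ≠ ⊤ :=
  fun ha => h (by rw [ha]; exact EReal.top_add_of_ne_bot hb)

lemma eadd_ne_top_right {a b : EReal} (h : a + b ≠ ⊤) (ha : a ≠ ⊥) : b ≠ ⊤ :=
  eadd_ne_top_left (by rwa [add_comm] at h) ha

lemma eadd_ne_bot {a b : EReal} (ha : a ≠ ⊥) (hb : b ≠ ⊥) : a + b ≠ ⊥ := by
  rw [Ne, EReal.add_eq_bot_iff]; tauto

lemma ereal_as_real {a : EReal} (ht : a ≠ ⊤) (hb : a ≠ ⊥) : ∃ r : ℝ, a = (r : EReal) :=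
  ⟨a.toReal, (EReal.coe_toReal ht hb).symm⟩

lemma ereal_le_coe {a : EReal} {c : ℝ} (h : a ≤ (c : EReal)) (hb : a ≠ ⊥) :
    ∃ r : ℝ, a = (r : EReal) ∧ r ≤ c := by
  obtain ⟨r, hr⟩ := ereal_as_real (h.trans_lt (EReal.coe_lt_top c)).ne hb
  exact ⟨r, hr, by rw [hr] at h; exact_mod_cast h⟩

lemma econvex_real {H : Type*} [AddCommGroup H] [Module ℝ H] {φ : H → EReal} (hφ : EConvex φ)
    {x y : H} {cx cy : ℝ} {a b : ℝ} (hx : φ x = (cx : EReal)) (hy : φ y = (cy : EReal))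
    (ha : 0 ≤ a) (hb : 0 ≤ b) (hab : a + b = 1) :
    φ (a • x + b • y) ≤ ((a * cx + b * cy : ℝ) : EReal) := by
  have := hφ x y a b ha hb hab
  rwa [hx, hy, ← EReal.coe_mul, ← EReal.coe_mul, ← EReal.coe_add] at this

end Helpers

set_option maxHeartbeats 1000000 in
/-- The core Fenchel--Rockafellar sum rule, proved via a Hahn--Banach argument on the
perturbation ("value") function, using the strong relative interior qualification. -/
lemma sumRule {X : Type*} [NormedAddCommGroup X] [InnerProductSpace ℝ X] {m : ℕ}
    (f : X → EReal) (gs : Fin m → ℝ → EReal) (A : Fin m → (X →L[ℝ] ℝ))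
    (hfnb : ∀ x, f x ≠ ⊥) (hgnb : ∀ i r, gs i r ≠ ⊥)
    (hfconv : EConvex f) (hgconv : ∀ i, EConvex (gs i))
    (hqc : (0 : Fin m → ℝ) ∈ sriSet
      (edom (fun y : Fin m → ℝ => ∑ i, gs i (y i)) - (fun x => fun i => A i x) '' edom f))
    (xstar : X)
    (hmin : ∀ x : X, f xstar + ∑ i, gs i (A i xstar) ≤ f x + ∑ i, gs i (A i x))
    (fstar : ℝ) (hfstar : f xstar = (fstar : EReal))
    (gvec : Fin m → ℝ) (hgvec : ∀ i, gs i (A i xstar) = ((gvec i : ℝ) : EReal)) :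
    ∃ si : Fin m → ℝ,
      (∀ i z, ((si i * (z - A i xstar) : ℝ) : EReal) + ((gvec i : ℝ) : EReal) ≤ gs i z) ∧
      (∀ z : X, ((∑ i, si i * (A i xstar - A i z) : ℝ) : EReal) + ((fstar : ℝ) : EReal) ≤ f z) := by
  classical
  set Gp : (Fin m → ℝ) → EReal := fun y => ∑ i, gs i (y i) with hGp
  set Am : X → (Fin m → ℝ) := fun x => fun i => A i x with hAm
  set C : Set (Fin m → ℝ) := edom Gp - Am '' edom f with hC
  have hqc' : (0 : Fin m → ℝ) ∈ sriSet C := hqc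
  set μ : ℝ := fstar + ∑ i, gvec i with hμ
  set D : Set ((Fin m → ℝ) × ℝ) :=
    {p | ∃ (x : X) (fx gx : ℝ), f x = (fx : EReal) ∧ Gp (Am x + p.1) = (gx : EReal) ∧ fx + gx ≤ p.2} with hD
  have hGpnb : ∀ y : Fin m → ℝ, Gp y ≠ ⊥ := fun y => esum_ne_bot _ _ fun i _ => hgnb i (y i)
  -- membership of first components in C
  have hDC : ∀ y : Fin m → ℝ, ∀ r : ℝ, (y, r) ∈ D → y ∈ C := by
    rintro y r ⟨x, fx, gx, hfx, hgx, -⟩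
    rw [hC, Set.mem_sub]
    refine ⟨Am x + y, ?_, Am x, ⟨x, ?_, rfl⟩, by abel⟩
    · simp only [edom, Set.mem_setOf_eq, hgx]; exact EReal.coe_ne_top gx
    · simp only [edom, Set.mem_setOf_eq, hfx]; exact EReal.coe_ne_top fx
  have hCD : ∀ y ∈ C, ∃ r : ℝ, (y, r) ∈ D := by
    intro y hy
    rw [hC, Set.mem_sub] at hy
    obtain ⟨u, hu, v, ⟨x, hx, rfl⟩, huv⟩ := hy
    obtain ⟨fx, hfx⟩ := ereal_as_real hx (hfnb x)
    obtain ⟨gx, hgx⟩ := ereal_as_real hu (hGpnb u)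
    refine ⟨fx + gx, x, fx, gx, hfx, ?_, le_refl _⟩
    have : Am x + y = u := by rw [← huv]; abel
    rw [this]; exact hgx
  -- convexity of D
  have hDconv : ∀ (y1 : Fin m → ℝ) (r1 : ℝ) (y2 : Fin m → ℝ) (r2 a b : ℝ), (y1, r1) ∈ D → (y2, r2) ∈ D →
      0 ≤ a → 0 ≤ b → a + b = 1 → (a • y1 + b • y2, a * r1 + b * r2) ∈ D := by
    rintro y1 r1 y2 r2 a b ⟨x1, fx1, gx1, hfx1, hgx1, hr1⟩ ⟨x2, fx2, gx2, hfx2, hgx2, hr2⟩ ha hb hab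
    have hfle := econvex_real hfconv hfx1 hfx2 ha hb hab
    obtain ⟨fx, hfx, hfxle⟩ := ereal_le_coe hfle (hfnb _)
    -- the G part
    have hg1i : ∀ i, ∃ r : ℝ, gs i ((Am x1 + y1) i) = (r : EReal) := by
      intro i
      exact ereal_as_real
        (esum_ne_top_each Finset.univ _ (fun j _ => hgnb j _)
          (fun h => EReal.coe_ne_top gx1 (hgx1.symm.trans h)) i (Finset.mem_univ i))
        (hgnb _ _)
    obtain ⟨g1, hg1⟩ := Classical.axiomOfChoice hg1i
    have hg2i : ∀ i, ∃ r : ℝ, gs i ((Am x2 + y2) i) = (r : EReal) := by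
      intro i
      exact ereal_as_real
        (esum_ne_top_each Finset.univ _ (fun j _ => hgnb j _)
          (fun h => EReal.coe_ne_top gx2 (hgx2.symm.trans h)) i (Finset.mem_univ i))
        (hgnb _ _)
    obtain ⟨g2, hg2⟩ := Classical.axiomOfChoice hg2i
    have hsum1 : ∑ i, g1 i = gx1 := by
      have : ((∑ i, g1 i : ℝ) : EReal) = (gx1 : EReal) := by
        rw [ecoe_sum, ← hgx1, hGp]
        exact Finset.sum_congr rfl fun i _ => (hg1 i).symm
      exact_mod_cast this
    have hsum2 : ∑ i, g2 i = gx2 := by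
      have : ((∑ i, g2 i : ℝ) : EReal) = (gx2 : EReal) := by
        rw [ecoe_sum, ← hgx2, hGp]
        exact Finset.sum_congr rfl fun i _ => (hg2 i).symm
      exact_mod_cast this
    have harg : Am (a • x1 + b • x2) + (a • y1 + b • y2)
        = a • (Am x1 + y1) + b • (Am x2 + y2) := by
      funext i
      simp only [hAm, Pi.add_apply, Pi.smul_apply, smul_eq_mul, map_add, map_smul]
      ring
    have hGle : Gp (Am (a • x1 + b • x2) + (a • y1 + b • y2))
        ≤ ((a * gx1 + b * gx2 : ℝ) : EReal) := by
      rw [harg, hGp]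
      calc ∑ i, gs i ((a • (Am x1 + y1) + b • (Am x2 + y2)) i)
          ≤ ∑ i, ((a * g1 i + b * g2 i : ℝ) : EReal) := by
            refine Finset.sum_le_sum fun i _ => ?_
            have : (a • (Am x1 + y1) + b • (Am x2 + y2)) i
                = a • ((Am x1 + y1) i) + b • ((Am x2 + y2) i) := rfl
            rw [this]
            exact econvex_real (hgconv i) (hg1 i) (hg2 i) ha hb hab
        _ = ((∑ i, (a * g1 i + b * g2 i) : ℝ) : EReal) := (ecoe_sum _ _).symm
        _ = ((a * gx1 + b * gx2 : ℝ) : EReal) := by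
            rw [← hsum1, ← hsum2, Finset.sum_add_distrib, ← Finset.mul_sum, ← Finset.mul_sum]
    obtain ⟨gx, hgx, hgxle⟩ := ereal_le_coe hGle (hGpnb _)
    refine ⟨a • x1 + b • x2, fx, gx, hfx, hgx, ?_⟩
    have hr1' : fx1 + gx1 ≤ r1 := hr1
    have hr2' : fx2 + gx2 ≤ r2 := hr2
    have h1 : a * (fx1 + gx1) ≤ a * r1 := mul_le_mul_of_nonneg_left hr1' ha
    have h2 : b * (fx2 + gx2) ≤ b * r2 := mul_le_mul_of_nonneg_left hr2' hb
    show fx + gx ≤ a * r1 + b * r2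
    nlinarith [hfxle, hgxle]
  -- minimality at 0
  have hDmin : ∀ r : ℝ, ((0 : Fin m → ℝ), r) ∈ D → μ ≤ r := by
    rintro r ⟨x, fx, gx, hfx, hgx, hr⟩
    have hmx := hmin x
    have hL : f xstar + ∑ i, gs i (A i xstar) = ((μ : ℝ) : EReal) := by
      rw [hfstar, hμ, EReal.coe_add, ecoe_sum]
      congr 1
      exact Finset.sum_congr rfl fun i _ => hgvec i
    have hgx' : (∑ i, gs i (A i x) : EReal) = (gx : EReal) := by
      calc (∑ i, gs i (A i x) : EReal) = Gp (Am x + (0 : Fin m → ℝ)) := by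
            rw [add_zero]
        _ = (gx : EReal) := hgx
    have hR : f x + ∑ i, gs i (A i x) = ((fx + gx : ℝ) : EReal) := by
      rw [hfx, hgx', EReal.coe_add]
    rw [hL, hR] at hmx
    have hr' : fx + gx ≤ r := hr
    have : μ ≤ fx + gx := by exact_mod_cast hmx
    linarith
  -- the span and absorption
  set V : Submodule ℝ (Fin m → ℝ) := Submodule.span ℝ C with hV
  have hCV : C ⊆ (V : Set (Fin m → ℝ)) := Submodule.subset_span
  have habs : ∀ y : Fin m → ℝ, y ∈ V → ∃ t : ℝ, 0 < t ∧ t • y ∈ C := by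
    intro y hy
    have hqc2 := hqc'.2
    have himg : (fun c => c - (0: Fin m → ℝ)) '' C = C := by
      simp only [sub_zero, Set.image_id']
    rw [himg] at hqc2
    have hcl : closure ((Submodule.span ℝ C : Submodule ℝ (Fin m → ℝ)) : Set (Fin m → ℝ))
        = ((Submodule.span ℝ C : Submodule ℝ (Fin m → ℝ)) : Set (Fin m → ℝ)) :=
      (Submodule.closed_of_finiteDimensional _).closure_eq
    rw [hcl] at hqc2
    have hy' : y ∈ {y | ∃ t : ℝ, 0 < t ∧ ∃ c ∈ C, y = t • (c - (0: Fin m → ℝ))} := by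
      rw [hqc2]; exact hy
    obtain ⟨t, ht, c, hc, hyc⟩ := hy'
    refine ⟨t⁻¹, inv_pos.mpr ht, ?_⟩
    rw [hyc, sub_zero, inv_smul_smul₀ ht.ne']
    exact hc
  -- the sublinear "directional derivative" of the value function
  set Q : V → Set ℝ :=
    fun v => {q | ∃ t r : ℝ, 0 < t ∧ (t • (v : Fin m → ℝ), r) ∈ D ∧ q = (r - μ)/t} with hQ
  have hQne : ∀ v : V, (Q v).Nonempty := by
    intro v
    obtain ⟨t, ht, htC⟩ := habs (v : Fin m → ℝ) v.2
    obtain ⟨r, hr⟩ := hCD _ htC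
    exact ⟨(r - μ)/t, t, r, ht, hr, rfl⟩
  have hQbdd : ∀ v : V, BddBelow (Q v) := by
    intro v
    obtain ⟨t0, ht0, ht0C⟩ := habs (-(v : Fin m → ℝ)) (V.neg_mem v.2)
    obtain ⟨r0, hr0⟩ := hCD _ ht0C
    refine ⟨(μ - r0)/t0, ?_⟩
    rintro q ⟨t, r, ht, hD', rfl⟩
    have htt0 : (0:ℝ) < t + t0 := by linarith
    have hcomb := hDconv _ _ _ _ (t0/(t+t0)) (t/(t+t0)) hD' hr0
      (by positivity) (by positivity)
      (by rw [← add_div, add_comm t0 t]; exact div_self htt0.ne')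
    have harg : (t0/(t+t0)) • (t • (v : Fin m → ℝ)) + (t/(t+t0)) • (t0 • (-(v : Fin m → ℝ)))
        = (0 : Fin m → ℝ) := by
      rw [smul_smul, smul_smul, smul_neg, ← sub_eq_add_neg, ← sub_smul]
      have : t0/(t+t0) * t - t/(t+t0) * t0 = 0 := by field_simp; ring
      rw [this, zero_smul]
    rw [harg] at hcomb
    have hmu := hDmin _ hcomb
    have key : μ * (t + t0) ≤ t0 * r + t * r0 := by
      have : t0/(t+t0) * r + t/(t+t0) * r0 = (t0 * r + t * r0)/(t+t0) := by ring
      rw [this] at hmu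
      exact (le_div_iff₀ htt0).mp hmu
    rw [div_le_div_iff₀ ht0 ht]
    nlinarith
  set p : V → ℝ := fun v => sInf (Q v) with hp
  have hp_le : ∀ (v : V) (q : ℝ), q ∈ Q v → p v ≤ q := fun v q hq => csInf_le (hQbdd v) hq
  have hp_ge : ∀ (v : V) (c : ℝ), (∀ q ∈ Q v, c ≤ q) → c ≤ p v :=
    fun v c h => le_csInf (hQne v) h
  -- positive homogeneity
  have N_hom : ∀ c : ℝ, 0 < c → ∀ v : V, p (c • v) = c * p v := by
    intro c hc v
    have h1 : p (c • v) ≤ c * p v := by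
      have : ∀ q ∈ Q v, p (c • v) / c ≤ q := by
        rintro q ⟨t, r, ht, hD', rfl⟩
        rw [div_le_iff₀' hc] at *
        · have hmem : (r - μ)/(t/c) ∈ Q (c • v) := by
            refine ⟨t/c, r, by positivity, ?_, rfl⟩
            have : (t/c) • ((c • v : V) : Fin m → ℝ) = t • (v : Fin m → ℝ) := by
              rw [Submodule.coe_smul, smul_smul]
              congr 1
              field_simp
            rw [this]; exact hD'
          have := hp_le _ _ hmem
          calc p (c • v) ≤ (r - μ)/(t/c) := this
            _ = c * ((r - μ)/t) := by field_simp
      have := hp_ge v (p (c • v) / c) this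
      rw [div_le_iff₀' hc] at this
      exact this
    have h2 : c * p v ≤ p (c • v) := by
      apply hp_ge
      rintro q ⟨t, r, ht, hD', rfl⟩
      have hmem : (r - μ)/(t*c) ∈ Q v := by
        refine ⟨t*c, r, by positivity, ?_, rfl⟩
        have : (t*c) • (v : Fin m → ℝ) = t • ((c • v : V) : Fin m → ℝ) := by
          rw [Submodule.coe_smul, smul_smul, mul_comm]
        rw [this]; exact hD'
      have := hp_le _ _ hmem
      have h3 : c * ((r - μ)/(t*c)) = (r - μ)/t := by field_simp
      calc c * p v ≤ c * ((r - μ)/(t*c)) := mul_le_mul_of_nonneg_left this hc.le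
        _ = (r - μ)/t := h3
    exact le_antisymm h1 h2
  -- subadditivity
  have N_add : ∀ v w : V, p (v + w) ≤ p v + p w := by
    intro v w
    have claim : ∀ q1 ∈ Q v, ∀ q2 ∈ Q w, p (v + w) ≤ q1 + q2 := by
      rintro q1 ⟨t1, r1, ht1, hD1, rfl⟩ q2 ⟨t2, r2, ht2, hD2, rfl⟩
      have htt : (0:ℝ) < t1 + t2 := by linarith
      have hcomb := hDconv _ _ _ _ (t2/(t1+t2)) (t1/(t1+t2)) hD1 hD2
        (by positivity) (by positivity)
        (by rw [← add_div, add_comm t2 t1]; exact div_self htt.ne')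
      have harg : (t2/(t1+t2)) • (t1 • (v : Fin m → ℝ)) + (t1/(t1+t2)) • (t2 • (w : Fin m → ℝ))
          = (t1*t2/(t1+t2)) • (((v + w : V) : Fin m → ℝ)) := by
        have e1 : t2/(t1+t2) * t1 = t1*t2/(t1+t2) := by
          rw [div_mul_eq_mul_div, mul_comm t2 t1]
        have e2 : t1/(t1+t2) * t2 = t1*t2/(t1+t2) := by
          rw [div_mul_eq_mul_div]
        rw [smul_smul, smul_smul, Submodule.coe_add, smul_add, e1, e2]
      rw [harg] at hcomb
      have hmem : ((t2/(t1+t2)) * r1 + (t1/(t1+t2)) * r2 - μ)/(t1*t2/(t1+t2)) ∈ Q (v + w) :=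
        ⟨t1*t2/(t1+t2), _, by positivity, hcomb, rfl⟩
      have := hp_le _ _ hmem
      calc p (v + w) ≤ ((t2/(t1+t2)) * r1 + (t1/(t1+t2)) * r2 - μ)/(t1*t2/(t1+t2)) := this
        _ = (r1 - μ)/t1 + (r2 - μ)/t2 := by field_simp; ring
    have step1 : ∀ q2 ∈ Q w, p (v + w) - q2 ≤ p v := by
      intro q2 hq2
      exact hp_ge _ _ fun q1 hq1 => by linarith [claim q1 hq1 q2 hq2]
    have step2 : p (v + w) - p v ≤ p w :=
      hp_ge _ _ fun q2 hq2 => by linarith [step1 q2 hq2]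
    linarith
  -- Hahn–Banach
  have h0le : (0:ℝ) ≤ p 0 := by
    refine hp_ge _ _ ?_
    rintro q ⟨t, r, ht, hD', rfl⟩
    have hD'' : ((0 : Fin m → ℝ), r) ∈ D := by simpa using hD'
    have := hDmin _ hD''
    exact div_nonneg (by linarith) ht.le
  have hf0 : ∀ x : ((⟨⊥, 0⟩ : (V →ₗ.[ℝ] ℝ)).domain),
      (⟨⊥, 0⟩ : (V →ₗ.[ℝ] ℝ)) x ≤ p x := by
    rintro ⟨x, hx⟩
    have hx0 : x = 0 := by simpa using hx
    show (0:ℝ) ≤ p x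
    rw [hx0]
    exact h0le
  obtain ⟨g, -, hg2⟩ := exists_extension_of_le_sublinear (⟨⊥, 0⟩ : (V →ₗ.[ℝ] ℝ)) p N_hom N_add hf0
  -- extend to all of `Fin m → ℝ`
  obtain ⟨W, hW⟩ := Submodule.exists_isCompl V
  set sfun : (Fin m → ℝ) →ₗ[ℝ] ℝ := g.comp (V.linearProjOfIsCompl W hW) with hsfun
  have hsfunV : ∀ (y : Fin m → ℝ) (hy : y ∈ V), sfun y = g ⟨y, hy⟩ := by
    intro y hy
    rw [hsfun, LinearMap.comp_apply]
    congr 1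
    exact Submodule.linearProjOfIsCompl_apply_left hW ⟨y, hy⟩
  have hKey : ∀ (y : Fin m → ℝ) (r : ℝ), (y, r) ∈ D → μ + sfun y ≤ r := by
    intro y r hyr
    have hyV : y ∈ V := hCV (hDC y r hyr)
    have h1 : sfun y ≤ (r - μ)/1 := by
      rw [hsfunV y hyV]
      refine le_trans (hg2 _) (hp_le _ _ ⟨1, r, one_pos, ?_, rfl⟩)
      rw [one_smul]; exact hyr
    rw [div_one] at h1
    linarith
  -- linearity expansion of sfun
  have hsfun_pi : ∀ y : Fin m → ℝ, sfun y = ∑ i, y i * sfun (Pi.single i (1:ℝ)) := by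
    intro y
    have hy : y = ∑ i, Pi.single i (y i) := (Finset.univ_sum_single y).symm
    rw [hy, map_sum]
    refine Finset.sum_congr rfl fun i _ => ?_
    have : (Pi.single i (y i) : Fin m → ℝ) = y i • (Pi.single i (1:ℝ) : Fin m → ℝ) := by
      rw [← Pi.single_smul, smul_eq_mul, mul_one]
    rw [Finset.univ_sum_single, this, map_smul, smul_eq_mul]
  refine ⟨fun i => sfun (Pi.single i (1:ℝ)), ?_, ?_⟩
  · -- subgradient inequality for each gs i
    intro i z
    by_cases hz : gs i z = ⊤
    · rw [hz]; exact le_top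
    obtain ⟨gz, hgz⟩ := ereal_as_real hz (hgnb i z)
    set y : Fin m → ℝ := Pi.single i (z - A i xstar) with hy
    have hyval : ∀ j, gs j ((Am xstar + y) j) = if j = i then (gz : EReal) else ((gvec j : ℝ) : EReal) := by
      intro j
      by_cases hj : j = i
      · subst hj
        have : (Am xstar + y) j = z := by
          simp only [hy, Pi.add_apply, Pi.single_eq_same]
          show A j xstar + (z - A j xstar) = z
          ring
        rw [this, if_pos rfl]; exact hgz
      · have : (Am xstar + y) j = A j xstar := by
          simp only [hy, Pi.add_apply, Pi.single_eq_of_ne hj, add_zero]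
          rfl
        rw [this, if_neg hj]; exact hgvec j
    have hGpval : Gp (Am xstar + y) = ((∑ j, if j = i then gz else gvec j : ℝ) : EReal) := by
      rw [ecoe_sum]
      refine Finset.sum_congr rfl fun j _ => ?_
      rw [hyval j]
      by_cases hj : j = i
      · rw [if_pos hj, if_pos hj]
      · rw [if_neg hj, if_neg hj]
    have hmem : (y, fstar + ∑ j, if j = i then gz else gvec j) ∈ D :=
      ⟨xstar, fstar, _, hfstar, hGpval, le_refl _⟩
    have hk := hKey _ _ hmem
    have hsy : sfun y = (z - A i xstar) * sfun (Pi.single i (1:ℝ)) := by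
      have : y = (z - A i xstar) • (Pi.single i (1:ℝ) : Fin m → ℝ) := by
        rw [hy, ← Pi.single_smul, smul_eq_mul, mul_one]
      rw [this, map_smul, smul_eq_mul]
    rw [hsy] at hk
    have hsplit1 : ∑ j, gvec j = gvec i + ∑ j ∈ Finset.univ.erase i, gvec j :=
      (Finset.add_sum_erase _ _ (Finset.mem_univ i)).symm
    have hsplit2 : (∑ j, if j = i then gz else gvec j)
        = gz + ∑ j ∈ Finset.univ.erase i, gvec j := by
      rw [← Finset.add_sum_erase _ _ (Finset.mem_univ i), if_pos rfl]
      congr 1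
      exact Finset.sum_congr rfl fun j hj => if_neg (Finset.ne_of_mem_erase hj)
    rw [hgz, ← EReal.coe_add, EReal.coe_le_coe_iff]
    rw [hμ, hsplit1, hsplit2] at hk
    nlinarith [hk]
  · -- subgradient inequality for f
    intro z
    by_cases hz : f z = ⊤
    · rw [hz]; exact le_top
    obtain ⟨fz, hfz⟩ := ereal_as_real hz (hfnb z)
    set y : Fin m → ℝ := fun i => A i xstar - A i z with hy
    have hAmz : Am z + y = Am xstar := by
      funext j
      show A j z + (A j xstar - A j z) = A j xstar
      ring
    have hGpval : Gp (Am z + y) = ((∑ j, gvec j : ℝ) : EReal) := by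
      rw [hAmz, ecoe_sum]
      exact Finset.sum_congr rfl fun j _ => hgvec j
    have hmem : (y, fz + ∑ j, gvec j) ∈ D := ⟨z, fz, _, hfz, hGpval, le_refl _⟩
    have hk := hKey _ _ hmem
    rw [hsfun_pi y] at hk
    rw [hfz, ← EReal.coe_add, EReal.coe_le_coe_iff]
    rw [hμ] at hk
    have hsum : ∑ j, y j * sfun (Pi.single j (1:ℝ))
        = ∑ j, sfun (Pi.single j (1:ℝ)) * (A j xstar - A j z) :=
      Finset.sum_congr rfl fun j _ => by
        show (A j xstar - A j z) * sfun (Pi.single j (1:ℝ)) = _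
        rw [mul_comm]
    rw [hsum] at hk
    show (∑ j, sfun (Pi.single j (1:ℝ)) * (A j xstar - A j z)) + fstar ≤ fz
    linarith


lemma half_norm_identity {X : Type*} [NormedAddCommGroup X] [InnerProductSpace ℝ X] (u w : X) :
    ‖(1/2:ℝ) • u + (1/2:ℝ) • w‖^2 = (1/2)*‖u‖^2 + (1/2)*‖w‖^2 - (1/4)*‖u - w‖^2 := by
  have hn : ‖(1/2:ℝ)‖ = 1/2 := by rw [Real.norm_eq_abs]; norm_num
  rw [norm_add_sq_real, norm_smul, norm_smul, hn, real_inner_smul_left, real_inner_smul_right,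
    norm_sub_sq_real]
  ring

set_option maxHeartbeats 2000000 in
/-- fixed point characterization of `S_p` via the DRS operator of Type-II:
`S_p` equals the image of `Fix T_DRSII` under `Z ↦ (1/(m+1)) ∑ i Z i` (the first component of
`P_D`), where `T_DRSII = (2 prox_H - I) ∘ (2 P_D - I)` on `X^{m+1}` and
`P_D Z = (Z̄, …, Z̄)` with `Z̄ = (1/(m+1)) ∑ i Z i`. -/
theorem statement8
    {X : Type*} [NormedAddCommGroup X] [InnerProductSpace ℝ X] [CompleteSpace X]
    {m : ℕ}
    (f : X → EReal) (hf : Gamma0 f)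
    (gs : Fin m → ℝ → EReal) (hgs : ∀ i, Gamma0 (gs i))
    (A : Fin m → (X →L[ℝ] ℝ)) (hA : ∀ i, A i ≠ 0)
    (Sp : Set X) (hSpdef : Sp = argminSet (fun x => f x + ∑ i, gs i (A i x)))
    (hSp : Sp.Nonempty)
    (hqc : (0 : Fin m → ℝ) ∈ sriSet
      (edom (fun y : Fin m → ℝ => ∑ i, gs i (y i)) - (fun x => fun i => A i x) '' edom f))
    (Hf : (Fin (m + 1) → X) → EReal)
    (hHf : ∀ Z, Hf Z = (∑ i : Fin m, gs i (A i (Z i.castSucc))) + f (Z (Fin.last m)))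
    (proxH : (Fin (m + 1) → X) → (Fin (m + 1) → X))
    (hproxH : ∀ Z W : Fin (m + 1) → X,
      Hf (proxH Z) + ((((1:ℝ)/2) * ∑ i, ‖proxH Z i - Z i‖ ^ 2 : ℝ) : EReal)
        ≤ Hf W + ((((1:ℝ)/2) * ∑ i, ‖W i - Z i‖ ^ 2 : ℝ) : EReal))
    (T : (Fin (m + 1) → X) → (Fin (m + 1) → X))
    (hT : ∀ Z, T Z =
      (2:ℝ) • proxH (fun i => (2:ℝ) • (((m:ℝ) + 1)⁻¹ • ∑ j, Z j) - Z i)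
        - (fun i => (2:ℝ) • (((m:ℝ) + 1)⁻¹ • ∑ j, Z j) - Z i)) :
    Sp = (fun Z : Fin (m + 1) → X => ((m:ℝ) + 1)⁻¹ • ∑ i, Z i)
      '' {Z : Fin (m + 1) → X | T Z = Z} := by
  classical
  have hfnb : ∀ x, f x ≠ ⊥ := hf.1.2
  have hfconv : EConvex f := hf.2.2
  have hgnb : ∀ i r, gs i r ≠ ⊥ := fun i r => (hgs i).1.2 r
  have hgconv : ∀ i, EConvex (gs i) := fun i => (hgs i).2.2
  have hn1 : (0:ℝ) < (m:ℝ) + 1 := by positivity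
  -- a common point of finiteness from the qualification condition
  obtain ⟨u0, hu0, v0, ⟨x0, hx0, rfl⟩, huv0⟩ := Set.mem_sub.mp hqc.1
  have hux0 : (fun i => A i x0) = u0 := by
    have := sub_eq_zero.mp huv0; rw [this]
  have hg0sum : ∑ i, gs i (A i x0) ≠ ⊤ := by
    have : (fun i => A i x0) = u0 := hux0
    intro h
    apply hu0
    show ∑ i, gs i (u0 i) = ⊤
    rw [← this]; exact h
  have hg0i : ∀ i, gs i (A i x0) ≠ ⊤ :=
    fun i => esum_ne_top_each Finset.univ (fun j => gs j (A j x0)) (fun j _ => hgnb j _)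
      hg0sum i (Finset.mem_univ i)
  have hfx0 : f x0 ≠ ⊤ := hx0
  have hHfconst : ∀ w : X, Hf (fun _ => w) = (∑ i, gs i (A i w)) + f w := fun w => hHf _
  have hHfnb : ∀ Z, Hf Z ≠ ⊥ := by
    intro Z
    rw [hHf]
    exact eadd_ne_bot (esum_ne_bot _ _ fun i _ => hgnb i _) (hfnb _)
  have hW0 : Hf (fun _ => x0) ≠ ⊤ := by
    rw [hHfconst]
    exact (EReal.add_lt_top hg0sum hfx0).ne
  -- Part 1 : fixed points project to minimizers
  have part1 : ∀ Z : Fin (m+1) → X, T Z = Z →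
      (((m:ℝ)+1)⁻¹ • ∑ i, Z i) ∈ argminSet (fun x => f x + ∑ i, gs i (A i x)) := by
    intro Z hTZ
    set xb : X := ((m:ℝ)+1)⁻¹ • ∑ i, Z i with hxb
    set Y : Fin (m+1) → X := fun i => (2:ℝ) • xb - Z i with hY
    have e : (2:ℝ) • proxH Y - Y = Z := by
      conv_rhs => rw [← hTZ, hT Z]
    have hPY : proxH Y = fun _ => xb := by
      funext i
      have h := congrFun e i
      simp only [Pi.sub_apply, Pi.smul_apply] at h
      have hYi : Y i = (2:ℝ) • xb - Z i := by rw [hY]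
      rw [hYi] at h
      have h2 : (2:ℝ) • proxH Y i = (2:ℝ) • xb := by
        have h3 := sub_eq_iff_eq_add.mp h
        rw [h3]; abel
      exact smul_right_injective X (two_ne_zero) h2
    have hsumZ : ∑ i, Z i = ((m:ℝ)+1) • xb := by
      rw [hxb, smul_inv_smul₀ hn1.ne']
    have hsumY : ∑ i, Y i = ((m:ℝ)+1) • xb := by
      have h0 : ∑ i, Y i = ∑ i : Fin (m+1), ((2:ℝ) • xb - Z i) := by rw [hY]
      rw [h0, Finset.sum_sub_distrib, Finset.sum_const, Finset.card_univ, Fintype.card_fin,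
        hsumZ, ← Nat.cast_smul_eq_nsmul ℝ]
      push_cast
      module
    have hsumYxb : ∑ i : Fin (m+1), (xb - Y i) = 0 := by
      rw [Finset.sum_sub_distrib, hsumY, Finset.sum_const, Finset.card_univ, Fintype.card_fin,
        ← Nat.cast_smul_eq_nsmul ℝ]
      push_cast
      module
    clear_value xb Y
    -- finiteness of `Hf` at the prox point
    have hHfP : Hf (fun _ => xb) ≠ ⊤ := by
      intro htop
      have h := hproxH Y (fun _ => x0)
      rw [hPY, htop, EReal.top_add_coe, top_le_iff] at h
      exact (EReal.add_lt_top hW0 (EReal.coe_ne_top _)).ne h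
    have hpgi : ∀ i, ∃ r : ℝ, gs i (A i xb) = (r : EReal) := by
      intro i
      refine ereal_as_real ?_ (hgnb _ _)
      refine esum_ne_top_each Finset.univ (fun j => gs j (A j xb)) (fun j _ => hgnb j _) ?_ i (Finset.mem_univ i)
      intro h
      apply hHfP
      rw [hHfconst, h]
      exact EReal.top_add_of_ne_bot (hfnb _)
    obtain ⟨pg, hpg⟩ := Classical.axiomOfChoice hpgi
    have hpfe : ∃ r : ℝ, f xb = (r : EReal) := by
      refine ereal_as_real ?_ (hfnb _)
      intro h
      apply hHfP
      rw [hHfconst, h]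
      rw [EReal.add_top_of_ne_bot (esum_ne_bot _ _ fun i _ => hgnb i _)]
    obtain ⟨pf, hpf⟩ := hpfe
    have hHfPval : Hf (fun _ => xb) = (((∑ i, pg i) + pf : ℝ) : EReal) := by
      rw [hHfconst, hpf, EReal.coe_add, ecoe_sum]
      congr 1
      exact Finset.sum_congr rfl fun i _ => hpg i
    simp only [argminSet, Set.mem_setOf_eq]
    intro x
    by_cases hx : f x + ∑ i, gs i (A i x) = ⊤
    · rw [hx]; exact le_top
    have hwfe : f x ≠ ⊤ := eadd_ne_top_left hx (esum_ne_bot _ _ fun i _ => hgnb i _)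
    have hwgsum : ∑ i, gs i (A i x) ≠ ⊤ := eadd_ne_top_right hx (hfnb _)
    obtain ⟨wf, hwf⟩ := ereal_as_real hwfe (hfnb x)
    have hwgi : ∀ i, ∃ r : ℝ, gs i (A i x) = (r : EReal) := fun i =>
      ereal_as_real (esum_ne_top_each Finset.univ (fun j => gs j (A j x)) (fun j _ => hgnb j _)
        hwgsum i (Finset.mem_univ i)) (hgnb _ _)
    obtain ⟨wg, hwg⟩ := Classical.axiomOfChoice hwgi
    -- the key step estimate
    have hstep : ∀ t : ℝ, 0 < t → t ≤ 1 →
        (∑ i, pg i) + pf ≤ ((∑ i, wg i) + wf)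
          + (1/2) * (t * (((m:ℝ)+1) * ‖x - xb‖^2)) := by
      intro t ht ht1
      have hWt := hproxH Y (fun _ => (1-t) • xb + t • x)
      rw [hPY] at hWt
      -- convexity bound on `Hf` at the interpolate
      have hgt : ∀ i : Fin m, gs i (A i ((1-t)•xb + t•x)) ≤
          (((1-t) * pg i + t * wg i : ℝ) : EReal) := by
        intro i
        have harg : A i ((1-t)•xb + t•x) = (1-t) • (A i xb) + t • (A i x) := by
          rw [map_add, map_smul, map_smul]
        rw [harg]
        exact econvex_real (hgconv i) (hpg i) (hwg i) (by linarith) ht.le (by ring)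
      have hft : f ((1-t)•xb + t•x) ≤ (((1-t) * pf + t * wf : ℝ) : EReal) :=
        econvex_real hfconv hpf hwf (by linarith) ht.le (by ring)
      have hHfWt : Hf (fun _ => (1-t)•xb + t•x)
          ≤ (((1-t) * ((∑ i, pg i) + pf) + t * ((∑ i, wg i) + wf) : ℝ) : EReal) := by
        rw [hHfconst]
        calc (∑ i, gs i (A i ((1-t)•xb + t•x))) + f ((1-t)•xb + t•x)
            ≤ (∑ i, (((1-t) * pg i + t * wg i : ℝ) : EReal))
              + (((1-t) * pf + t * wf : ℝ) : EReal) :=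
              add_le_add (Finset.sum_le_sum fun i _ => hgt i) hft
          _ = (((1-t) * ((∑ i, pg i) + pf) + t * ((∑ i, wg i) + wf) : ℝ) : EReal) := by
              rw [← ecoe_sum, ← EReal.coe_add]
              congr 1
              rw [Finset.sum_add_distrib, ← Finset.mul_sum, ← Finset.mul_sum]
              ring
      -- norm expansion
      have hterm : ∀ i : Fin (m+1), ((fun _ : Fin (m+1) => (1-t)•xb + t•x) i) - Y i
          = (xb - Y i) + t • (x - xb) := by
        intro i; show ((1-t)•xb + t•x) - Y i = (xb - Y i) + t • (x - xb); module
      have hcross : ∑ i : Fin (m+1), ⟪xb - Y i, x - xb⟫_ℝ = 0 := by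
        rw [← sum_inner, hsumYxb, inner_zero_left]
      have hSt : ∑ i : Fin (m+1), ‖((fun _ : Fin (m+1) => (1-t)•xb + t•x) i) - Y i‖^2
          = (∑ i : Fin (m+1), ‖xb - Y i‖^2) + t^2 * (((m:ℝ)+1) * ‖x - xb‖^2) := by
        have h1 : ∀ i : Fin (m+1), ‖((fun _ : Fin (m+1) => (1-t)•xb + t•x) i) - Y i‖^2
            = ‖xb - Y i‖^2 + 2*(t * ⟪xb - Y i, x - xb⟫_ℝ) + t^2*‖x - xb‖^2 := by
          intro i
          rw [hterm i, norm_add_sq_real, real_inner_smul_right, norm_smul,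
            Real.norm_eq_abs, mul_pow, sq_abs]
        calc ∑ i : Fin (m+1), ‖((fun _ : Fin (m+1) => (1-t)•xb + t•x) i) - Y i‖^2
            = ∑ i : Fin (m+1), (‖xb - Y i‖^2 + 2*(t * ⟪xb - Y i, x - xb⟫_ℝ) + t^2*‖x - xb‖^2) :=
              Finset.sum_congr rfl fun i _ => h1 i
          _ = (∑ i : Fin (m+1), ‖xb - Y i‖^2) + t^2 * (((m:ℝ)+1) * ‖x - xb‖^2) := by
              rw [Finset.sum_add_distrib, Finset.sum_add_distrib, ← Finset.mul_sum,
                ← Finset.mul_sum, hcross,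
                Finset.sum_const, Finset.card_univ, Fintype.card_fin, nsmul_eq_mul]
              push_cast
              ring
      -- pass to reals
      have hprox2 : (((∑ i, pg i) + pf + (1/2) * ∑ i, ‖(fun _ : Fin (m+1) => xb) i - Y i‖^2 : ℝ) : EReal)
          ≤ ((((1-t) * ((∑ i, pg i) + pf) + t * ((∑ i, wg i) + wf))
              + (1/2) * ∑ i, ‖((fun _ : Fin (m+1) => (1-t)•xb + t•x) i) - Y i‖^2 : ℝ) : EReal) := by
        rw [EReal.coe_add, EReal.coe_add]
        calc ((((∑ i, pg i) + pf : ℝ)) : EReal) + (((1/2) * ∑ i, ‖(fun _ : Fin (m+1) => xb) i - Y i‖^2 : ℝ) : EReal)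
            = Hf (fun _ => xb) + (((1/2) * ∑ i, ‖(fun _ : Fin (m+1) => xb) i - Y i‖^2 : ℝ) : EReal) := by
              rw [hHfPval]
          _ ≤ Hf (fun _ => (1-t)•xb + t•x)
              + (((1/2) * ∑ i, ‖((fun _ : Fin (m+1) => (1-t)•xb + t•x) i) - Y i‖^2 : ℝ) : EReal) := hWt
          _ ≤ _ := add_le_add hHfWt (le_refl _)
      have hreal := EReal.coe_le_coe_iff.mp hprox2
      have hS0eq : ∑ i : Fin (m+1), ‖(fun _ : Fin (m+1) => xb) i - Y i‖^2
          = ∑ i : Fin (m+1), ‖xb - Y i‖^2 := rfl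
      rw [hS0eq, hSt] at hreal
      have hK : 0 ≤ ((m:ℝ)+1) * ‖x - xb‖^2 := by positivity
      have hmul : ((∑ i, pg i) + pf) * t
          ≤ (((∑ i, wg i) + wf) + (1/2) * (t * (((m:ℝ)+1) * ‖x - xb‖^2))) * t := by
        nlinarith [hreal]
      exact le_of_mul_le_mul_right hmul ht
    have hple : (∑ i, pg i) + pf ≤ (∑ i, wg i) + wf := by
      refine le_of_forall_pos_le_add ?_
      intro ε hε
      set K := ((m:ℝ)+1) * ‖x - xb‖^2 with hK
      have hK0 : 0 ≤ K := by rw [hK]; positivity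
      set t : ℝ := min 1 (ε/(K+1)) with htdef
      have ht : 0 < t := lt_min one_pos (by positivity)
      have ht1 : t ≤ 1 := min_le_left _ _
      have ht2 : t ≤ ε/(K+1) := min_le_right _ _
      have htK : (1/2) * (t * K) ≤ ε := by
        have h5 : t * (K+1) ≤ ε := by
          rw [← le_div_iff₀ (by positivity : (0:ℝ) < K + 1)]
          exact ht2
        nlinarith
      have := hstep t ht ht1
      linarith
    show f xb + ∑ i, gs i (A i xb) ≤ f x + ∑ i, gs i (A i x)
    have hL : f xb + ∑ i, gs i (A i xb) = ((pf + ∑ i, pg i : ℝ) : EReal) := by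
      rw [hpf, EReal.coe_add, ecoe_sum]
      congr 1
      exact Finset.sum_congr rfl fun i _ => hpg i
    have hR : f x + ∑ i, gs i (A i x) = ((wf + ∑ i, wg i : ℝ) : EReal) := by
      rw [hwf, EReal.coe_add, ecoe_sum]
      congr 1
      exact Finset.sum_congr rfl fun i _ => hwg i
    rw [hL, hR, EReal.coe_le_coe_iff]
    linarith
  -- Part 2 : minimizers come from fixed points
  have part2 : ∀ xstar ∈ Sp, ∃ Z : Fin (m+1) → X, T Z = Z ∧ ((m:ℝ)+1)⁻¹ • ∑ i, Z i = xstar := by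
    intro xstar hxs
    rw [hSpdef] at hxs
    have hmin : ∀ x : X, f xstar + ∑ i, gs i (A i xstar) ≤ f x + ∑ i, gs i (A i x) := hxs
    have hFx0 : f x0 + ∑ i, gs i (A i x0) ≠ ⊤ := (EReal.add_lt_top hfx0 hg0sum).ne
    have hFxs : f xstar + ∑ i, gs i (A i xstar) ≠ ⊤ := by
      intro h
      exact hFx0 (top_le_iff.mp (h ▸ hmin x0))
    have hfse : f xstar ≠ ⊤ := eadd_ne_top_left hFxs (esum_ne_bot _ _ fun i _ => hgnb i _)
    have hgssum : ∑ i, gs i (A i xstar) ≠ ⊤ := eadd_ne_top_right hFxs (hfnb _)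
    obtain ⟨fstar, hfstar⟩ := ereal_as_real hfse (hfnb _)
    have hgveci : ∀ i, ∃ r : ℝ, gs i (A i xstar) = (r:EReal) := fun i =>
      ereal_as_real (esum_ne_top_each Finset.univ (fun j => gs j (A j xstar))
        (fun j _ => hgnb j _) hgssum i (Finset.mem_univ i)) (hgnb _ _)
    obtain ⟨gvec, hgvec⟩ := Classical.axiomOfChoice hgveci
    obtain ⟨si, hsubg, hsubf⟩ :=
      sumRule f gs A hfnb hgnb hfconv hgconv hqc xstar hmin fstar hfstar gvec hgvec
    set a : Fin m → X := fun i => (InnerProductSpace.toDual ℝ X).symm (A i) with ha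
    have haA : ∀ i (y : X), ⟪a i, y⟫_ℝ = A i y := fun i y => InnerProductSpace.toDual_symm_apply
    set v : X := -∑ i, si i • a i with hv
    set Y : Fin (m+1) → X := Fin.snoc (fun i => xstar + si i • a i) (xstar + v) with hYdef
    have hYc : ∀ i : Fin m, Y i.castSucc = xstar + si i • a i := by
      intro i; simp only [hYdef, Fin.snoc_castSucc]
    have hYl : Y (Fin.last m) = xstar + v := by
      simp only [hYdef, Fin.snoc_last]
    clear_value Y
    have hsumY : ∑ j, Y j = ((m:ℝ)+1) • xstar := by
      rw [Fin.sum_univ_castSucc]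
      have h1 : ∑ i : Fin m, Y i.castSucc = ∑ i : Fin m, (xstar + si i • a i) :=
        Finset.sum_congr rfl fun i _ => hYc i
      rw [h1, hYl, Finset.sum_add_distrib, Finset.sum_const, Finset.card_univ, Fintype.card_fin,
        hv, ← Nat.cast_smul_eq_nsmul ℝ]
      push_cast
      module
    set hstar : ℝ := (∑ i, gvec i) + fstar with hhstar
    have hHfxs : Hf (fun _ => xstar) = ((hstar : ℝ) : EReal) := by
      rw [hHfconst, hfstar, hhstar, EReal.coe_add, ecoe_sum]
      congr 1
      exact Finset.sum_congr rfl fun i _ => hgvec i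
    -- summed subgradient inequality
    have hsub : ∀ (W : Fin (m+1) → X) (wval : Fin (m+1) → ℝ),
        (∀ i : Fin m, gs i (A i (W i.castSucc)) = ((wval i.castSucc : ℝ) : EReal)) →
        (f (W (Fin.last m)) = ((wval (Fin.last m) : ℝ) : EReal)) →
        (∑ j, ⟪W j - xstar, Y j - xstar⟫_ℝ) + hstar ≤ ∑ j, wval j := by
      intro W wval hwg hwf
      have hgpart : ∀ i : Fin m,
          ⟪W i.castSucc - xstar, Y i.castSucc - xstar⟫_ℝ + gvec i ≤ wval i.castSucc := by
        intro i
        have h := hsubg i (A i (W i.castSucc))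
        rw [hwg i, ← EReal.coe_add, EReal.coe_le_coe_iff] at h
        have hip : ⟪W i.castSucc - xstar, Y i.castSucc - xstar⟫_ℝ
            = si i * (A i (W i.castSucc) - A i xstar) := by
          rw [hYc i, add_sub_cancel_left, real_inner_smul_right, real_inner_comm, haA i, map_sub]
        rw [hip]
        linarith
      have hfpart : ⟪W (Fin.last m) - xstar, Y (Fin.last m) - xstar⟫_ℝ + fstar
          ≤ wval (Fin.last m) := by
        have h := hsubf (W (Fin.last m))
        rw [hwf, ← EReal.coe_add, EReal.coe_le_coe_iff] at h
        have hip : ⟪W (Fin.last m) - xstar, Y (Fin.last m) - xstar⟫_ℝ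
            = ∑ i, si i * (A i xstar - A i (W (Fin.last m))) := by
          rw [hYl, add_sub_cancel_left, hv, inner_neg_right, inner_sum]
          rw [← Finset.sum_neg_distrib]
          refine Finset.sum_congr rfl fun i _ => ?_
          rw [real_inner_smul_right, real_inner_comm, haA i, map_sub]
          ring
        rw [hip]
        linarith
      rw [Fin.sum_univ_castSucc (f := fun j => ⟪W j - xstar, Y j - xstar⟫_ℝ),
        Fin.sum_univ_castSucc (f := wval), hhstar]
      have hsg2 : (∑ i : Fin m, ⟪W i.castSucc - xstar, Y i.castSucc - xstar⟫_ℝ)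
          + ∑ i, gvec i ≤ ∑ i : Fin m, wval i.castSucc := by
        have := Finset.sum_le_sum fun i (_ : i ∈ Finset.univ) => hgpart i
        rw [Finset.sum_add_distrib] at this
        exact this
      linarith
    -- minimization property of the constant vector at xstar
    have hminP : ∀ W : Fin (m+1) → X,
        Hf (fun _ => xstar) + ((((1:ℝ)/2) * ∑ j, ‖xstar - Y j‖ ^ 2 : ℝ) : EReal)
          ≤ Hf W + ((((1:ℝ)/2) * ∑ j, ‖W j - Y j‖ ^ 2 : ℝ) : EReal) := by
      intro W
      by_cases hW : Hf W = ⊤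
      · rw [hW, EReal.top_add_of_ne_bot (EReal.coe_ne_bot _)]; exact le_top
      have hWsum : (∑ i : Fin m, gs i (A i (W i.castSucc))) + f (W (Fin.last m)) ≠ ⊤ := by
        rw [← hHf W]; exact hW
      have hWgi : ∀ i : Fin m, ∃ r : ℝ, gs i (A i (W i.castSucc)) = (r : EReal) := fun i =>
        ereal_as_real (esum_ne_top_each Finset.univ (fun j => gs j (A j (W j.castSucc)))
          (fun j _ => hgnb j _) (eadd_ne_top_left hWsum (hfnb _)) i (Finset.mem_univ i))
          (hgnb _ _)
      obtain ⟨Wg, hWgs⟩ := Classical.axiomOfChoice hWgi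
      obtain ⟨Wf, hWf⟩ := ereal_as_real
        (eadd_ne_top_right hWsum (esum_ne_bot _ _ fun i _ => hgnb i _)) (hfnb _)
      set wval : Fin (m+1) → ℝ := Fin.snoc Wg Wf with hwval
      have hwg' : ∀ i : Fin m, gs i (A i (W i.castSucc)) = ((wval i.castSucc : ℝ) : EReal) := by
        intro i; simp only [hwval, Fin.snoc_castSucc]; exact hWgs i
      have hwf' : f (W (Fin.last m)) = ((wval (Fin.last m) : ℝ) : EReal) := by
        simp only [hwval, Fin.snoc_last]; exact hWf
      have hWval : Hf W = ((∑ j, wval j : ℝ) : EReal) := by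
        rw [hHf W, hwf', Fin.sum_univ_castSucc (f := wval), EReal.coe_add, ecoe_sum]
        congr 1
        exact Finset.sum_congr rfl fun i _ => hwg' i
      have key := hsub W wval hwg' hwf'
      have hnorm : ∀ j : Fin (m+1), ‖W j - Y j‖^2
          = ‖xstar - Y j‖^2 - 2*⟪W j - xstar, Y j - xstar⟫_ℝ + ‖W j - xstar‖^2 := by
        intro j
        have hdec : W j - Y j = (xstar - Y j) + (W j - xstar) := by module
        rw [hdec, norm_add_sq_real]
        have : ⟪xstar - Y j, W j - xstar⟫_ℝ = -⟪W j - xstar, Y j - xstar⟫_ℝ := by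
          rw [real_inner_comm, ← inner_neg_right]
          congr 1
          module
        rw [this]
        ring
      have hsumnorm : ∑ j, ‖W j - Y j‖^2
          = (∑ j, ‖xstar - Y j‖^2) - 2*(∑ j, ⟪W j - xstar, Y j - xstar⟫_ℝ)
            + ∑ j, ‖W j - xstar‖^2 := by
        rw [Finset.mul_sum, ← Finset.sum_sub_distrib, ← Finset.sum_add_distrib]
        exact Finset.sum_congr rfl fun j _ => hnorm j
      have hd : (0:ℝ) ≤ ∑ j, ‖W j - xstar‖^2 :=
        Finset.sum_nonneg fun j _ => sq_nonneg _
      rw [hHfxs, hWval, ← EReal.coe_add, ← EReal.coe_add, EReal.coe_le_coe_iff]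
      rw [hsumnorm]
      linarith
    -- uniqueness of the prox point : proxH Y = const xstar
    have hsq := le_antisymm (hproxH Y (fun _ => xstar)) (hminP (proxH Y))
    have hP1top : Hf (proxH Y) ≠ ⊤ := by
      intro h
      have hfin : (Hf (fun _ => xstar)
          + ((((1:ℝ)/2) * ∑ j, ‖xstar - Y j‖^2 : ℝ) : EReal)) ≠ ⊤ := by
        rw [hHfxs, ← EReal.coe_add]; exact EReal.coe_ne_top _
      have h2 := hsq.symm
      rw [h, EReal.top_add_coe] at h2
      exact hfin h2
    have hP1sum : (∑ i : Fin m, gs i (A i (proxH Y i.castSucc))) + f (proxH Y (Fin.last m)) ≠ ⊤ := by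
      rw [← hHf (proxH Y)]; exact hP1top
    have hp1gi : ∀ i : Fin m, ∃ r : ℝ, gs i (A i (proxH Y i.castSucc)) = (r : EReal) := fun i =>
      ereal_as_real (esum_ne_top_each Finset.univ (fun j => gs j (A j (proxH Y j.castSucc)))
        (fun j _ => hgnb j _) (eadd_ne_top_left hP1sum (hfnb _)) i (Finset.mem_univ i))
        (hgnb _ _)
    obtain ⟨p1g, hp1g⟩ := Classical.axiomOfChoice hp1gi
    obtain ⟨p1f, hp1f⟩ := ereal_as_real
      (eadd_ne_top_right hP1sum (esum_ne_bot _ _ fun i _ => hgnb i _)) (hfnb _)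
    have hP1val : Hf (proxH Y) = (((∑ i, p1g i) + p1f : ℝ) : EReal) := by
      rw [hHf (proxH Y), hp1f, EReal.coe_add, ecoe_sum]
      congr 1
      exact Finset.sum_congr rfl fun i _ => hp1g i
    have hsq' : (∑ i, p1g i) + p1f + ((1:ℝ)/2) * ∑ j, ‖proxH Y j - Y j‖^2
        = hstar + ((1:ℝ)/2) * ∑ j, ‖xstar - Y j‖^2 := by
      have := hsq
      rw [hP1val, hHfxs, ← EReal.coe_add, ← EReal.coe_add] at this
      exact_mod_cast this
    -- midpoint argument
    have hPYstar : proxH Y = fun _ => xstar := by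
      set M : Fin (m+1) → X := fun j => (1/2:ℝ) • proxH Y j + (1/2:ℝ) • xstar with hM
      have hMg : ∀ i : Fin m, gs i (A i (M i.castSucc))
          ≤ (((1/2) * p1g i + (1/2) * gvec i : ℝ) : EReal) := by
        intro i
        have harg : A i (M i.castSucc)
            = (1/2:ℝ) • (A i (proxH Y i.castSucc)) + (1/2:ℝ) • (A i xstar) := by
          show A i ((1/2:ℝ) • proxH Y i.castSucc + (1/2:ℝ) • xstar) = _
          rw [map_add, map_smul, map_smul]
        rw [harg]
        exact econvex_real (hgconv i) (hp1g i) (hgvec i) (by norm_num) (by norm_num) (by norm_num)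
      have hMf : f (M (Fin.last m)) ≤ (((1/2) * p1f + (1/2) * fstar : ℝ) : EReal) := by
        show f ((1/2:ℝ) • proxH Y (Fin.last m) + (1/2:ℝ) • xstar) ≤ _
        exact econvex_real hfconv hp1f hfstar (by norm_num) (by norm_num) (by norm_num)
      have hHfM : Hf M ≤ (((1/2) * ((∑ i, p1g i) + p1f) + (1/2) * hstar : ℝ) : EReal) := by
        rw [hHf M]
        calc (∑ i, gs i (A i (M i.castSucc))) + f (M (Fin.last m))
            ≤ (∑ i, (((1/2) * p1g i + (1/2) * gvec i : ℝ) : EReal))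
              + (((1/2) * p1f + (1/2) * fstar : ℝ) : EReal) :=
              add_le_add (Finset.sum_le_sum fun i _ => hMg i) hMf
          _ = _ := by
              rw [← ecoe_sum, ← EReal.coe_add]
              congr 1
              rw [Finset.sum_add_distrib, ← Finset.mul_sum, ← Finset.mul_sum, hhstar]
              ring
      have hMfin : Hf M ≠ ⊥ := hHfnb M
      obtain ⟨hm, hHm, hhmle⟩ := ereal_le_coe hHfM hMfin
      have hMnorm : ∑ j, ‖M j - Y j‖^2
          = (1/2) * (∑ j, ‖proxH Y j - Y j‖^2) + (1/2) * (∑ j, ‖xstar - Y j‖^2)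
            - (1/4) * (∑ j, ‖proxH Y j - xstar‖^2) := by
        rw [Finset.mul_sum, Finset.mul_sum, Finset.mul_sum, ← Finset.sum_add_distrib,
          ← Finset.sum_sub_distrib]
        refine Finset.sum_congr rfl fun j _ => ?_
        have hdec : M j - Y j = (1/2:ℝ) • (proxH Y j - Y j) + (1/2:ℝ) • (xstar - Y j) := by
          show ((1/2:ℝ) • proxH Y j + (1/2:ℝ) • xstar) - Y j = _
          module
        rw [hdec, half_norm_identity]
        have : proxH Y j - Y j - (xstar - Y j) = proxH Y j - xstar := by module
        rw [this]
      have hMstep := hminP M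
      rw [hHfxs, hHm, ← EReal.coe_add, ← EReal.coe_add, EReal.coe_le_coe_iff] at hMstep
      rw [hMnorm] at hMstep
      have hSd : ∑ j, ‖proxH Y j - xstar‖^2 ≤ 0 := by nlinarith [hsq', hhmle, hMstep]
      have hSd0 : ∀ j : Fin (m+1), ‖proxH Y j - xstar‖^2 = 0 := by
        intro j
        have h1 : ∀ j ∈ Finset.univ, (0:ℝ) ≤ ‖proxH Y j - xstar‖^2 := fun j _ => sq_nonneg _
        have h2 := Finset.sum_nonneg h1
        have h3 : ∑ j, ‖proxH Y j - xstar‖^2 = 0 := le_antisymm hSd h2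
        exact (Finset.sum_eq_zero_iff_of_nonneg h1).mp h3 j (Finset.mem_univ j)
      funext j
      have := hSd0 j
      rw [pow_eq_zero_iff (by norm_num), norm_eq_zero, sub_eq_zero] at this
      exact this
    -- assemble the fixed point
    set Z : Fin (m+1) → X := fun j => (2:ℝ) • xstar - Y j with hZ
    have hsumZ : ∑ j, Z j = ((m:ℝ)+1) • xstar := by
      have h0 : ∑ j, Z j = ∑ j : Fin (m+1), ((2:ℝ) • xstar - Y j) := by rw [hZ]
      rw [h0, Finset.sum_sub_distrib, Finset.sum_const, Finset.card_univ, Fintype.card_fin,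
        hsumY, ← Nat.cast_smul_eq_nsmul ℝ]
      push_cast
      module
    have hmean : ((m:ℝ)+1)⁻¹ • ∑ j, Z j = xstar := by
      rw [hsumZ, inv_smul_smul₀ hn1.ne']
    refine ⟨Z, ?_, hmean⟩
    rw [hT Z]
    have hlam : (fun i => (2:ℝ) • (((m:ℝ)+1)⁻¹ • ∑ j, Z j) - Z i) = Y := by
      funext i
      rw [hmean]
      have : Z i = (2:ℝ) • xstar - Y i := by rw [hZ]
      rw [this]
      abel
    rw [hlam, hPYstar]
    funext j
    show (2:ℝ) • ((fun _ : Fin (m+1) => xstar) j) - Y j = Z j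
    rw [hZ]
  -- conclusion
  refine Set.Subset.antisymm ?_ ?_
  · intro xs hxs
    obtain ⟨Z, hZfix, hZmean⟩ := part2 xs hxs
    exact ⟨Z, hZfix, hZmean⟩
  · rintro x ⟨Z, hZfix, rfl⟩
    rw [hSpdef]
    exact part1 Z hZfix
end
end
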